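/- arXiv:2004.11731 — 12 statements merged into one kernel-verified Lean document; each statement's English description precedes it below -/
import Mathlib

section
/- Let n ≥ 1 and let p : Fin n → ℝ be real periods with p i ≥ 2 for every i and ∑ i, 1 / p i ≤ 7/12. Then there exists a feasible pinwheel schedule for the pseudo-instance p. -/
/-- A pinwheel schedule `σ` is feasible for a pseudo-instance of real periods `p`
if every job `i` is scheduled at least once in every window of `⌊p i⌋` consecutive days. -/
def PinwheelFeasibleR {n : ℕ} (p : Fin n → ℝ) (σ : ℕ → Option (Fin n)) : Prop :=
  ∀ (i : Fin n) (t : ℕ), ∃ s : ℕ, t ≤ s ∧ s < t + ⌊p i⌋₊ ∧ σ s = some i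

/-- A pinwheel schedule `σ` is feasible for integer periods `p`
if every job `i` is scheduled at least once in every window of `p i` consecutive days. -/
def PinwheelFeasibleN {n : ℕ} (p : Fin n → ℕ) (σ : ℕ → Option (Fin n)) : Prop :=
  ∀ (i : Fin n) (t : ℕ), ∃ s : ℕ, t ≤ s ∧ s < t + p i ∧ σ s = some i

/-- `lastCutPlusOne σ i t` is `t' + 1` where `t'` is the largest day `t' < t` with
`σ t' = some i` (bamboo `i` cut at the end of day `t'`), and `0` if there is no such day. -/
def lastCutPlusOne {n : ℕ} (σ : ℕ → Option (Fin n)) (i : Fin n) (t : ℕ) : ℕ :=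
  Nat.findGreatest (fun u => 0 < u ∧ σ (u - 1) = some i) t

/-- The height reached by bamboo `i` on day `t` under trimming schedule `σ`:
`h i * (t + 1 - s)` where `s = lastCutPlusOne σ i t`. -/
noncomputable def bambooHeight {n : ℕ} (h : Fin n → ℝ) (σ : ℕ → Option (Fin n))
    (i : Fin n) (t : ℕ) : ℝ :=
  h i * ((t + 1 : ℝ) - (lastCutPlusOne σ i t : ℝ))

/-- A trimming schedule `σ` achieves value `V` if the height reached by every
bamboo on every day is at most `V`. -/
noncomputable def TrimmingAchieves {n : ℕ} (h : Fin n → ℝ) (σ : ℕ → Option (Fin n))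
    (V : ℝ) : Prop :=
  ∀ (i : Fin n) (t : ℕ), bambooHeight h σ i t ≤ V

namespace PinwheelAux


def int2 {α : Type*} (σ₁ σ₂ : ℕ → Option α) : ℕ → Option α :=
  fun t => if t % 2 = 0 then σ₁ (t / 2) else σ₂ (t / 2)

def int3 {α : Type*} (σ₀ σ₁ σ₂ : ℕ → Option α) : ℕ → Option α :=
  fun t => if t % 3 = 0 then σ₀ (t / 3) else if t % 3 = 1 then σ₁ (t / 3) else σ₂ (t / 3)

def Good {α : Type*} (σ : ℕ → Option α) (i : α) (W : ℕ) : Prop :=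
  ∀ t, ∃ s, t ≤ s ∧ s < t + W ∧ σ s = some i

theorem good_mono {α : Type*} {σ : ℕ → Option α} {i : α} {W W' : ℕ}
    (h : Good σ i W) (hW : W ≤ W') : Good σ i W' := by
  intro t
  obtain ⟨s, h1, h2, h3⟩ := h t
  exact ⟨s, h1, by omega, h3⟩

theorem good_single {α : Type*} (i : α) : Good (fun _ => some i) i 1 :=
  fun t => ⟨t, le_refl t, by omega, rfl⟩

theorem good_int2_left {α : Type*} {σ₁ σ₂ : ℕ → Option α} {i : α} {W : ℕ}
    (h : Good σ₁ i W) : Good (int2 σ₁ σ₂) i (2 * W) := by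
  intro t
  obtain ⟨s, h1, h2, h3⟩ := h ((t + 1) / 2)
  refine ⟨2 * s, by omega, by omega, ?_⟩
  have e1 : (2 * s) % 2 = 0 := by omega
  have e2 : (2 * s) / 2 = s := by omega
  simp [int2, e1, e2, h3]

theorem good_int2_right {α : Type*} {σ₁ σ₂ : ℕ → Option α} {i : α} {W : ℕ}
    (h : Good σ₂ i W) : Good (int2 σ₁ σ₂) i (2 * W) := by
  intro t
  obtain ⟨s, h1, h2, h3⟩ := h (t / 2)
  refine ⟨2 * s + 1, by omega, by omega, ?_⟩
  have e1 : (2 * s + 1) % 2 = 1 := by omega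
  have e2 : (2 * s + 1) / 2 = s := by omega
  simp [int2, e1, e2, h3]

theorem good_int3_0 {α : Type*} {σ₀ σ₁ σ₂ : ℕ → Option α} {i : α} {W : ℕ}
    (h : Good σ₀ i W) : Good (int3 σ₀ σ₁ σ₂) i (3 * W) := by
  intro t
  obtain ⟨s, h1, h2, h3⟩ := h ((t + 2) / 3)
  refine ⟨3 * s, by omega, by omega, ?_⟩
  have e1 : (3 * s) % 3 = 0 := by omega
  have e2 : (3 * s) / 3 = s := by omega
  simp [int3, e1, e2, h3]

theorem good_int3_1 {α : Type*} {σ₀ σ₁ σ₂ : ℕ → Option α} {i : α} {W : ℕ}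
    (h : Good σ₁ i W) : Good (int3 σ₀ σ₁ σ₂) i (3 * W) := by
  intro t
  obtain ⟨s, h1, h2, h3⟩ := h ((t + 1) / 3)
  refine ⟨3 * s + 1, by omega, by omega, ?_⟩
  have e1 : (3 * s + 1) % 3 = 1 := by omega
  have e2 : (3 * s + 1) / 3 = s := by omega
  simp [int3, e1, e2, h3]

theorem good_int3_2 {α : Type*} {σ₀ σ₁ σ₂ : ℕ → Option α} {i : α} {W : ℕ}
    (h : Good σ₂ i W) : Good (int3 σ₀ σ₁ σ₂) i (3 * W) := by
  intro t
  obtain ⟨s, h1, h2, h3⟩ := h (t / 3)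
  refine ⟨3 * s + 2, by omega, by omega, ?_⟩
  have e1 : (3 * s + 2) % 3 = 2 := by omega
  have e2 : (3 * s + 2) / 3 = s := by omega
  simp [int3, e1, e2, h3]


/-- Exact subset extraction for power-of-two weights. -/
theorem subset_exact {α : Type*} [DecidableEq α] (f : α → ℕ) :
    ∀ (N : ℕ) (l : List α), l.length ≤ N → (∀ x ∈ l, ∃ e : ℕ, f x = 2 ^ e) →
    ∀ C : ℕ, (∀ x ∈ l, f x ∣ C) → C ≤ (l.map f).sum →
    ∃ l₁ l₂ : List α, l.Perm (l₁ ++ l₂) ∧ (l₁.map f).sum = C := by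
  intro N
  induction N with
  | zero =>
    intro l hl _ C _ hC
    have hnil : l = [] := List.length_eq_zero_iff.mp (Nat.le_zero.mp hl)
    subst hnil
    simp only [List.map_nil, List.sum_nil, Nat.le_zero] at hC
    exact ⟨[], [], by simp, by simp [hC]⟩
  | succ N ih =>
    intro l hl hpow C hdvd hC
    by_cases hC0 : C = 0
    · exact ⟨[], l, by simp, by simp [hC0]⟩
    have hlne : l ≠ [] := by
      rintro rfl
      simp at hC
      omega
    obtain ⟨m, hm⟩ : ∃ m, m ∈ l.argmax f := by
      cases h : l.argmax f with
      | none => exact absurd (List.argmax_eq_none.mp h) hlne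
      | some m => exact ⟨m, by simp [h]⟩
    have hmem : m ∈ l := List.argmax_mem hm
    have hmdvd : f m ∣ C := hdvd m hmem
    have hmle : f m ≤ C := Nat.le_of_dvd (Nat.pos_of_ne_zero hC0) hmdvd
    have hperm : l.Perm (m :: l.erase m) := List.perm_cons_erase hmem
    have hsum : (l.map f).sum = f m + ((l.erase m).map f).sum := by
      have := (hperm.map f).sum_eq
      simpa using this
    have hlen : (l.erase m).length ≤ N := by
      have := List.length_erase_of_mem hmem
      omega
    have hpow' : ∀ x ∈ l.erase m, ∃ e : ℕ, f x = 2 ^ e :=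
      fun x hx => hpow x (List.mem_of_mem_erase hx)
    have hdvd' : ∀ x ∈ l.erase m, f x ∣ C - f m := by
      intro x hx
      have hxl : x ∈ l := List.mem_of_mem_erase hx
      obtain ⟨a, ha⟩ := hpow x hxl
      obtain ⟨b, hb⟩ := hpow m hmem
      have hle : f x ≤ f m := List.le_of_mem_argmax hxl hm
      have hab : a ≤ b := by
        by_contra hab
        push_neg at hab
        have : f m < f x := by
          rw [ha, hb]
          exact Nat.pow_lt_pow_right (by norm_num) hab
        omega
      have hxm : f x ∣ f m := by
        rw [ha, hb]
        exact pow_dvd_pow 2 hab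
      exact Nat.dvd_sub (hdvd x hxl) hxm
    have hC' : C - f m ≤ ((l.erase m).map f).sum := by omega
    obtain ⟨l₁, l₂, hp, hs⟩ := ih (l.erase m) hlen hpow' (C - f m) hdvd' hC'
    refine ⟨m :: l₁, l₂, ?_, ?_⟩
    · exact hperm.trans (by simpa using hp.cons m)
    · simp only [List.map_cons, List.sum_cons, hs]
      omega


noncomputable def wt {α : Type*} (z : α × ℕ) : ℝ := ((2:ℝ) ^ z.2)⁻¹

theorem wt_pos {α : Type*} (z : α × ℕ) : 0 < wt z := by
  unfold wt; positivity

theorem le_foldr_max (l : List ℕ) : ∀ x ∈ l, x ≤ l.foldr max 0 := by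
  induction l with
  | nil => simp
  | cons a tl ih =>
    intro x hx
    rcases List.mem_cons.mp hx with h | h
    · subst h; exact le_max_left _ _
    · exact le_trans (ih x h) (le_max_right _ _)

theorem scaled_sum {α : Type*} (K : ℕ) :
    ∀ (L : List (α × ℕ)), (∀ z ∈ L, z.2 ≤ K) →
    (((L.map (fun z => (2 ^ (K - z.2) : ℕ))).sum : ℝ)) = 2 ^ K * (L.map wt).sum := by
  intro L
  induction L with
  | nil => simp
  | cons a tl ih =>
    intro h
    have ha : a.2 ≤ K := h a (by simp)
    have htl := ih (fun z hz => h z (by simp [hz]))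
    simp only [List.map_cons, List.sum_cons]
    rw [Nat.cast_add, htl]
    push_cast
    have : ((2:ℝ) ^ (K - a.2)) = 2 ^ K * wt a := by
      unfold wt
      have e : (2:ℝ) ^ K = 2 ^ (K - a.2) * 2 ^ a.2 := by
        rw [← pow_add]; congr 1; omega
      rw [e, mul_assoc, mul_inv_cancel₀ (by positivity), mul_one]
    rw [this]; ring

theorem dec_sum {α : Type*} :
    ∀ (L : List (α × ℕ)), (∀ z ∈ L, 1 ≤ z.2) →
    ((L.map (fun z => (z.1, z.2 - 1))).map wt).sum = 2 * (L.map wt).sum := by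
  intro L
  induction L with
  | nil => simp
  | cons a tl ih =>
    intro h
    have ha : 1 ≤ a.2 := h a (by simp)
    have htl := ih (fun z hz => h z (by simp [hz]))
    simp only [List.map_cons, List.sum_cons, htl]
    have : wt (a.1, a.2 - 1) = 2 * wt a := by
      unfold wt
      simp only
      obtain ⟨m, hm⟩ : ∃ m, a.2 = m + 1 := ⟨a.2 - 1, by omega⟩
      rw [hm, Nat.add_sub_cancel, pow_succ, mul_inv]
      field_simp
    rw [this]; ring


theorem dec_snd_sum {α : Type*} :
    ∀ L : List (α × ℕ), (∀ z ∈ L, 1 ≤ z.2) →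
    ((L.map (fun z => (z.1, z.2 - 1))).map Prod.snd).sum + L.length = (L.map Prod.snd).sum := by
  intro L
  induction L with
  | nil => simp
  | cons a tl ih =>
    intro h
    have ha : 1 ≤ a.2 := h a (by simp)
    have htl := ih (fun z hz => h z (by simp [hz]))
    simp only [List.map_cons, List.sum_cons, List.length_cons]
    omega

theorem nat_pow_pred {K : ℕ} (h : 1 ≤ K) : (2:ℕ) ^ K = 2 ^ (K - 1) + 2 ^ (K - 1) := by
  obtain ⟨K', rfl⟩ : ∃ K', K = K' + 1 := ⟨K - 1, by omega⟩
  simp only [Nat.add_sub_cancel, pow_succ]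
  ring

theorem nat_two_mul_pow_pred {m : ℕ} (h : 1 ≤ m) : 2 * 2 ^ (m - 1) = 2 ^ m := by
  obtain ⟨m', rfl⟩ : ∃ m', m = m' + 1 := ⟨m - 1, by omega⟩
  simp only [Nat.add_sub_cancel, pow_succ]
  ring

theorem one_lt_sum {β : Type*} (g : β → ℝ) (hg : ∀ x, 0 < g x) :
    ∀ (L : List β) (z : β), z ∈ L → g z = 1 → 2 ≤ L.length → 1 < (L.map g).sum := by
  rintro (_ | ⟨a, tl⟩) z hz hgz hlen
  · simp at hz
  · have htl_ne : tl ≠ [] := by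
      intro h; rw [h] at hlen; simp at hlen
    rcases List.mem_cons.mp hz with rfl | hz'
    · have hpos : 0 < (tl.map g).sum := by
        apply List.sum_pos
        · intro x hx
          obtain ⟨y, _, rfl⟩ := List.mem_map.mp hx
          exact hg y
        · simpa using htl_ne
      simp only [List.map_cons, List.sum_cons, hgz]
      linarith
    · have h1 : (1:ℝ) ≤ (tl.map g).sum := by
        have := List.single_le_sum (l := tl.map g)
          (fun x hx => by obtain ⟨y, _, rfl⟩ := List.mem_map.mp hx; exact le_of_lt (hg y))
          (g z) (List.mem_map.mpr ⟨z, hz', rfl⟩)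
        linarith
      have := hg a
      simp only [List.map_cons, List.sum_cons]
      linarith

theorem tree {α : Type*} [DecidableEq α] :
    ∀ (N : ℕ) (L : List (α × ℕ)), (L.map Prod.snd).sum + L.length ≤ N →
    (L.map wt).sum ≤ 1 →
    ∃ σ : ℕ → Option α, ∀ z ∈ L, Good σ z.1 (2 ^ z.2) := by
  intro N
  induction N with
  | zero =>
    rintro (_ | ⟨a, tl⟩) hN _
    · exact ⟨fun _ => none, by simp⟩
    · simp at hN
  | succ N ih =>
    rintro (_ | ⟨a, L'⟩) hN hsum
    · exact ⟨fun _ => none, by simp⟩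
    rcases L' with _ | ⟨b, tl⟩
    · -- singleton
      refine ⟨fun _ => some a.1, ?_⟩
      intro z hz
      have hz' : z = a := by simpa using hz
      subst hz'
      exact good_mono (good_single z.1) Nat.one_le_two_pow
    · -- at least two elements
      set L : List (α × ℕ) := a :: b :: tl with hLdef
      have hlen2 : 2 ≤ L.length := by simp [hLdef]
      -- all levels are at least 1
      have h1 : ∀ z ∈ L, 1 ≤ z.2 := by
        intro z hz
        by_contra h0
        have hz2 : z.2 = 0 := by omega
        have hwtz : wt z = 1 := by unfold wt; rw [hz2]; norm_num
        have := one_lt_sum wt wt_pos L z hz hwtz hlen2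
        linarith
      set K : ℕ := (L.map Prod.snd).foldr max 0 with hKdef
      have hKz : ∀ z ∈ L, z.2 ≤ K :=
        fun z hz => le_foldr_max _ z.2 (List.mem_map.mpr ⟨z, hz, rfl⟩)
      have hK1 : 1 ≤ K := le_trans (h1 a (by simp [hLdef])) (hKz a (by simp [hLdef]))
      set f : α × ℕ → ℕ := fun z => 2 ^ (K - z.2) with hfdef
      have hSr : (((L.map f).sum : ℕ) : ℝ) = 2 ^ K * (L.map wt).sum := scaled_sum K L hKz
      have hS : (L.map f).sum ≤ 2 ^ K := by
        have hcast : ((2 ^ K : ℕ) : ℝ) = (2:ℝ) ^ K := by push_cast; ring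
        have h2 : (((L.map f).sum : ℕ) : ℝ) ≤ ((2 ^ K : ℕ) : ℝ) := by
          rw [hSr, hcast]
          nlinarith [pow_pos (by norm_num : (0:ℝ) < 2) K]
        exact_mod_cast h2
      have h2K : (2:ℕ) ^ K = 2 ^ (K - 1) + 2 ^ (K - 1) := nat_pow_pred hK1
      -- split into two halves of scaled weight ≤ 2^(K-1)
      obtain ⟨L₁, L₂, hperm12, hb1, hb2⟩ :
          ∃ L₁ L₂ : List (α × ℕ), L.Perm (L₁ ++ L₂) ∧
            (L₁.map f).sum ≤ 2 ^ (K - 1) ∧ (L₂.map f).sum ≤ 2 ^ (K - 1) := by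
        by_cases hsplit : (L.map f).sum ≤ 2 ^ (K - 1)
        · exact ⟨L, [], by simp, hsplit, by simp⟩
        · obtain ⟨L₁, L₂, hp, he⟩ := subset_exact f L.length L le_rfl
            (fun z _ => ⟨K - z.2, rfl⟩) (2 ^ (K - 1))
            (fun z hz => pow_dvd_pow 2 (by have := h1 z hz; have := hKz z hz; omega))
            (le_of_not_ge hsplit)
          have hsums : (L.map f).sum = (L₁.map f).sum + (L₂.map f).sum := by
            have := (hp.map f).sum_eq
            simpa using this
          exact ⟨L₁, L₂, hp, le_of_eq he, by omega⟩
      have hmem1 : ∀ z ∈ L₁, z ∈ L := fun z hz => hperm12.symm.subset (by simp [hz])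
      have hmem2 : ∀ z ∈ L₂, z ∈ L := fun z hz => hperm12.symm.subset (by simp [hz])
      -- real weight of each half is ≤ 1/2
      have half : ∀ (M : List (α × ℕ)), (∀ z ∈ M, z ∈ L) → (M.map f).sum ≤ 2 ^ (K - 1) →
          ((M.map (fun z => (z.1, z.2 - 1))).map wt).sum ≤ 1 := by
        intro M hM hMb
        have hMr : (((M.map f).sum : ℕ) : ℝ) = 2 ^ K * (M.map wt).sum :=
          scaled_sum K M (fun z hz => hKz z (hM z hz))
        have hdec : ((M.map (fun z => (z.1, z.2 - 1))).map wt).sum = 2 * (M.map wt).sum :=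
          dec_sum M (fun z hz => h1 z (hM z hz))
        rw [hdec]
        have hc : (((M.map f).sum : ℕ) : ℝ) ≤ ((2 ^ (K - 1) : ℕ) : ℝ) := Nat.cast_le.mpr hMb
        have h2Kr : ((2:ℝ)) ^ K = 2 ^ (K - 1) + 2 ^ (K - 1) := by
          have h' := congrArg (fun x : ℕ => (x : ℝ)) h2K
          push_cast at h'
          linarith
        rw [hMr] at hc
        push_cast at hc
        nlinarith [pow_pos (by norm_num : (0:ℝ) < 2) (K - 1)]
      -- measures for recursion
      have hmeas : ∀ (M : List (α × ℕ)), (∀ z ∈ M, z ∈ L) →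
          (M.map Prod.snd).sum ≤ (L.map Prod.snd).sum →
          ((M.map (fun z => (z.1, z.2 - 1))).map Prod.snd).sum
            + (M.map (fun z => (z.1, z.2 - 1))).length ≤ N := by
        intro M hM hMle
        have hds := dec_snd_sum M (fun z hz => h1 z (hM z hz))
        simp only [List.length_map] at *
        omega
      have hsums12 : (L.map Prod.snd).sum = (L₁.map Prod.snd).sum + (L₂.map Prod.snd).sum := by
        have := (hperm12.map Prod.snd).sum_eq
        simpa using this
      have hlen12 : L.length = L₁.length + L₂.length := by
        have := hperm12.length_eq
        simpa using this
      obtain ⟨σ₁, hσ₁⟩ := ih (L₁.map (fun z => (z.1, z.2 - 1)))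
        (hmeas L₁ hmem1 (by omega)) (half L₁ hmem1 hb1)
      obtain ⟨σ₂, hσ₂⟩ := ih (L₂.map (fun z => (z.1, z.2 - 1)))
        (hmeas L₂ hmem2 (by omega)) (half L₂ hmem2 hb2)
      refine ⟨int2 σ₁ σ₂, ?_⟩
      intro z hz
      have hpow2 : 2 * 2 ^ (z.2 - 1) = 2 ^ z.2 := nat_two_mul_pow_pred (h1 z hz)
      rcases (List.mem_append.mp (hperm12.subset hz)) with hz1 | hz2
      · have := hσ₁ (z.1, z.2 - 1) (List.mem_map.mpr ⟨z, hz1, rfl⟩)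
        have hgood := good_int2_left (σ₂ := σ₂) this
        rwa [hpow2] at hgood
      · have := hσ₂ (z.1, z.2 - 1) (List.mem_map.mpr ⟨z, hz2, rfl⟩)
        have hgood := good_int2_right (σ₁ := σ₁) this
        rwa [hpow2] at hgood

theorem perm_wt_sum {α : Type*} {L M : List (α × ℕ)} (h : L.Perm M) :
    (L.map wt).sum = (M.map wt).sum := (h.map wt).sum_eq

theorem extract_unit {α : Type*} [DecidableEq α] (L : List (α × ℕ))
    (h : 1 ≤ (L.map wt).sum) :
    ∃ P R : List (α × ℕ), L.Perm (P ++ R) ∧ (P.map wt).sum = 1 ∧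
      (R.map wt).sum = (L.map wt).sum - 1 := by
  set K : ℕ := (L.map Prod.snd).foldr max 0 with hK
  have hKz : ∀ z ∈ L, z.2 ≤ K :=
    fun z hz => le_foldr_max _ z.2 (List.mem_map.mpr ⟨z, hz, rfl⟩)
  set f : α × ℕ → ℕ := fun z => 2 ^ (K - z.2) with hf
  have hSr : (((L.map f).sum : ℕ) : ℝ) = 2 ^ K * (L.map wt).sum := scaled_sum K L hKz
  have hpos : (0:ℝ) < 2 ^ K := pow_pos (by norm_num) K
  have hS : 2 ^ K ≤ (L.map f).sum := by
    have h2 : ((2 ^ K : ℕ) : ℝ) ≤ (((L.map f).sum : ℕ) : ℝ) := by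
      rw [hSr]
      have : ((2 ^ K : ℕ) : ℝ) = (2:ℝ) ^ K := by push_cast; ring
      rw [this]
      nlinarith
    exact_mod_cast h2
  obtain ⟨P, R, hperm, he⟩ := subset_exact f L.length L le_rfl
    (fun z _ => ⟨K - z.2, rfl⟩) (2 ^ K)
    (fun z _ => pow_dvd_pow 2 (by omega)) hS
  have hmemP : ∀ z ∈ P, z ∈ L := fun z hz => hperm.symm.subset (by simp [hz])
  have hPr : (((P.map f).sum : ℕ) : ℝ) = 2 ^ K * (P.map wt).sum :=
    scaled_sum K P (fun z hz => hKz z (hmemP z hz))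
  have hP1 : (P.map wt).sum = 1 := by
    rw [he] at hPr
    have : ((2 ^ K : ℕ) : ℝ) = (2:ℝ) ^ K := by push_cast; ring
    rw [this] at hPr
    nlinarith
  have hsplit : (L.map wt).sum = (P.map wt).sum + (R.map wt).sum := by
    have := perm_wt_sum hperm
    simpa using this
  exact ⟨P, R, hperm, hP1, by rw [hsplit, hP1]; ring⟩

theorem split2 {α : Type*} [DecidableEq α] (L : List (α × ℕ))
    (h : (L.map wt).sum ≤ 2) :
    ∃ P₁ P₂ : List (α × ℕ), L.Perm (P₁ ++ P₂) ∧
      (P₁.map wt).sum ≤ 1 ∧ (P₂.map wt).sum ≤ 1 := by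
  by_cases h1 : (L.map wt).sum ≤ 1
  · exact ⟨L, [], by simp, h1, by simp⟩
  · obtain ⟨P, R, hperm, hP, hR⟩ := extract_unit L (by linarith)
    exact ⟨P, R, hperm, le_of_eq hP, by rw [hR]; linarith⟩

theorem split3 {α : Type*} [DecidableEq α] (L : List (α × ℕ))
    (h : (L.map wt).sum ≤ 3) :
    ∃ P₁ P₂ P₃ : List (α × ℕ), L.Perm (P₁ ++ (P₂ ++ P₃)) ∧
      (P₁.map wt).sum ≤ 1 ∧ (P₂.map wt).sum ≤ 1 ∧ (P₃.map wt).sum ≤ 1 := by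
  by_cases h1 : (L.map wt).sum ≤ 1
  · exact ⟨L, [], [], by simp, h1, by simp, by simp⟩
  · obtain ⟨P, R, hperm, hP, hR⟩ := extract_unit L (by linarith)
    obtain ⟨P₂, P₃, hperm2, h2, h3⟩ := split2 R (by rw [hR]; linarith)
    exact ⟨P, P₂, P₃, hperm.trans ((hperm2.append_left P)), le_of_eq hP, h2, h3⟩

theorem extract3 {α : Type*} [DecidableEq α] (L : List (α × ℕ))
    (h : 3 ≤ (L.map wt).sum) :
    ∃ P₁ P₂ P₃ R : List (α × ℕ), L.Perm (P₁ ++ (P₂ ++ (P₃ ++ R))) ∧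
      (P₁.map wt).sum = 1 ∧ (P₂.map wt).sum = 1 ∧ (P₃.map wt).sum = 1 ∧
      (R.map wt).sum = (L.map wt).sum - 3 := by
  obtain ⟨P₁, R₁, hp1, h1, hr1⟩ := extract_unit L (by linarith)
  obtain ⟨P₂, R₂, hp2, h2, hr2⟩ := extract_unit R₁ (by rw [hr1]; linarith)
  obtain ⟨P₃, R₃, hp3, h3, hr3⟩ := extract_unit R₂ (by rw [hr2, hr1]; linarith)
  refine ⟨P₁, P₂, P₃, R₃, ?_, h1, h2, h3, by rw [hr3, hr2, hr1]; ring⟩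
  exact hp1.trans ((hp2.trans (hp3.append_left P₂)).append_left P₁)

theorem inc_sum {α : Type*} :
    ∀ (L : List (α × ℕ)),
    ((L.map (fun z => (z.1, z.2 + 1))).map wt).sum = (1/2) * (L.map wt).sum := by
  intro L
  induction L with
  | nil => simp
  | cons a tl ih =>
    simp only [List.map_cons, List.sum_cons, ih]
    have : wt (a.1, a.2 + 1) = (1/2) * wt a := by
      unfold wt
      simp only [pow_succ, mul_inv]
      ring
    rw [this]; ring

theorem inv_pow_le {x c : ℝ} {e : ℕ} (hx : 0 < x) (h : x ≤ c * 2 ^ e) :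
    ((2:ℝ) ^ e)⁻¹ ≤ c * (1 / x) := by
  have h2 : (0:ℝ) < 2 ^ e := pow_pos (by norm_num) e
  rw [mul_one_div, le_div_iff₀ hx]
  calc ((2:ℝ) ^ e)⁻¹ * x ≤ ((2:ℝ) ^ e)⁻¹ * (c * 2 ^ e) :=
        mul_le_mul_of_nonneg_left h (inv_nonneg.mpr h2.le)
    _ = c := by field_simp

theorem real_inv_pow_pred {e : ℕ} (h : 1 ≤ e) :
    ((2:ℝ) ^ (e - 1))⁻¹ = 2 * ((2:ℝ) ^ e)⁻¹ := by
  obtain ⟨m, rfl⟩ : ∃ m, e = m + 1 := ⟨e - 1, by omega⟩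
  simp only [Nat.add_sub_cancel, pow_succ, mul_inv]
  field_simp

theorem real_inv_pow_pred2 {e : ℕ} (h : 2 ≤ e) :
    ((2:ℝ) ^ (e - 2))⁻¹ = 4 * ((2:ℝ) ^ e)⁻¹ := by
  obtain ⟨m, rfl⟩ : ∃ m, e = m + 2 := ⟨e - 2, by omega⟩
  have : (2:ℝ) ^ (m + 2) = 2 ^ m * 4 := by rw [pow_add]; norm_num
  rw [this]
  simp only [Nat.add_sub_cancel, mul_inv]
  have hm : ((2:ℝ) ^ m) ≠ 0 := by positivity
  field_simp

theorem nat_four_mul_pow_pred2 {e : ℕ} (h : 2 ≤ e) : 4 * 2 ^ (e - 2) = 2 ^ e := by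
  obtain ⟨m, rfl⟩ : ∃ m, e = m + 2 := ⟨e - 2, by omega⟩
  simp only [Nat.add_sub_cancel, pow_add]
  ring

end PinwheelAux

open PinwheelAux in
/-- Any pseudo-instance with all periods at least 2 and density at most 7/12
admits a feasible pinwheel schedule (Theorem 1, Chan–Chin rounding). -/
theorem pinwheel_of_density_le_seven_twelfths (n : ℕ) (hn : 1 ≤ n) (p : Fin n → ℝ)
    (hp : ∀ i, 2 ≤ p i) (hd : ∑ i, 1 / p i ≤ 7 / 12) :
    ∃ σ : ℕ → Option (Fin n), PinwheelFeasibleR p σ := by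
  classical
  have hp0 : ∀ i, (0:ℝ) < p i := fun i => lt_of_lt_of_le (by norm_num) (hp i)
  obtain ⟨w, hwdef⟩ : ∃ w : Fin n → ℕ, ∀ i, w i = ⌊p i⌋₊ := ⟨_, fun _ => rfl⟩
  have hw2 : ∀ i, 2 ≤ w i := fun i => by
    rw [hwdef i]; exact Nat.le_floor (by exact_mod_cast hp i)
  have hwlt : ∀ i, p i < (w i : ℝ) + 1 := fun i => by
    rw [hwdef i]; exact Nat.lt_floor_add_one (p i)
  have listsum : ∀ (s : Finset (Fin n)) (lv : Fin n → ℕ),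
      ((s.toList.map (fun i => (i, lv i))).map wt).sum = ∑ i ∈ s, ((2:ℝ) ^ lv i)⁻¹ := by
    intro s lv
    rw [List.map_map]
    exact Finset.sum_map_toList s _
  by_cases h2ex : ∃ i₀, w i₀ = 2
  · -- Case 1 : some job has floor 2; it gets every other day, rest dyadic on odd days
    obtain ⟨i₀, hi₀⟩ := h2ex
    obtain ⟨k, hkdef⟩ : ∃ k : Fin n → ℕ, ∀ i, k i = Nat.log 2 (w i) := ⟨_, fun _ => rfl⟩
    have hk1 : ∀ i, 1 ≤ k i := fun i => by
      rw [hkdef i]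
      exact (Nat.le_log_iff_pow_le (by norm_num) (by have := hw2 i; omega)).mpr
        (by simpa using hw2 i)
    have hklt : ∀ i, w i < 2 ^ (k i + 1) := fun i => by
      rw [hkdef i]; exact Nat.lt_pow_succ_log_self (by norm_num) (w i)
    have hkle : ∀ i, 2 ^ k i ≤ w i := fun i => by
      rw [hkdef i]; exact Nat.pow_log_le_self 2 (by have := hw2 i; omega)
    have hterm : ∀ i, ((2:ℝ) ^ (k i - 1))⁻¹ ≤ 4 * (1 / p i) := by
      intro i
      apply inv_pow_le (hp0 i)
      have h1 : ((w i : ℝ) + 1) ≤ ((2 ^ (k i + 1) : ℕ) : ℝ) := by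
        exact_mod_cast Nat.succ_le_of_lt (hklt i)
      have h2 : ((2 ^ (k i + 1) : ℕ) : ℝ) = 4 * (2:ℝ) ^ (k i - 1) := by
        obtain ⟨m, hm⟩ : ∃ m, k i = m + 1 := ⟨k i - 1, by have := hk1 i; omega⟩
        rw [hm]
        push_cast
        simp only [Nat.add_sub_cancel, pow_succ]
        ring
      nlinarith [hwlt i]
    have hp₀3 : p i₀ < 3 := by
      have h := hwlt i₀
      rw [hi₀] at h
      norm_num at h
      exact h
    have h13 : (1:ℝ) / 3 < 1 / p i₀ := one_div_lt_one_div_of_lt (hp0 i₀) hp₀3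
    have hC := Finset.sum_erase_add Finset.univ (fun i => 1 / p i) (Finset.mem_univ i₀)
    have hsum1 : ∑ i ∈ Finset.univ.erase i₀, ((2:ℝ) ^ (k i - 1))⁻¹ ≤ 1 := by
      have hA : ∑ i ∈ Finset.univ.erase i₀, ((2:ℝ) ^ (k i - 1))⁻¹
          ≤ ∑ i ∈ Finset.univ.erase i₀, 4 * (1 / p i) :=
        Finset.sum_le_sum (fun i _ => hterm i)
      rw [← Finset.mul_sum] at hA
      linarith
    obtain ⟨σ', hσ'⟩ := tree
      ((((Finset.univ.erase i₀).toList.map (fun i => (i, k i - 1))).map Prod.snd).sum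
        + ((Finset.univ.erase i₀).toList.map (fun i => (i, k i - 1))).length)
      ((Finset.univ.erase i₀).toList.map (fun i => (i, k i - 1))) le_rfl
      (by rw [listsum]; exact hsum1)
    refine ⟨int2 (fun _ => some i₀) σ', ?_⟩
    intro i t
    rw [← hwdef i]
    by_cases hii : i = i₀
    · subst hii
      have hg : Good (int2 (fun _ => some i) σ') i (2 * 1) :=
        good_int2_left (good_single i)
      exact good_mono hg (by omega) t
    · have hiL : (i, k i - 1) ∈ (Finset.univ.erase i₀).toList.map (fun i => (i, k i - 1)) :=
        List.mem_map.mpr ⟨i, Finset.mem_toList.mpr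
          (Finset.mem_erase.mpr ⟨hii, Finset.mem_univ i⟩), rfl⟩
      have hg := good_int2_right (σ₁ := fun _ => some i₀) (hσ' _ hiL)
      rw [nat_two_mul_pow_pred (hk1 i)] at hg
      exact good_mono hg (hkle i) t
  · push_neg at h2ex
    have hw3 : ∀ i, 3 ≤ w i := fun i => by have := hw2 i; have := h2ex i; omega
    by_cases h3ex : ∃ i₀, w i₀ = 3
    · -- Case 2 : some job has floor 3; it gets every third day; rest in two streams
      obtain ⟨i₀, hi₀⟩ := h3ex
      obtain ⟨l, hldef⟩ : ∃ l : Fin n → ℕ, ∀ i, l i = Nat.log 2 (w i / 3) := ⟨_, fun _ => rfl⟩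
      have hlle : ∀ i, 3 * 2 ^ l i ≤ w i := by
        intro i
        have h1 : 2 ^ l i ≤ w i / 3 := by
          rw [hldef i]
          exact Nat.pow_log_le_self 2 (by have := hw3 i; omega)
        have := hw3 i
        omega
      have hllt : ∀ i, w i + 1 ≤ 6 * 2 ^ l i := by
        intro i
        have h1 : w i / 3 < 2 ^ (l i + 1) := by
          rw [hldef i]
          exact Nat.lt_pow_succ_log_self (by norm_num) _
        have h2 : (2:ℕ) ^ (l i + 1) = 2 * 2 ^ l i := by rw [pow_succ]; ring
        rw [h2] at h1
        omega
      have hterm : ∀ i, ((2:ℝ) ^ l i)⁻¹ ≤ 6 * (1 / p i) := by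
        intro i
        apply inv_pow_le (hp0 i)
        have h1 : ((w i : ℝ) + 1) ≤ ((6 * 2 ^ l i : ℕ) : ℝ) := by
          exact_mod_cast hllt i
        have h2 : ((6 * 2 ^ l i : ℕ) : ℝ) = 6 * (2:ℝ) ^ l i := by push_cast; ring
        nlinarith [hwlt i]
      have hp₀4 : p i₀ < 4 := by
        have h := hwlt i₀
        rw [hi₀] at h
        norm_num at h
        exact h
      have h14 : (1:ℝ) / 4 < 1 / p i₀ := one_div_lt_one_div_of_lt (hp0 i₀) hp₀4
      have hC := Finset.sum_erase_add Finset.univ (fun i => 1 / p i) (Finset.mem_univ i₀)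
      have hsum2 : ∑ i ∈ Finset.univ.erase i₀, ((2:ℝ) ^ l i)⁻¹ ≤ 2 := by
        have hA : ∑ i ∈ Finset.univ.erase i₀, ((2:ℝ) ^ l i)⁻¹
            ≤ ∑ i ∈ Finset.univ.erase i₀, 6 * (1 / p i) :=
          Finset.sum_le_sum (fun i _ => hterm i)
        rw [← Finset.mul_sum] at hA
        linarith
      obtain ⟨P₁, P₂, hperm, hb1, hb2⟩ := split2
        ((Finset.univ.erase i₀).toList.map (fun i => (i, l i)))
        (by rw [listsum]; exact hsum2)
      obtain ⟨σ₁, hσ₁⟩ := tree ((P₁.map Prod.snd).sum + P₁.length) P₁ le_rfl hb1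
      obtain ⟨σ₂, hσ₂⟩ := tree ((P₂.map Prod.snd).sum + P₂.length) P₂ le_rfl hb2
      refine ⟨int3 (fun _ => some i₀) σ₁ σ₂, ?_⟩
      intro i t
      rw [← hwdef i]
      by_cases hii : i = i₀
      · subst hii
        have hg : Good (int3 (fun _ => some i) σ₁ σ₂) i (3 * 1) :=
          good_int3_0 (good_single i)
        exact good_mono hg (by omega) t
      · have hiL : (i, l i) ∈ (Finset.univ.erase i₀).toList.map (fun i => (i, l i)) :=
          List.mem_map.mpr ⟨i, Finset.mem_toList.mpr
            (Finset.mem_erase.mpr ⟨hii, Finset.mem_univ i⟩), rfl⟩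
        rcases List.mem_append.mp (hperm.subset hiL) with hz | hz
        · have hg := good_int3_1 (σ₀ := fun _ => some i₀) (σ₂ := σ₂) (hσ₁ _ hz)
          exact good_mono hg (hlle i) t
        · have hg := good_int3_2 (σ₀ := fun _ => some i₀) (σ₁ := σ₁) (hσ₂ _ hz)
          exact good_mono hg (hlle i) t
    · -- Case 3 : all floors ≥ 4
      push_neg at h3ex
      have hw4 : ∀ i, 4 ≤ w i := fun i => by have := hw3 i; have := h3ex i; omega
      obtain ⟨a, hadef⟩ : ∃ a : Fin n → ℕ, ∀ i, a i = Nat.log 2 (w i) := ⟨_, fun _ => rfl⟩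
      have ha2 : ∀ i, 2 ≤ a i := fun i => by
        rw [hadef i]
        exact (Nat.le_log_iff_pow_le (by norm_num) (by have := hw4 i; omega)).mpr
          (by simpa using hw4 i)
      have hale : ∀ i, 2 ^ a i ≤ w i := fun i => by
        rw [hadef i]; exact Nat.pow_log_le_self 2 (by have := hw4 i; omega)
      have halt : ∀ i, w i < 2 ^ (a i + 1) := fun i => by
        rw [hadef i]; exact Nat.lt_pow_succ_log_self (by norm_num) (w i)
      have htermA : ∀ i, 2 * w i < 3 * 2 ^ a i → ((2:ℝ) ^ a i)⁻¹ ≤ (3/2) * (1 / p i) := by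
        intro i hiA
        apply inv_pow_le (hp0 i)
        have he : 2 * 2 ^ (a i - 1) = 2 ^ a i := nat_two_mul_pow_pred (by have := ha2 i; omega)
        have h1 : w i + 1 ≤ 3 * 2 ^ (a i - 1) := by omega
        have hc : 2 * (2:ℝ) ^ (a i - 1) = (2:ℝ) ^ a i := by exact_mod_cast he
        have h3 : ((w i : ℝ) + 1) ≤ ((3 * 2 ^ (a i - 1) : ℕ) : ℝ) := by exact_mod_cast h1
        push_cast at h3
        nlinarith [hwlt i]
      have htermB : ∀ i, ((2:ℝ) ^ a i)⁻¹ ≤ 2 * (1 / p i) := by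
        intro i
        apply inv_pow_le (hp0 i)
        have h1 : ((w i : ℝ) + 1) ≤ ((2 ^ (a i + 1) : ℕ) : ℝ) := by
          exact_mod_cast Nat.succ_le_of_lt (halt i)
        have h2 : ((2 ^ (a i + 1) : ℕ) : ℝ) = 2 * (2:ℝ) ^ a i := by
          push_cast
          rw [pow_succ]
          ring
        nlinarith [hwlt i]
      have hBw : ∀ i, ¬(2 * w i < 3 * 2 ^ a i) → 6 * 2 ^ (a i - 2) ≤ w i := by
        intro i hiB
        have h4 : 4 * 2 ^ (a i - 2) = 2 ^ a i := nat_four_mul_pow_pred2 (ha2 i)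
        omega
      have hγle : (∑ i ∈ Finset.univ.filter (fun i => 2 * w i < 3 * 2 ^ a i), ((2:ℝ) ^ a i)⁻¹) ≤ (3/2) * (∑ i ∈ Finset.univ.filter (fun i => 2 * w i < 3 * 2 ^ a i), 1 / p i) := by
        rw [Finset.mul_sum]
        exact Finset.sum_le_sum (fun i hi => htermA i (Finset.mem_filter.mp hi).2)
      have hδle : (∑ i ∈ Finset.univ.filter (fun i => ¬(2 * w i < 3 * 2 ^ a i)), ((2:ℝ) ^ a i)⁻¹) ≤ 2 * (∑ i ∈ Finset.univ.filter (fun i => ¬(2 * w i < 3 * 2 ^ a i)), 1 / p i) := by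
        rw [Finset.mul_sum]
        exact Finset.sum_le_sum (fun i _ => htermB i)
      have hsAB : (∑ i ∈ Finset.univ.filter (fun i => 2 * w i < 3 * 2 ^ a i), 1 / p i) + (∑ i ∈ Finset.univ.filter (fun i => ¬(2 * w i < 3 * 2 ^ a i)), 1 / p i) = ∑ i, 1 / p i :=
        Finset.sum_filter_add_sum_filter_not Finset.univ _ _
      have hsA0 : (0:ℝ) ≤ (∑ i ∈ Finset.univ.filter (fun i => 2 * w i < 3 * 2 ^ a i), 1 / p i) :=
        Finset.sum_nonneg (fun i _ => by have := hp0 i; positivity)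
      have hsB0 : (0:ℝ) ≤ (∑ i ∈ Finset.univ.filter (fun i => ¬(2 * w i < 3 * 2 ^ a i)), 1 / p i) :=
        Finset.sum_nonneg (fun i _ => by have := hp0 i; positivity)
      have hγδ : (∑ i ∈ Finset.univ.filter (fun i => 2 * w i < 3 * 2 ^ a i), ((2:ℝ) ^ a i)⁻¹) + (∑ i ∈ Finset.univ.filter (fun i => ¬(2 * w i < 3 * 2 ^ a i)), ((2:ℝ) ^ a i)⁻¹) = ∑ i, ((2:ℝ) ^ a i)⁻¹ :=
        Finset.sum_filter_add_sum_filter_not Finset.univ _ _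
      by_cases hγc : 1/2 < (∑ i ∈ Finset.univ.filter (fun i => 2 * w i < 3 * 2 ^ a i), ((2:ℝ) ^ a i)⁻¹)
      · -- Case 3a : heavy dyadic side, schedule everything dyadically
        have hsum : ∑ i, ((2:ℝ) ^ a i)⁻¹ ≤ 1 := by linarith
        obtain ⟨σ, hσ⟩ := tree
          ((((Finset.univ : Finset (Fin n)).toList.map (fun i => (i, a i))).map Prod.snd).sum + ((Finset.univ : Finset (Fin n)).toList.map (fun i => (i, a i))).length) ((Finset.univ : Finset (Fin n)).toList.map (fun i => (i, a i))) le_rfl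
          (by rw [listsum]; exact hsum)
        refine ⟨σ, ?_⟩
        intro i t
        rw [← hwdef i]
        have hiL : (i, a i) ∈ ((Finset.univ : Finset (Fin n)).toList.map (fun i => (i, a i))) :=
          List.mem_map.mpr ⟨i, Finset.mem_toList.mpr (Finset.mem_univ i), rfl⟩
        exact good_mono (hσ _ hiL) (hale i) t
      · have hAsum : ((((Finset.univ.filter (fun i => 2 * w i < 3 * 2 ^ a i)).toList.map (fun i => (i, a i - 1)))).map wt).sum = 2 * (∑ i ∈ Finset.univ.filter (fun i => 2 * w i < 3 * 2 ^ a i), ((2:ℝ) ^ a i)⁻¹) := by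
          rw [listsum, Finset.mul_sum]
          exact Finset.sum_congr rfl
            (fun i _ => real_inv_pow_pred (by have := ha2 i; omega))
        have hBsum : ((((Finset.univ.filter (fun i => ¬(2 * w i < 3 * 2 ^ a i))).toList.map (fun i => (i, a i - 2)))).map wt).sum = 4 * (∑ i ∈ Finset.univ.filter (fun i => ¬(2 * w i < 3 * 2 ^ a i)), ((2:ℝ) ^ a i)⁻¹) := by
          rw [listsum, Finset.mul_sum]
          exact Finset.sum_congr rfl (fun i _ => real_inv_pow_pred2 (ha2 i))
        by_cases hδc : (∑ i ∈ Finset.univ.filter (fun i => ¬(2 * w i < 3 * 2 ^ a i)), ((2:ℝ) ^ a i)⁻¹) ≤ 3/4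
        · -- Case 3b : balanced, one ternary block suffices
          obtain ⟨P₁, P₂, P₃, hperm, hb1, hb2, hb3⟩ := split3 ((Finset.univ.filter (fun i => ¬(2 * w i < 3 * 2 ^ a i))).toList.map (fun i => (i, a i - 2)))
            (by rw [hBsum]; linarith)
          obtain ⟨σA, hσA⟩ := tree
            ((((Finset.univ.filter (fun i => 2 * w i < 3 * 2 ^ a i)).toList.map (fun i => (i, a i - 1))).map Prod.snd).sum + ((Finset.univ.filter (fun i => 2 * w i < 3 * 2 ^ a i)).toList.map (fun i => (i, a i - 1))).length) ((Finset.univ.filter (fun i => 2 * w i < 3 * 2 ^ a i)).toList.map (fun i => (i, a i - 1))) le_rfl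
            (by rw [hAsum]; linarith)
          obtain ⟨σ₁, hσ₁⟩ := tree ((P₁.map Prod.snd).sum + P₁.length) P₁ le_rfl hb1
          obtain ⟨σ₂, hσ₂⟩ := tree ((P₂.map Prod.snd).sum + P₂.length) P₂ le_rfl hb2
          obtain ⟨σ₃, hσ₃⟩ := tree ((P₃.map Prod.snd).sum + P₃.length) P₃ le_rfl hb3
          refine ⟨int2 σA (int3 σ₁ σ₂ σ₃), ?_⟩
          intro i t
          rw [← hwdef i]
          by_cases hiA : 2 * w i < 3 * 2 ^ a i
          · have hiL : (i, a i - 1) ∈ ((Finset.univ.filter (fun i => 2 * w i < 3 * 2 ^ a i)).toList.map (fun i => (i, a i - 1))) :=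
              List.mem_map.mpr ⟨i, Finset.mem_toList.mpr
                (Finset.mem_filter.mpr ⟨Finset.mem_univ i, hiA⟩), rfl⟩
            have hg := good_int2_left (σ₂ := int3 σ₁ σ₂ σ₃) (hσA _ hiL)
            rw [nat_two_mul_pow_pred (by have := ha2 i; omega)] at hg
            exact good_mono hg (hale i) t
          · have hiL : (i, a i - 2) ∈ ((Finset.univ.filter (fun i => ¬(2 * w i < 3 * 2 ^ a i))).toList.map (fun i => (i, a i - 2))) :=
              List.mem_map.mpr ⟨i, Finset.mem_toList.mpr
                (Finset.mem_filter.mpr ⟨Finset.mem_univ i, hiA⟩), rfl⟩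
            have heq : 2 * (3 * 2 ^ (a i - 2)) = 6 * 2 ^ (a i - 2) := by ring
            rcases List.mem_append.mp (hperm.subset hiL) with hz | hz'
            · have hg := good_int2_right (σ₁ := σA)
                (good_int3_0 (σ₁ := σ₂) (σ₂ := σ₃) (hσ₁ _ hz))
              rw [heq] at hg
              exact good_mono hg (hBw i hiA) t
            · rcases List.mem_append.mp hz' with hz | hz
              · have hg := good_int2_right (σ₁ := σA)
                  (good_int3_1 (σ₀ := σ₁) (σ₂ := σ₃) (hσ₂ _ hz))
                rw [heq] at hg
                exact good_mono hg (hBw i hiA) t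
              · have hg := good_int2_right (σ₁ := σA)
                  (good_int3_2 (σ₀ := σ₁) (σ₁ := σ₂) (hσ₃ _ hz))
                rw [heq] at hg
                exact good_mono hg (hBw i hiA) t
        · -- Case 3c : heavy ternary side, fill the ternary block exactly and spill the rest
          rw [not_le] at hδc
          obtain ⟨P₁, P₂, P₃, R, hperm, hb1, hb2, hb3, hbR⟩ := extract3 ((Finset.univ.filter (fun i => ¬(2 * w i < 3 * 2 ^ a i))).toList.map (fun i => (i, a i - 2)))
            (by rw [hBsum]; linarith)
          rw [hBsum] at hbR
          obtain ⟨σ₁, hσ₁⟩ := tree ((P₁.map Prod.snd).sum + P₁.length) P₁ le_rfl (le_of_eq hb1)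
          obtain ⟨σ₂, hσ₂⟩ := tree ((P₂.map Prod.snd).sum + P₂.length) P₂ le_rfl (le_of_eq hb2)
          obtain ⟨σ₃, hσ₃⟩ := tree ((P₃.map Prod.snd).sum + P₃.length) P₃ le_rfl (le_of_eq hb3)
          have hLLsum : (((((Finset.univ.filter (fun i => 2 * w i < 3 * 2 ^ a i)).toList.map (fun i => (i, a i - 1))) ++ (R.map (fun z : Fin n × ℕ => (z.1, z.2 + 1))))).map wt).sum ≤ 1 := by
            rw [List.map_append, List.sum_append, hAsum, inc_sum, hbR]
            linarith
          obtain ⟨σL, hσL⟩ := tree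
            (((((Finset.univ.filter (fun i => 2 * w i < 3 * 2 ^ a i)).toList.map (fun i => (i, a i - 1))) ++ (R.map (fun z : Fin n × ℕ => (z.1, z.2 + 1)))).map Prod.snd).sum + (((Finset.univ.filter (fun i => 2 * w i < 3 * 2 ^ a i)).toList.map (fun i => (i, a i - 1))) ++ (R.map (fun z : Fin n × ℕ => (z.1, z.2 + 1)))).length) (((Finset.univ.filter (fun i => 2 * w i < 3 * 2 ^ a i)).toList.map (fun i => (i, a i - 1))) ++ (R.map (fun z : Fin n × ℕ => (z.1, z.2 + 1)))) le_rfl hLLsum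
          refine ⟨int2 σL (int3 σ₁ σ₂ σ₃), ?_⟩
          intro i t
          rw [← hwdef i]
          by_cases hiA : 2 * w i < 3 * 2 ^ a i
          · have hiL : (i, a i - 1) ∈ (((Finset.univ.filter (fun i => 2 * w i < 3 * 2 ^ a i)).toList.map (fun i => (i, a i - 1))) ++ (R.map (fun z : Fin n × ℕ => (z.1, z.2 + 1)))) :=
              List.mem_append_left _ (List.mem_map.mpr ⟨i, Finset.mem_toList.mpr
                (Finset.mem_filter.mpr ⟨Finset.mem_univ i, hiA⟩), rfl⟩)
            have hg := good_int2_left (σ₂ := int3 σ₁ σ₂ σ₃) (hσL _ hiL)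
            rw [nat_two_mul_pow_pred (by have := ha2 i; omega)] at hg
            exact good_mono hg (hale i) t
          · have hiL : (i, a i - 2) ∈ ((Finset.univ.filter (fun i => ¬(2 * w i < 3 * 2 ^ a i))).toList.map (fun i => (i, a i - 2))) :=
              List.mem_map.mpr ⟨i, Finset.mem_toList.mpr
                (Finset.mem_filter.mpr ⟨Finset.mem_univ i, hiA⟩), rfl⟩
            have heq : 2 * (3 * 2 ^ (a i - 2)) = 6 * 2 ^ (a i - 2) := by ring
            rcases List.mem_append.mp (hperm.subset hiL) with hz | hz'
            · have hg := good_int2_right (σ₁ := σL)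
                (good_int3_0 (σ₁ := σ₂) (σ₂ := σ₃) (hσ₁ _ hz))
              rw [heq] at hg
              exact good_mono hg (hBw i hiA) t
            · rcases List.mem_append.mp hz' with hz | hz''
              · have hg := good_int2_right (σ₁ := σL)
                  (good_int3_1 (σ₀ := σ₁) (σ₂ := σ₃) (hσ₂ _ hz))
                rw [heq] at hg
                exact good_mono hg (hBw i hiA) t
              · rcases List.mem_append.mp hz'' with hz | hzR
                · have hg := good_int2_right (σ₁ := σL)
                    (good_int3_2 (σ₀ := σ₁) (σ₁ := σ₂) (hσ₃ _ hz))
                  rw [heq] at hg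
                  exact good_mono hg (hBw i hiA) t
                · have hiLL : (i, (a i - 2) + 1) ∈ (((Finset.univ.filter (fun i => 2 * w i < 3 * 2 ^ a i)).toList.map (fun i => (i, a i - 1))) ++ (R.map (fun z : Fin n × ℕ => (z.1, z.2 + 1)))) :=
                    List.mem_append_right _ (List.mem_map.mpr ⟨(i, a i - 2), hzR, rfl⟩)
                  have hg := good_int2_left (σ₂ := int3 σ₁ σ₂ σ₃) (hσL _ hiLL)
                  have heq2 : 2 * 2 ^ ((a i - 2) + 1) = 2 ^ a i := by
                    have h4 : 4 * 2 ^ (a i - 2) = 2 ^ a i := nat_four_mul_pow_pred2 (ha2 i)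
                    rw [pow_succ]
                    omega
                  rw [heq2] at hg
                  exact good_mono hg (hale i) t
end

section
/- Let h : Fin n → ℝ be growth rates with h i > 0 for all i, let H = ∑ i, h i, and assume h i ≤ 6H/7 for every i (equivalently, 12H/(7 h i) ≥ 2 for every i). Then there exists a trimming schedule that achieves value (12/7) · H, i.e., the height reached by every bamboo on every day is at most (12/7) · H. -/
namespace BGT

def Win {n : ℕ} (σ : ℕ → Option (Fin n)) (i : Fin n) (q : ℕ) : Prop :=
  ∀ t : ℕ, ∃ s : ℕ, t ≤ s ∧ s < t + q ∧ σ s = some i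

def Exact {n : ℕ} (σ : ℕ → Option (Fin n)) (i : Fin n) (q o : ℕ) : Prop :=
  ∀ k : ℕ, σ (o + k * q) = some i

theorem win_mono {n : ℕ} {σ : ℕ → Option (Fin n)} {i : Fin n} {q q' : ℕ}
    (h : Win σ i q) (hq : q ≤ q') : Win σ i q' := by
  intro t; obtain ⟨s, h1, h2, h3⟩ := h t; exact ⟨s, h1, by omega, h3⟩

/-- every window of length `L ≥ P` contains a member of the AP `off + k*P` (`off < P`). -/
theorem hit (P off t L : ℕ) (hP : 0 < P) (hPL : P ≤ L) (hoff : off < P) :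
    ∃ y : ℕ, t ≤ off + y * P ∧ off + y * P < t + L := by
  rcases le_or_gt t off with h | h
  · exact ⟨0, by omega, by omega⟩
  · refine ⟨(t - off + P - 1) / P, ?_, ?_⟩
    · have e1 := Nat.div_add_mod (t - off + P - 1) P
      have e2 : (t - off + P - 1) % P < P := Nat.mod_lt _ hP
      have e3 : P * ((t - off + P - 1) / P) = ((t - off + P - 1) / P) * P :=
        Nat.mul_comm _ _
      have e4 : t - off ≤ ((t - off + P - 1) / P) * P := by
        have : P * ((t - off + P - 1) / P) = t - off + P - 1 - (t - off + P - 1) % P := by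
          omega
        rw [e3] at this
        omega
      omega
    · have e5 : ((t - off + P - 1) / P) * P ≤ t - off + P - 1 := Nat.div_mul_le_self _ _
      omega

noncomputable def w (e : ℕ) : ℝ := ((2:ℝ)^e)⁻¹

theorem w_pos (e : ℕ) : 0 < w e := by
  rw [w]; positivity

theorem w_nonneg (e : ℕ) : 0 ≤ w e := (w_pos e).le

theorem w_zero : w 0 = 1 := by simp [w]

theorem w_succ_half (e : ℕ) : w (e + 1) = w e / 2 := by
  simp [w, pow_succ]; ring

theorem w_pred (e : ℕ) (he : 1 ≤ e) : w (e - 1) = 2 * w e := by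
  obtain ⟨e', rfl⟩ : ∃ e', e = e' + 1 := ⟨e - 1, by omega⟩
  simp [w_succ_half]; ring

theorem w_le_one (e : ℕ) : w e ≤ 1 := by
  rw [w, ← w_zero, w]
  apply inv_anti₀
  · norm_num
  · exact_mod_cast Nat.one_le_two_pow

theorem w_anti {a b : ℕ} (h : a ≤ b) : w b ≤ w a := by
  rw [w, w]
  apply inv_anti₀
  · positivity
  · exact pow_le_pow_right₀ (by norm_num) h

/-- key pointwise bound:  if `m + 1 ≤ c * 2^e` then `w e ≤ c / (m+1)`. -/
theorem w_le_div {m e : ℕ} {c : ℝ} (hc : 0 < c) (h : (m:ℝ) + 1 ≤ c * 2^e) :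
    w e ≤ c / ((m:ℝ) + 1) := by
  rw [w, le_div_iff₀ (by positivity)]
  rw [inv_mul_eq_div, div_le_iff₀ (by positivity)]
  linarith

noncomputable def esum {α : Type*} (l : List (α × ℕ)) : ℝ := (l.map fun x => w x.2).sum

theorem esum_nil {α : Type*} : esum ([] : List (α × ℕ)) = 0 := rfl

theorem esum_cons {α : Type*} (x : α × ℕ) (l : List (α × ℕ)) :
    esum (x :: l) = w x.2 + esum l := by simp [esum]

theorem esum_append {α : Type*} (l₁ l₂ : List (α × ℕ)) :
    esum (l₁ ++ l₂) = esum l₁ + esum l₂ := by simp [esum]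

theorem esum_nonneg {α : Type*} (l : List (α × ℕ)) : 0 ≤ esum l := by
  apply List.sum_nonneg; intro x hx
  simp only [List.mem_map] at hx
  obtain ⟨y, _, rfl⟩ := hx
  exact w_nonneg _

theorem esum_perm {α : Type*} {l₁ l₂ : List (α × ℕ)} (h : l₁.Perm l₂) :
    esum l₁ = esum l₂ := (h.map _).sum_eq

theorem esum_mem_le {α : Type*} {l : List (α × ℕ)} {x : α × ℕ} (hx : x ∈ l) :
    w x.2 ≤ esum l := by
  apply List.single_le_sum
  · intro y hy
    simp only [List.mem_map] at hy
    obtain ⟨z, _, rfl⟩ := hy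
    exact w_nonneg _
  · exact List.mem_map_of_mem hx
def weave {n : ℕ} (A B : ℕ → Option (Fin n)) : ℕ → Option (Fin n) :=
  fun t => if t % 2 = 0 then A (t / 2) else B (t / 2)

def tau3 {n : ℕ} (A B : ℕ → Option (Fin n)) : ℕ → Option (Fin n) :=
  fun t => if t % 3 = 0 then A (t / 3) else B ((2 * t) / 3)

def mod3 {n : ℕ} (A B C : ℕ → Option (Fin n)) : ℕ → Option (Fin n) :=
  fun t => if t % 3 = 0 then A (t / 3) else if t % 3 = 1 then B (t / 3) else C (t / 3)

theorem win_direct {n : ℕ} {σ : ℕ → Option (Fin n)} {i : Fin n} {q o m : ℕ}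
    (hE : Exact σ i q o) (ho : o < q) (hm : q ≤ m) : Win σ i m := by
  intro t
  obtain ⟨y, h1, h2⟩ := hit q o t m (by omega) hm ho
  exact ⟨o + y * q, h1, h2, hE y⟩

theorem exact_weave_A {n : ℕ} {A B : ℕ → Option (Fin n)} {i : Fin n} {q o : ℕ}
    (hE : Exact A i q o) : Exact (weave A B) i (2 * q) (2 * o) := by
  intro k
  have hpr : k * (2 * q) = 2 * (k * q) := by ring
  rw [hpr, show 2 * o + 2 * (k * q) = 2 * (o + k * q) by ring]
  simp only [weave]
  rw [if_pos (by omega), show 2 * (o + k * q) / 2 = o + k * q by omega]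
  exact hE k

theorem exact_weave_B {n : ℕ} {A B : ℕ → Option (Fin n)} {i : Fin n} {q o : ℕ}
    (hE : Exact B i q o) : Exact (weave A B) i (2 * q) (2 * o + 1) := by
  intro k
  have hpr : k * (2 * q) = 2 * (k * q) := by ring
  rw [hpr, show 2 * o + 1 + 2 * (k * q) = 2 * (o + k * q) + 1 by ring]
  simp only [weave]
  rw [if_neg (by omega), show (2 * (o + k * q) + 1) / 2 = o + k * q by omega]
  exact hE k

theorem win_mod3 {n : ℕ} {A B C : ℕ → Option (Fin n)} {i : Fin n} {q o m r : ℕ}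
    (hr : r < 3)
    (hE : Exact (if r = 0 then A else if r = 1 then B else C) i q o) (ho : o < q)
    (hm : 3 * q ≤ m) : Win (mod3 A B C) i m := by
  intro t
  obtain ⟨y, h1, h2⟩ := hit (3 * q) (3 * o + r) t m (by omega) hm (by omega)
  refine ⟨3 * o + r + y * (3 * q), h1, h2, ?_⟩
  rw [show y * (3 * q) = 3 * (y * q) by ring,
    show 3 * o + r + 3 * (y * q) = 3 * (o + y * q) + r by ring]
  have hEy := hE y
  generalize hz : o + y * q = z at hEy ⊢
  have hmod : (3 * z + r) % 3 = r := by omega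
  have hdiv : (3 * z + r) / 3 = z := by omega
  interval_cases r <;> simp only [mod3, hmod, hdiv] <;> simp_all

theorem win_tau3_A {n : ℕ} {A B : ℕ → Option (Fin n)} {i : Fin n} {q o m : ℕ}
    (hE : Exact A i q o) (ho : o < q) (hm : 3 * q ≤ m) : Win (tau3 A B) i m := by
  intro t
  obtain ⟨y, h1, h2⟩ := hit (3 * q) (3 * o) t m (by omega) hm (by omega)
  refine ⟨3 * o + y * (3 * q), h1, h2, ?_⟩
  rw [show 3 * o + y * (3 * q) = 3 * (o + y * q) by ring]
  have hEy := hE y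
  generalize hz : o + y * q = z at hEy ⊢
  simp only [tau3]
  rw [if_pos (by omega), show 3 * z / 3 = z by omega]
  exact hEy

theorem win_tau3_B {n : ℕ} {A B : ℕ → Option (Fin n)} {i : Fin n} {q o m : ℕ}
    (hE : Exact B i q o) (ho : o < q) (hq2 : q % 2 = 0) (hq : 0 < q)
    (hm : 3 * (q / 2) ≤ m) : Win (tau3 A B) i m := by
  intro t
  obtain ⟨y, h1, h2⟩ := hit (3 * (q / 2)) (3 * (o / 2) + 1 + o % 2) t m (by omega) hm (by omega)
  refine ⟨3 * (o / 2) + 1 + o % 2 + y * (3 * (q / 2)), h1, h2, ?_⟩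
  have hqq : q / 2 * 2 = q := Nat.div_mul_cancel (by omega)
  have P1 : y * (3 * (q / 2)) = 3 * (y * (q / 2)) := by ring
  have P2 : y * q = y * (q / 2) * 2 := by
    calc y * q = y * (q / 2 * 2) := by rw [hqq]
    _ = y * (q / 2) * 2 := by ring
  have h : 3 * (o / 2) + 1 + o % 2 + y * (3 * (q / 2))
      = 3 * ((o + y * q) / 2) + 1 + (o + y * q) % 2 := by omega
  rw [h]
  have hEy := hE y
  generalize hz : o + y * q = z at hEy ⊢
  simp only [tau3]
  rw [if_neg (by omega), show 2 * (3 * (z / 2) + 1 + z % 2) / 3 = z by omega]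
  exact hEy

theorem win_weave_E {n : ℕ} {E M T : ℕ → Option (Fin n)} {i : Fin n} {q o m : ℕ}
    (hE : Exact E i q o) (ho : o < q) (hm : 2 * q ≤ m) :
    Win (weave E (tau3 M T)) i m :=
  win_direct (exact_weave_A hE) (by omega) hm

theorem win_weave_M0 {n : ℕ} {E M T : ℕ → Option (Fin n)} {i : Fin n} {q o m : ℕ}
    (hE : Exact M i q o) (ho : o < q) (hm : 6 * q ≤ m) :
    Win (weave E (tau3 M T)) i m := by
  intro t
  obtain ⟨y, h1, h2⟩ := hit (6 * q) (6 * o + 1) t m (by omega) hm (by omega)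
  refine ⟨6 * o + 1 + y * (6 * q), h1, h2, ?_⟩
  rw [show 6 * o + 1 + y * (6 * q) = 6 * (o + y * q) + 1 by ring]
  have hEy := hE y
  generalize hz : o + y * q = z at hEy ⊢
  simp only [weave]
  rw [if_neg (by omega), show (6 * z + 1) / 2 = 3 * z by omega]
  simp only [tau3]
  rw [if_pos (by omega), show 3 * z / 3 = z by omega]
  exact hEy

theorem win_weave_T {n : ℕ} {E M T : ℕ → Option (Fin n)} {i : Fin n} {q o m : ℕ}
    (hE : Exact T i q o) (ho : o < q) (hq2 : q % 2 = 0)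
    (hm : 3 * q ≤ m) : Win (weave E (tau3 M T)) i m := by
  intro t
  obtain ⟨y, h1, h2⟩ := hit (3 * q) (3 * o + 3 - o % 2) t m (by omega) hm (by omega)
  refine ⟨3 * o + 3 - o % 2 + y * (3 * q), h1, h2, ?_⟩
  have hp : (y * q) % 2 = 0 := by rw [Nat.mul_mod, hq2]; simp
  have P1 : y * (3 * q) = 3 * (y * q) := by ring
  have h : 3 * o + 3 - o % 2 + y * (3 * q)
      = 3 * (o + y * q) + 3 - (o + y * q) % 2 := by omega
  rw [h]
  have hEy := hE y
  generalize hz : o + y * q = z at hEy ⊢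
  have hA : (3 * z + 3 - z % 2) % 2 = 1 := by omega
  simp only [weave]
  rw [if_neg (by omega)]
  simp only [tau3]
  rw [if_neg (by omega), show 2 * ((3 * z + 3 - z % 2) / 2) / 3 = z by omega]
  exact hEy

theorem win_weave_T0 {n : ℕ} {E M T : ℕ → Option (Fin n)} {i : Fin n} {m : ℕ}
    (hE : Exact T i 1 0) (hm : 4 ≤ m) : Win (weave E (tau3 M T)) i m := by
  intro t
  set s := t + (if t % 6 ≤ 3 then 3 - t % 6 else 5 - t % 6) with hs
  have hsform : s % 2 = 1 ∧ (s / 2) % 3 ≠ 0 ∧ t ≤ s ∧ s < t + 4 := by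
    rw [hs]; split <;> omega
  obtain ⟨hA, hB, hC, hD⟩ := hsform
  refine ⟨s, hC, by omega, ?_⟩
  simp only [weave]
  rw [if_neg (by omega)]
  simp only [tau3]
  rw [if_neg hB]
  have := hE ((2 * (s / 2)) / 3)
  simpa using this


/-! ### dyadic split lemma -/

theorem w_shift {g e : ℕ} (h : g ≤ e) : w g = (2:ℝ)^(e-g) * w e := by
  rw [w, w]
  have h2 : (2:ℝ)^e = 2^(e-g) * 2^g := by rw [← pow_add]; congr 1; omega
  rw [h2, mul_inv, ← mul_assoc, mul_inv_cancel₀ (by positivity), one_mul]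

theorem splitAux {α : Type*} : ∀ (l : List (α × ℕ)),
    ((l.map Prod.snd).Pairwise (· ≤ ·)) → ∀ (g A : ℕ), (∀ x ∈ l, g ≤ x.2) →
    (A : ℝ) * w g ≤ esum l →
    ∃ l1 l2, l = l1 ++ l2 ∧ esum l1 = (A : ℝ) * w g := by
  intro l
  induction l with
  | nil =>
    intro _ g A _ hsum
    refine ⟨[], [], rfl, ?_⟩
    rw [esum_nil] at *
    have hA : (A : ℝ) = 0 := by
      rcases Nat.eq_zero_or_pos A with h | h
      · simp [h]
      · exfalso
        have : (0:ℝ) < (A:ℝ) * w g := by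
          apply mul_pos _ (w_pos g); exact_mod_cast h
        linarith
    rw [hA]; ring
  | cons x rest ih =>
    intro hs g A hg hsum
    rcases Nat.eq_zero_or_pos A with hA | hA
    · exact ⟨[], x :: rest, rfl, by simp [hA, esum_nil]⟩
    rw [List.map_cons] at hs
    have hsc := List.pairwise_cons.mp hs
    have hge : g ≤ x.2 := hg x (by simp)
    set A' := A * 2^(x.2 - g) with hA'
    have hwconv : (A : ℝ) * w g = (A' : ℝ) * w x.2 := by
      rw [w_shift hge, hA']
      push_cast
      ring
    have hA'pos : 1 ≤ A' := by
      rw [hA']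
      have := Nat.one_le_two_pow (n := x.2 - g)
      calc 1 = 1 * 1 := by ring
      _ ≤ A * 2^(x.2-g) := Nat.mul_le_mul hA this
    have hsum' : ((A' - 1 : ℕ) : ℝ) * w x.2 ≤ esum rest := by
      rw [esum_cons] at hsum
      rw [hwconv] at hsum
      push_cast [Nat.cast_sub hA'pos]
      nlinarith [w_pos x.2]
    have hrest_ge : ∀ y ∈ rest, x.2 ≤ y.2 := by
      intro y hy
      exact hsc.1 y.2 (List.mem_map_of_mem hy)
    obtain ⟨r1, r2, heq, hsum1⟩ := ih hsc.2 x.2 (A' - 1) hrest_ge hsum'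
    refine ⟨x :: r1, r2, by rw [heq]; rfl, ?_⟩
    rw [esum_cons, hsum1, hwconv]
    push_cast [Nat.cast_sub hA'pos]
    ring

theorem splitPrefix {α : Type*} (l : List (α × ℕ))
    (hs : (l.map Prod.snd).Pairwise (· ≤ ·)) (g : ℕ) (hg : ∀ x ∈ l, g ≤ x.2)
    (hsum : w g ≤ esum l) :
    ∃ l1 l2, l = l1 ++ l2 ∧ esum l1 = w g := by
  obtain ⟨l1, l2, h1, h2⟩ := splitAux l hs g 1 hg (by simpa using hsum)
  exact ⟨l1, l2, h1, by simpa using h2⟩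

/-! ### the dyadic scheduler -/

def mes {α : Type*} (l : List (α × ℕ)) : ℕ := (l.map fun x => x.2 + 1).sum

theorem mes_append {α : Type*} (l₁ l₂ : List (α × ℕ)) :
    mes (l₁ ++ l₂) = mes l₁ + mes l₂ := by simp [mes]

theorem length_le_mes {α : Type*} (l : List (α × ℕ)) : l.length ≤ mes l := by
  induction l with
  | nil => simp [mes]
  | cons x rest ih => simp only [mes, List.map_cons, List.sum_cons, List.length_cons] at *; omega

theorem mes_dec {α : Type*} (l : List (α × ℕ)) (h : ∀ z ∈ l, 1 ≤ z.2) :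
    mes (l.map fun z => (z.1, z.2 - 1)) + l.length = mes l := by
  induction l with
  | nil => simp [mes]
  | cons x rest ih =>
    have hx := h x (by simp)
    have ih' := ih (fun z hz => h z (by simp [hz]))
    simp only [List.map_cons, mes, List.sum_cons, List.length_cons] at *
    omega

theorem esum_dec {α : Type*} (l : List (α × ℕ)) (h : ∀ z ∈ l, 1 ≤ z.2) :
    esum (l.map fun z => (z.1, z.2 - 1)) = 2 * esum l := by
  induction l with
  | nil => simp [esum_nil]
  | cons x rest ih =>
    simp only [List.map_cons]
    rw [esum_cons, esum_cons, ih (fun z hz => h z (by simp [hz]))]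
    have : w (x.2 - 1) = 2 * w x.2 := w_pred _ (h x (by simp))
    simp only [this]; ring

theorem pow_pred (e : ℕ) (he : 1 ≤ e) : 2^e = 2 * 2^(e-1) := by
  obtain ⟨e', rfl⟩ : ∃ e', e = e' + 1 := ⟨e - 1, by omega⟩
  simp [pow_succ]; ring

theorem dyAux {n : ℕ} : ∀ (N : ℕ) (l : List (Fin n × ℕ)),
    mes l ≤ N →
    ((l.map Prod.snd).Pairwise (· ≤ ·)) → esum l ≤ 1 →
    ∃ σ : ℕ → Option (Fin n), ∀ x ∈ l, ∃ o, o < 2 ^ x.2 ∧ Exact σ x.1 (2 ^ x.2) o := by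
  intro N
  induction N with
  | zero =>
    intro l hm _ _
    match l with
    | [] => exact ⟨fun _ => none, by simp⟩
    | x :: rest =>
      exfalso
      have h1 : 1 ≤ mes (x :: rest) := le_trans (by simp) (length_le_mes _)
      omega
  | succ N ih =>
    intro l hm hs hsum
    match l with
    | [] => exact ⟨fun _ => none, by simp⟩
    | x :: rest =>
      rw [List.map_cons] at hs
      have hsc := List.pairwise_cons.mp hs
      by_cases he0 : x.2 = 0
      · -- singleton
        match rest with
        | [] =>
          refine ⟨fun _ => some x.1, ?_⟩
          intro z hz
          simp only [List.mem_singleton] at hz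
          subst hz
          exact ⟨0, by positivity, fun k => rfl⟩
        | y :: rest' =>
          exfalso
          rw [esum_cons, esum_cons, he0, w_zero] at hsum
          have := w_pos y.2
          have := esum_nonneg rest'
          linarith
      · have hall : ∀ z ∈ x :: rest, 1 ≤ z.2 := by
          intro z hz
          rcases List.mem_cons.mp hz with h | h
          · subst h; omega
          · have := hsc.1 z.2 (List.mem_map_of_mem h); omega
        have hsorted_dec : ∀ (l' : List (Fin n × ℕ)),
            ((l'.map Prod.snd).Pairwise (· ≤ ·)) →
            (((l'.map fun z => (z.1, z.2 - 1)).map Prod.snd).Pairwise (· ≤ ·)) := by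
          intro l' h
          rw [List.map_map]
          have : (Prod.snd ∘ fun z : Fin n × ℕ => (z.1, z.2 - 1)) = (fun z => z.2 - 1) := rfl
          rw [this]
          have h2 : (l'.map fun z : Fin n × ℕ => z.2 - 1) = (l'.map Prod.snd).map (· - 1) := by
            rw [List.map_map]; rfl
          rw [h2]
          exact List.Pairwise.map _ (fun h => by omega) h
        by_cases hhalf : esum (x :: rest) ≤ 1/2
        · -- all on one machine, halved
          have hm' : mes ((x :: rest).map fun z => (z.1, z.2 - 1)) ≤ N := by
            have hmd := mes_dec (x :: rest) hall
            have hlen : 1 ≤ (x :: rest).length := by simp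
            omega
          have hsum' : esum ((x :: rest).map fun z => (z.1, z.2 - 1)) ≤ 1 := by
            rw [esum_dec _ hall]; linarith
          have hs' : (((x :: rest).map fun z => (z.1, z.2 - 1)).map Prod.snd).Pairwise (· ≤ ·) := by
            apply hsorted_dec
            rw [List.map_cons]
            exact hs
          obtain ⟨σ', hσ'⟩ := ih _ hm' hs' hsum'
          refine ⟨weave σ' (fun _ => none), ?_⟩
          intro z hz
          obtain ⟨o, ho, hE⟩ := hσ' (z.1, z.2 - 1) (List.mem_map_of_mem hz)
          have ho' : o < 2 ^ (z.2 - 1) := ho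
          have hE' : Exact σ' z.1 (2 ^ (z.2 - 1)) o := hE
          refine ⟨2 * o, ?_, ?_⟩
          · have := pow_pred z.2 (hall z hz)
            omega
          · rw [pow_pred z.2 (hall z hz)]
            exact exact_weave_A hE' 
        · -- split into two halves
          obtain ⟨l1, l2, heq, hsum1⟩ := splitPrefix (x :: rest) (by rw [List.map_cons]; exact hs) 1
            (hall) (by rw [w]; push_cast; norm_num; linarith)
          have hl1ne : l1 ≠ [] := by
            intro h
            rw [h, esum_nil] at hsum1
            rw [w] at hsum1; norm_num at hsum1
          have hsall : (((l1 ++ l2).map Prod.snd).Pairwise (· ≤ ·)) := by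
            rw [← heq, List.map_cons]; exact hs
          rw [List.map_append] at hsall
          have hs1 : ((l1.map Prod.snd).Pairwise (· ≤ ·)) :=
            (List.pairwise_append.mp hsall).1
          have hs2 : ((l2.map Prod.snd).Pairwise (· ≤ ·)) :=
            (List.pairwise_append.mp hsall).2.1
          have hmes12 : mes l1 + mes l2 = mes (x :: rest) := by
            rw [heq, mes_append]
          have hall1 : ∀ z ∈ l1, 1 ≤ z.2 := fun z hz => hall z (by rw [heq]; exact List.mem_append_left _ hz)
          have hall2 : ∀ z ∈ l2, 1 ≤ z.2 := fun z hz => hall z (by rw [heq]; exact List.mem_append_right _ hz)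
          have hlen1 : 1 ≤ l1.length := by
            cases l1 with
            | nil => exact absurd rfl hl1ne
            | cons a b => simp
          have hm1 : mes (l1.map fun z => (z.1, z.2 - 1)) ≤ N := by
            have hmd := mes_dec l1 hall1
            have h2 : 0 ≤ mes l2 := Nat.zero_le _
            omega
          have hm2 : mes (l2.map fun z => (z.1, z.2 - 1)) ≤ N := by
            have hmd := mes_dec l2 hall2
            have := length_le_mes l2
            have h1 : 1 ≤ mes l1 := le_trans hlen1 (length_le_mes l1)
            omega
          have hes2 : esum l2 ≤ 1/2 := by
            have : esum (x :: rest) = esum l1 + esum l2 := by rw [heq, esum_append]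
            rw [hsum1] at this
            rw [w] at this; norm_num at this
            linarith
          have hsum1' : esum (l1.map fun z => (z.1, z.2 - 1)) ≤ 1 := by
            rw [esum_dec _ hall1, hsum1, w]; norm_num
          have hsum2' : esum (l2.map fun z => (z.1, z.2 - 1)) ≤ 1 := by
            rw [esum_dec _ hall2]; linarith
          obtain ⟨σ1, hσ1⟩ := ih _ hm1 (hsorted_dec _ hs1) hsum1'
          obtain ⟨σ2, hσ2⟩ := ih _ hm2 (hsorted_dec _ hs2) hsum2'
          refine ⟨weave σ1 σ2, ?_⟩
          intro z hz
          rw [heq] at hz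
          rcases List.mem_append.mp hz with h | h
          · obtain ⟨o, ho, hE⟩ := hσ1 (z.1, z.2 - 1) (List.mem_map_of_mem h)
            have ho' : o < 2 ^ (z.2 - 1) := ho
            have hE' : Exact σ1 z.1 (2 ^ (z.2 - 1)) o := hE
            refine ⟨2 * o, ?_, ?_⟩
            · have := pow_pred z.2 (hall1 z h)
              omega
            · rw [pow_pred z.2 (hall1 z h)]
              exact exact_weave_A hE'
          · obtain ⟨o, ho, hE⟩ := hσ2 (z.1, z.2 - 1) (List.mem_map_of_mem h)
            have ho' : o < 2 ^ (z.2 - 1) := ho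
            have hE' : Exact σ2 z.1 (2 ^ (z.2 - 1)) o := hE
            refine ⟨2 * o + 1, ?_, ?_⟩
            · have := pow_pred z.2 (hall2 z h)
              omega
            · rw [pow_pred z.2 (hall2 z h)]
              exact exact_weave_B hE' 

/-- the dyadic scheduler: any list of (job, exponent) pairs with total dyadic
weight at most 1 admits an exact periodic schedule. -/
theorem dy {n : ℕ} (l : List (Fin n × ℕ)) (hsum : esum l ≤ 1) :
    ∃ σ : ℕ → Option (Fin n), ∀ x ∈ l, ∃ o, o < 2 ^ x.2 ∧ Exact σ x.1 (2 ^ x.2) o := by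
  classical
  set r : (Fin n × ℕ) → (Fin n × ℕ) → Prop := fun a b => a.2 ≤ b.2 with hr
  haveI : DecidableRel r := fun a b => by rw [hr]; infer_instance
  haveI : IsTotal (Fin n × ℕ) r := ⟨fun a b => le_total a.2 b.2⟩
  haveI : IsTrans (Fin n × ℕ) r := ⟨fun a b c hab hbc => le_trans hab hbc⟩
  set l' := l.insertionSort r with hl'
  have hperm : l'.Perm l := List.perm_insertionSort r l
  have hsorted : (l'.map Prod.snd).Pairwise (· ≤ ·) := by
    have hs := List.pairwise_insertionSort r l
    rw [← hl'] at hs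
    exact List.pairwise_map.mpr hs
  obtain ⟨σ, hσ⟩ := dyAux (mes l') l' le_rfl hsorted (by rw [esum_perm hperm]; exact hsum)
  exact ⟨σ, fun x hx => hσ x (hperm.symm.subset hx)⟩

/-! ### O-machine packing -/

theorem esum_map_snd {α β : Type*} (l : List (α × ℕ)) (f : α × ℕ → β) :
    esum (l.map fun y => (f y, y.2)) = esum l := by
  simp only [esum, List.map_map]
  rfl

theorem esum_map_dec {α β : Type*} (l : List (α × ℕ)) (f : α × ℕ → β)
    (h : ∀ z ∈ l, 1 ≤ z.2) :
    esum (l.map fun y => (f y, y.2 - 1)) = 2 * esum l := by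
  induction l with
  | nil => simp [esum_nil]
  | cons x rest ih =>
    simp only [List.map_cons]
    rw [esum_cons, esum_cons, ih (fun z hz => h z (by simp [hz]))]
    have : w (x.2 - 1) = 2 * w x.2 := w_pred _ (h x (by simp))
    simp only [this]; ring

theorem olemma {α : Type*} (l : List (α × ℕ)) (hsum : esum l ≤ 3/2) :
    ∃ t0 m0 : List (α × ℕ),
      l.Perm (t0 ++ m0) ∧ esum t0 ≤ 1 ∧ esum m0 ≤ 1/2 ∧ ∀ y ∈ m0, 1 ≤ y.2 := by
  classical
  by_cases h1 : esum l ≤ 1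
  · exact ⟨l, [], by simp, h1, by simp [esum_nil], by simp⟩
  by_cases h0 : ∃ y ∈ l, y.2 = 0
  · obtain ⟨y, hy, hy0⟩ := h0
    obtain ⟨s, t, rfl⟩ := List.append_of_mem hy
    have hperm : (s ++ y :: t).Perm (y :: (s ++ t)) := List.perm_middle
    have hesum : esum (s ++ y :: t) = 1 + esum (s ++ t) := by
      rw [esum_perm hperm, esum_cons, hy0, w_zero]
    have hrest1 : ∀ z ∈ s ++ t, 1 ≤ z.2 := by
      intro z hz
      by_contra hc
      have hz0 : z.2 = 0 := by omega
      obtain ⟨s', t', heq⟩ := List.append_of_mem hz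
      have : esum (s ++ t) = 1 + esum (s' ++ t') := by
        rw [heq, esum_perm (List.perm_middle (a := z) (l₁ := s') (l₂ := t')),
          esum_cons, hz0, w_zero]
      have := esum_nonneg (s' ++ t')
      rw [hesum] at hsum
      linarith
    refine ⟨[y], s ++ t, by simpa using hperm, ?_, ?_, hrest1⟩
    · rw [esum_cons, esum_nil, hy0, w_zero]; norm_num
    · rw [hesum] at hsum; linarith
  · push_neg at h0
    set r : (α × ℕ) → (α × ℕ) → Prop := fun a b => a.2 ≤ b.2 with hr
    haveI : DecidableRel r := fun a b => by rw [hr]; infer_instance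
    haveI : IsTotal (α × ℕ) r := ⟨fun a b => le_total a.2 b.2⟩
    haveI : IsTrans (α × ℕ) r := ⟨fun a b c hab hbc => le_trans hab hbc⟩
    set ls := l.insertionSort r with hls
    have hperm : ls.Perm l := List.perm_insertionSort r l
    have hsorted : (ls.map Prod.snd).Pairwise (· ≤ ·) := by
      have hs := List.pairwise_insertionSort r l
      rw [← hls] at hs
      exact List.pairwise_map.mpr hs
    obtain ⟨l1, l2, heq, hsum1⟩ := splitPrefix ls hsorted 0 (fun x _ => Nat.zero_le _)
      (by rw [w_zero, esum_perm hperm]; linarith)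
    rw [w_zero] at hsum1
    have hesum2 : esum l2 = esum l - 1 := by
      have : esum ls = esum l1 + esum l2 := by rw [heq, esum_append]
      rw [esum_perm hperm] at this
      linarith
    refine ⟨l1, l2, by rw [← heq]; exact hperm.symm, le_of_eq hsum1, by linarith, ?_⟩
    intro y hy
    have hyl : y ∈ l := hperm.subset (by rw [heq]; exact List.mem_append_right _ hy)
    have := h0 y hyl
    omega

theorem two_pow_even {e : ℕ} (he : 1 ≤ e) : (2:ℕ)^e % 2 = 0 := by
  have := pow_pred e he
  omega

/-- The main mixed packing machine: E-items on even days (gap 2·2^e), O-items on odd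
days split into an exact mod-3 submachine and a 2-of-3 submachine (gap 3·2^e). -/
theorem gpack {n : ℕ} (EL OL : List ((Fin n × ℕ) × ℕ))
    (hEv : ∀ y ∈ EL, 2 * 2 ^ y.2 ≤ y.1.2)
    (hOv : ∀ y ∈ OL, 3 * 2 ^ y.2 ≤ y.1.2 ∧ 4 ≤ y.1.2)
    (hEs : esum EL ≤ 1) (hOs : esum OL ≤ 3 / 2) :
    ∃ σ : ℕ → Option (Fin n), ∀ y ∈ EL ++ OL, Win σ y.1.1 y.1.2 := by
  obtain ⟨t0, m0, hperm, ht0, hm0, hm0e⟩ := olemma OL hOs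
  obtain ⟨σE, hσE⟩ := dy (EL.map fun y => (y.1.1, y.2))
    (by rw [esum_map_snd]; exact hEs)
  obtain ⟨σT, hσT⟩ := dy (t0.map fun y => (y.1.1, y.2))
    (by rw [esum_map_snd]; exact ht0)
  obtain ⟨σM, hσM⟩ := dy (m0.map fun y => (y.1.1, y.2 - 1))
    (by rw [esum_map_dec _ _ hm0e]; linarith)
  refine ⟨weave σE (tau3 σM σT), ?_⟩
  intro y hy
  rcases List.mem_append.mp hy with hyE | hyO
  · obtain ⟨o, ho, hE⟩ := hσE (y.1.1, y.2) (List.mem_map_of_mem hyE)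
    have ho' : o < 2 ^ y.2 := ho
    have hE' : Exact σE y.1.1 (2 ^ y.2) o := hE
    exact win_weave_E hE' ho' (hEv y hyE)
  · have hOvy := hOv y hyO
    have hyO' : y ∈ t0 ++ m0 := hperm.subset hyO
    rcases List.mem_append.mp hyO' with hyT | hyM
    · obtain ⟨o, ho, hE⟩ := hσT (y.1.1, y.2) (List.mem_map_of_mem hyT)
      have ho' : o < 2 ^ y.2 := ho
      have hE' : Exact σT y.1.1 (2 ^ y.2) o := hE
      by_cases he : y.2 = 0
      · have ho0 : o = 0 := by rw [he] at ho'; simpa using ho'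
        rw [he] at hE'
        rw [ho0] at hE'
        exact win_weave_T0 (by simpa using hE') hOvy.2
      · exact win_weave_T hE' ho' (two_pow_even (by omega)) hOvy.1
    · obtain ⟨o, ho, hE⟩ := hσM (y.1.1, y.2 - 1) (List.mem_map_of_mem hyM)
      have ho' : o < 2 ^ (y.2 - 1) := ho
      have hE' : Exact σM y.1.1 (2 ^ (y.2 - 1)) o := hE
      apply win_weave_M0 hE' ho'
      have h1 := hm0e y hyM
      have h2 := pow_pred y.2 h1
      have h3 := hOvy.1
      omega

/-! ### weight-sum machinery for the main case analysis -/

noncomputable def ws {α : Type*} (l : List (α × ℕ)) : ℝ :=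
  (l.map fun x => ((x.2:ℝ)+1)⁻¹).sum

theorem ws_nonneg {α : Type*} (l : List (α × ℕ)) : 0 ≤ ws l := by
  apply List.sum_nonneg
  intro x hx
  simp only [List.mem_map] at hx
  obtain ⟨y, _, rfl⟩ := hx
  positivity

theorem ws_perm {α : Type*} {l₁ l₂ : List (α × ℕ)} (h : l₁.Perm l₂) : ws l₁ = ws l₂ :=
  (h.map _).sum_eq

theorem ws_append {α : Type*} (l₁ l₂ : List (α × ℕ)) :
    ws (l₁ ++ l₂) = ws l₁ + ws l₂ := by simp [ws]

theorem sum_map_mul_left' {α : Type*} (l : List α) (f : α → ℝ) (c : ℝ) :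
    (l.map fun x => c * f x).sum = c * (l.map f).sum := by
  induction l with
  | nil => simp
  | cons x rest ih => simp [ih]; ring

theorem esum_le_c_ws {α : Type*} (l : List (α × ℕ)) (f : α × ℕ → ℕ) (c : ℝ)
    (h : ∀ x ∈ l, w (f x) ≤ c * ((x.2:ℝ)+1)⁻¹) :
    esum (l.map fun x => (x, f x)) ≤ c * ws l := by
  have h1 : esum (l.map fun x => (x, f x)) = (l.map fun x => w (f x)).sum := by
    simp only [esum, List.map_map]
    rfl
  rw [h1, ws, ← sum_map_mul_left']
  exact List.sum_le_sum h

/-- basic facts about `k = log 2 m` for `4 ≤ m`. -/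
theorem log_facts {m : ℕ} (h4 : 4 ≤ m) :
    2 ≤ Nat.log 2 m ∧ 2 ^ Nat.log 2 m ≤ m ∧ m < 2 ^ (Nat.log 2 m + 1) := by
  have hm0 : m ≠ 0 := by omega
  refine ⟨?_, Nat.pow_log_le_self 2 hm0, Nat.lt_pow_succ_log_self (by norm_num) m⟩
  rw [Nat.le_log_iff_pow_le (by norm_num) hm0]
  simpa using h4

theorem bA {m : ℕ} (h4 : 4 ≤ m) (hA : 2*m < 3*2^(Nat.log 2 m)) :
    w (Nat.log 2 m - 1) ≤ 3 * ((m:ℝ)+1)⁻¹ := by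
  obtain ⟨hk, hle, hlt⟩ := log_facts h4
  have hp : 2^(Nat.log 2 m) = 2 * 2^(Nat.log 2 m - 1) := pow_pred _ (by omega)
  have hnat : m + 1 ≤ 3 * 2^(Nat.log 2 m - 1) := by omega
  rw [show (3:ℝ) * ((m:ℝ)+1)⁻¹ = 3 / ((m:ℝ)+1) by ring]
  apply w_le_div (by norm_num)
  have := (Nat.cast_le (α := ℝ)).mpr hnat
  push_cast at this
  linarith

theorem bB {m : ℕ} (h4 : 4 ≤ m) :
    w (Nat.log 2 m - 1) ≤ 4 * ((m:ℝ)+1)⁻¹ := by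
  obtain ⟨hk, hle, hlt⟩ := log_facts h4
  have hp : 2^(Nat.log 2 m) = 2 * 2^(Nat.log 2 m - 1) := pow_pred _ (by omega)
  have hp2 : 2^(Nat.log 2 m + 1) = 2 * 2^(Nat.log 2 m) := by rw [pow_succ]; ring
  have hnat : m + 1 ≤ 4 * 2^(Nat.log 2 m - 1) := by omega
  rw [show (4:ℝ) * ((m:ℝ)+1)⁻¹ = 4 / ((m:ℝ)+1) by ring]
  apply w_le_div (by norm_num)
  have := (Nat.cast_le (α := ℝ)).mpr hnat
  push_cast at this
  linarith

/-- main packing lemma for instances in which every window is at least 4. -/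
theorem caseG {n : ℕ} (l : List (Fin n × ℕ)) (h4 : ∀ x ∈ l, 4 ≤ x.2)
    (hW : ws l < 7/12) :
    ∃ σ : ℕ → Option (Fin n), ∀ x ∈ l, Win σ x.1 x.2 := by
  classical
  set pB : (Fin n × ℕ) → Bool := fun x => decide (3 * 2 ^ Nat.log 2 x.2 ≤ 2 * x.2) with hpB
  set B := l.filter pB with hB
  set A := l.filter (fun x => !pB x) with hA
  have hABperm : (B ++ A).Perm l := List.filter_append_perm pB l
  have hWsplit : ws B + ws A = ws l := by rw [← ws_append, ws_perm hABperm]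
  have hmemA : ∀ x ∈ A, x ∈ l ∧ 2 * x.2 < 3 * 2 ^ Nat.log 2 x.2 := by
    intro x hx
    rw [hA, List.mem_filter] at hx
    refine ⟨hx.1, ?_⟩
    have := hx.2
    simp only [hpB, Bool.not_eq_true', decide_eq_false_iff_not, not_le] at this
    omega
  have hmemB : ∀ x ∈ B, x ∈ l ∧ 3 * 2 ^ Nat.log 2 x.2 ≤ 2 * x.2 := by
    intro x hx
    rw [hB, List.mem_filter] at hx
    refine ⟨hx.1, ?_⟩
    have := hx.2
    simpa [hpB] using this
  -- internal-currency lists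
  set fe : (Fin n × ℕ) → ℕ := fun x => Nat.log 2 x.2 - 1 with hfe
  set AE := A.map fun x => (x, fe x) with hAE
  set BT := B.map fun x => (x, fe x) with hBT
  have hSA : esum AE ≤ 3 * ws A := by
    rw [hAE]
    apply esum_le_c_ws
    intro x hx
    exact bA (h4 x (hmemA x hx).1) (hmemA x hx).2
  have hSB : esum BT ≤ 4 * ws B := by
    rw [hBT]
    apply esum_le_c_ws
    intro x hx
    exact bB (h4 x (hmemB x hx).1)
  -- validity facts for any item of AE / BT
  have hvalE : ∀ y ∈ AE ++ BT, 2 * 2 ^ y.2 ≤ y.1.2 ∧ 4 ≤ y.1.2 ∧ 1 ≤ y.2 := by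
    intro y hy
    have hyl : ∃ x ∈ l, y = (x, fe x) := by
      rcases List.mem_append.mp hy with h | h
      · rw [hAE] at h
        obtain ⟨x, hx, rfl⟩ := List.mem_map.mp h
        exact ⟨x, (hmemA x hx).1, rfl⟩
      · rw [hBT] at h
        obtain ⟨x, hx, rfl⟩ := List.mem_map.mp h
        exact ⟨x, (hmemB x hx).1, rfl⟩
    obtain ⟨x, hxl, rfl⟩ := hyl
    obtain ⟨hk, hle, _⟩ := log_facts (h4 x hxl)
    have hp : 2^(Nat.log 2 x.2) = 2 * 2^(Nat.log 2 x.2 - 1) := pow_pred _ (by omega)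
    refine ⟨?_, h4 x hxl, ?_⟩
    · simp only [hfe]; omega
    · simp only [hfe]; omega
  have hvalOB : ∀ y ∈ BT, 3 * 2 ^ y.2 ≤ y.1.2 ∧ 4 ≤ y.1.2 := by
    intro y hy
    rw [hBT] at hy
    obtain ⟨x, hx, rfl⟩ := List.mem_map.mp hy
    obtain ⟨hxl, hxB⟩ := hmemB x hx
    obtain ⟨hk, hle, _⟩ := log_facts (h4 x hxl)
    have hp : 2^(Nat.log 2 x.2) = 2 * 2^(Nat.log 2 x.2 - 1) := pow_pred _ (by omega)
    refine ⟨?_, h4 x hxl⟩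
    simp only [hfe]
    omega
  have hvalOA2 : ∀ y ∈ AE, 3 * 2 ^ (y.2 - 1) ≤ y.1.2 ∧ 4 ≤ y.1.2 := by
    intro y hy
    rw [hAE] at hy
    obtain ⟨x, hx, rfl⟩ := List.mem_map.mp hy
    have hxl := (hmemA x hx).1
    obtain ⟨hk, hle, _⟩ := log_facts (h4 x hxl)
    have hp : 2^(Nat.log 2 x.2) = 2 * 2^(Nat.log 2 x.2 - 1) := pow_pred _ (by omega)
    have hp2 : 2^(Nat.log 2 x.2 - 1) = 2 * 2^(Nat.log 2 x.2 - 2) := pow_pred _ (by omega)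
    refine ⟨?_, h4 x hxl⟩
    simp only [hfe]
    rw [show Nat.log 2 x.2 - 1 - 1 = Nat.log 2 x.2 - 2 from by omega]
    omega
  -- coverage
  have hcov : ∀ x ∈ l, (x, fe x) ∈ AE ∨ (x, fe x) ∈ BT := by
    intro x hx
    by_cases h : pB x
    · right; rw [hBT]; exact List.mem_map_of_mem (by rw [hB, List.mem_filter]; exact ⟨hx, h⟩)
    · left; rw [hAE]; exact List.mem_map_of_mem (by
        rw [hA, List.mem_filter]
        exact ⟨hx, by simp [h]⟩)
  have hwsA : 0 ≤ ws A := ws_nonneg A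
  have hwsB : 0 ≤ ws B := ws_nonneg B
  have hesAE : 0 ≤ esum AE := esum_nonneg AE
  have hesBT : 0 ≤ esum BT := esum_nonneg BT
  by_cases hI : esum AE ≤ 1 ∧ esum BT ≤ 3/2
  · -- balanced case
    obtain ⟨σ, hσ⟩ := gpack AE BT (fun y hy => (hvalE y (List.mem_append_left _ hy)).1)
      hvalOB hI.1 hI.2
    refine ⟨σ, ?_⟩
    intro x hx
    rcases hcov x hx with h | h
    · exact hσ (x, fe x) (List.mem_append_left _ h)
    · exact hσ (x, fe x) (List.mem_append_right _ h)
  rw [not_and_or] at hI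
  rcases hI with hII | hIII
  · -- E overloaded : move a prefix of exactly 1 to E, rest of A to the O side
    push_neg at hII
    -- sort AE
    set r : ((Fin n × ℕ) × ℕ) → ((Fin n × ℕ) × ℕ) → Prop := fun a b => a.2 ≤ b.2 with hr
    haveI : DecidableRel r := fun a b => by rw [hr]; infer_instance
    haveI : IsTotal ((Fin n × ℕ) × ℕ) r := ⟨fun a b => le_total a.2 b.2⟩
    haveI : IsTrans ((Fin n × ℕ) × ℕ) r := ⟨fun a b c hab hbc => le_trans hab hbc⟩
    set AEs := AE.insertionSort r with hAEs
    have hperm : AEs.Perm AE := List.perm_insertionSort r AE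
    have hsorted : (AEs.map Prod.snd).Pairwise (· ≤ ·) := by
      have hs := List.pairwise_insertionSort r AE
      rw [← hAEs] at hs
      exact List.pairwise_map.mpr hs
    obtain ⟨A1, A2, heq, hsum1⟩ := splitPrefix AEs hsorted 0 (fun x _ => Nat.zero_le _)
      (by rw [w_zero, esum_perm hperm]; linarith)
    rw [w_zero] at hsum1
    have hesplit : esum A1 + esum A2 = esum AE := by
      rw [← esum_perm hperm, heq, esum_append]
    -- bound for O side
    have hSBlt : esum BT < 1 := by
      have h1 : 1 < 3 * ws A := lt_of_lt_of_le hII hSA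
      have h2 : ws B < 7/12 - ws A := by linarith
      have h3 : ws A > 1/3 := by linarith
      calc esum BT ≤ 4 * ws B := hSB
      _ < 4 * (7/12 - ws A) := by linarith
      _ < 1 := by linarith
    set OL := (A2.map fun y => (y.1, y.2 - 1)) ++ BT with hOL
    have hOLsum : esum OL ≤ 3/2 := by
      rw [hOL, esum_append]
      have hA2e : ∀ y ∈ A2, 1 ≤ y.2 := by
        intro y hy
        have : y ∈ AE := hperm.subset (by rw [heq]; exact List.mem_append_right _ hy)
        exact (hvalE y (List.mem_append_left _ this)).2.2
      rw [esum_map_dec _ _ hA2e]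
      have hA2sum : esum A2 = esum AE - 1 := by linarith
      have : 2 * esum AE + esum BT ≤ 7/2 := by
        calc 2 * esum AE + esum BT ≤ 6 * ws A + 4 * ws B := by linarith
        _ ≤ 6 * (ws A + ws B) := by linarith
        _ ≤ 7/2 := by linarith
      linarith
    have hOLval : ∀ y ∈ OL, 3 * 2 ^ y.2 ≤ y.1.2 ∧ 4 ≤ y.1.2 := by
      intro y hy
      rw [hOL] at hy
      rcases List.mem_append.mp hy with h | h
      · obtain ⟨z, hz, rfl⟩ := List.mem_map.mp h
        have hzAE : z ∈ AE := hperm.subset (by rw [heq]; exact List.mem_append_right _ hz)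
        exact hvalOA2 z hzAE
      · exact hvalOB y h
    have hELval : ∀ y ∈ A1, 2 * 2 ^ y.2 ≤ y.1.2 := by
      intro y hy
      have : y ∈ AE := hperm.subset (by rw [heq]; exact List.mem_append_left _ hy)
      exact (hvalE y (List.mem_append_left _ this)).1
    obtain ⟨σ, hσ⟩ := gpack A1 OL hELval hOLval (le_of_eq hsum1) hOLsum
    refine ⟨σ, ?_⟩
    intro x hx
    rcases hcov x hx with h | h
    · have hxAEs : (x, fe x) ∈ AEs := hperm.symm.subset h
      rw [heq] at hxAEs
      rcases List.mem_append.mp hxAEs with h1 | h2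
      · exact hσ (x, fe x) (List.mem_append_left _ h1)
      · have : ((x, fe x).1, (x, fe x).2 - 1) ∈ OL := by
          rw [hOL]
          exact List.mem_append_left _ (List.mem_map_of_mem h2)
        exact hσ _ (List.mem_append_right _ this)
    · exact hσ (x, fe x) (List.mem_append_right _ (by rw [hOL]; exact List.mem_append_right _ h))
  · -- O overloaded : keep exactly 3/2 on the O side, move the rest of B to E
    push_neg at hIII
    have hSAlt : esum AE ≤ 1 := by
      have h1 : 3/2 < 4 * ws B := lt_of_lt_of_le hIII hSB
      have h2 : ws A < 7/12 - ws B := by linarith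
      calc esum AE ≤ 3 * ws A := hSA
      _ ≤ 3 * (7/12 - ws B) := by linarith
      _ ≤ 1 := by linarith
    set r : ((Fin n × ℕ) × ℕ) → ((Fin n × ℕ) × ℕ) → Prop := fun a b => a.2 ≤ b.2 with hr
    haveI : DecidableRel r := fun a b => by rw [hr]; infer_instance
    haveI : IsTotal ((Fin n × ℕ) × ℕ) r := ⟨fun a b => le_total a.2 b.2⟩
    haveI : IsTrans ((Fin n × ℕ) × ℕ) r := ⟨fun a b c hab hbc => le_trans hab hbc⟩
    set BTs := BT.insertionSort r with hBTs
    have hperm : BTs.Perm BT := List.perm_insertionSort r BT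
    have hsorted : (BTs.map Prod.snd).Pairwise (· ≤ ·) := by
      have hs := List.pairwise_insertionSort r BT
      rw [← hBTs] at hs
      exact List.pairwise_map.mpr hs
    obtain ⟨B1, B2, heq, hsum1⟩ := splitPrefix BTs hsorted 0 (fun x _ => Nat.zero_le _)
      (by rw [w_zero, esum_perm hperm]; linarith)
    rw [w_zero] at hsum1
    have hesplit : esum B1 + esum B2 = esum BT := by
      rw [← esum_perm hperm, heq, esum_append]
    have hsorted2 : (B2.map Prod.snd).Pairwise (· ≤ ·) := by
      have : ((B1 ++ B2).map Prod.snd).Pairwise (· ≤ ·) := by rw [← heq]; exact hsorted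
      rw [List.map_append] at this
      exact (List.pairwise_append.mp this).2.1
    have hB2ge : ∀ y ∈ B2, 1 ≤ y.2 := by
      intro y hy
      have hyBT : y ∈ BT := hperm.subset (by rw [heq]; exact List.mem_append_right _ hy)
      exact (hvalE y (List.mem_append_right _ hyBT)).2.2
    obtain ⟨B3, B4, heq2, hsum2⟩ := splitPrefix B2 hsorted2 1 hB2ge
      (by
        have : w 1 = 1/2 := by rw [w]; norm_num
        rw [this]; linarith)
    have hw1 : w 1 = 1/2 := by rw [w]; norm_num
    rw [hw1] at hsum2
    have hesplit2 : esum B3 + esum B4 = esum B2 := by rw [heq2, esum_append]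
    set OL := B1 ++ B3 with hOL
    set EL := AE ++ B4 with hEL
    have hOLsum : esum OL ≤ 3/2 := by rw [hOL, esum_append]; linarith
    have hELsum : esum EL ≤ 1 := by
      rw [hEL, esum_append]
      have hB4 : esum B4 = esum BT - 1 - 1/2 := by linarith
      have : esum AE + esum BT ≤ 5/2 := by
        calc esum AE + esum BT ≤ 3 * ws A + 4 * ws B := by linarith
        _ ≤ 4 * (ws A + ws B) := by linarith
        _ ≤ 5/2 := by linarith
      linarith
    have hB2sub : ∀ y ∈ B2, y ∈ BT := fun y hy =>
      hperm.subset (by rw [heq]; exact List.mem_append_right _ hy)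
    have hELval : ∀ y ∈ EL, 2 * 2 ^ y.2 ≤ y.1.2 := by
      intro y hy
      rw [hEL] at hy
      rcases List.mem_append.mp hy with h | h
      · exact (hvalE y (List.mem_append_left _ h)).1
      · have : y ∈ BT := hB2sub y (by rw [heq2]; exact List.mem_append_right _ h)
        exact (hvalE y (List.mem_append_right _ this)).1
    have hOLval : ∀ y ∈ OL, 3 * 2 ^ y.2 ≤ y.1.2 ∧ 4 ≤ y.1.2 := by
      intro y hy
      rw [hOL] at hy
      rcases List.mem_append.mp hy with h | h
      · exact hvalOB y (hperm.subset (by rw [heq]; exact List.mem_append_left _ h))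
      · exact hvalOB y (hB2sub y (by rw [heq2]; exact List.mem_append_left _ h))
    obtain ⟨σ, hσ⟩ := gpack EL OL hELval hOLval hELsum hOLsum
    refine ⟨σ, ?_⟩
    intro x hx
    rcases hcov x hx with h | h
    · exact hσ (x, fe x) (List.mem_append_left _ (by rw [hEL]; exact List.mem_append_left _ h))
    · have hxBTs : (x, fe x) ∈ BTs := hperm.symm.subset h
      rw [heq] at hxBTs
      rcases List.mem_append.mp hxBTs with h1 | h2
      · exact hσ (x, fe x) (List.mem_append_right _ (by rw [hOL]; exact List.mem_append_left _ h1))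
      · rw [heq2] at h2
        rcases List.mem_append.mp h2 with h3 | h4
        · exact hσ (x, fe x)
            (List.mem_append_right _ (by rw [hOL]; exact List.mem_append_right _ h3))
        · exact hσ (x, fe x)
            (List.mem_append_left _ (by rw [hEL]; exact List.mem_append_right _ h4))

theorem ws_cons {α : Type*} (x : α × ℕ) (l : List (α × ℕ)) :
    ws (x :: l) = ((x.2:ℝ)+1)⁻¹ + ws l := by simp [ws]

theorem ws_mem_le {α : Type*} {l : List (α × ℕ)} {x : α × ℕ} (hx : x ∈ l) :
    ((x.2:ℝ)+1)⁻¹ ≤ ws l := by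
  apply List.single_le_sum
  · intro y hy
    simp only [List.mem_map] at hy
    obtain ⟨z, _, rfl⟩ := hy
    positivity
  · exact List.mem_map_of_mem hx

theorem inv_succ_ge {a c : ℕ} (h : a ≤ c) : ((c:ℝ)+1)⁻¹ ≤ ((a:ℝ)+1)⁻¹ := by
  apply inv_anti₀ (by positivity)
  have : (a:ℝ) ≤ (c:ℝ) := by exact_mod_cast h
  linarith

theorem esum_le_c_ws' {α β : Type*} (l : List (α × ℕ)) (g : α × ℕ → β) (f : α × ℕ → ℕ)
    (c : ℝ) (h : ∀ x ∈ l, w (f x) ≤ c * ((x.2:ℝ)+1)⁻¹) :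
    esum (l.map fun x => (g x, f x)) ≤ c * ws l := by
  have h1 : esum (l.map fun x => (g x, f x)) = (l.map fun x => w (f x)).sum := by
    simp only [esum, List.map_map]
    rfl
  rw [h1, ws, ← sum_map_mul_left']
  exact List.sum_le_sum h

theorem bD {m : ℕ} (h4 : 4 ≤ m) : w (Nat.log 2 m) ≤ 2 * ((m:ℝ)+1)⁻¹ := by
  obtain ⟨hk, hle, hlt⟩ := log_facts h4
  have hp2 : 2^(Nat.log 2 m + 1) = 2 * 2^(Nat.log 2 m) := by rw [pow_succ]; ring
  have hnat : m + 1 ≤ 2 * 2^(Nat.log 2 m) := by omega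
  rw [show (2:ℝ) * ((m:ℝ)+1)⁻¹ = 2 / ((m:ℝ)+1) by ring]
  apply w_le_div (by norm_num)
  have := (Nat.cast_le (α := ℝ)).mpr hnat
  push_cast at this
  linarith

theorem div3_bound {m : ℕ} (h3 : 3 ≤ m) :
    (m:ℝ) + 1 ≤ 6 * 2 ^ (Nat.log 2 (m / 3)) := by
  have hm3 : 1 ≤ m / 3 := by omega
  have hlt : m / 3 < 2 ^ (Nat.log 2 (m / 3) + 1) :=
    Nat.lt_pow_succ_log_self (by norm_num) _
  have hp2 : (2:ℕ)^(Nat.log 2 (m/3) + 1) = 2 * 2^(Nat.log 2 (m/3)) := by rw [pow_succ]; ring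
  have hnat : m + 1 ≤ 6 * 2^(Nat.log 2 (m/3)) := by omega
  have := (Nat.cast_le (α := ℝ)).mpr hnat
  push_cast at this
  linarith

theorem bC3 {m : ℕ} (h3 : 3 ≤ m) : w (Nat.log 2 (m / 3)) ≤ 6 * ((m:ℝ)+1)⁻¹ := by
  rw [show (6:ℝ) * ((m:ℝ)+1)⁻¹ = 6 / ((m:ℝ)+1) by ring]
  exact w_le_div (by norm_num) (div3_bound h3)

theorem bC4 {m : ℕ} (h3 : 3 ≤ m) : w (Nat.log 2 (m / 3) + 1) ≤ 3 * ((m:ℝ)+1)⁻¹ := by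
  rw [show (3:ℝ) * ((m:ℝ)+1)⁻¹ = 3 / ((m:ℝ)+1) by ring]
  apply w_le_div (by norm_num)
  have := div3_bound h3
  rw [pow_succ]
  linarith

theorem pow_le_of_log3 {m : ℕ} (h3 : 3 ≤ m) : 3 * 2 ^ Nat.log 2 (m / 3) ≤ m := by
  have hm3 : 1 ≤ m / 3 := by omega
  have hle : 2 ^ (Nat.log 2 (m / 3)) ≤ m / 3 := Nat.pow_log_le_self 2 (by omega)
  omega

/-- The scheduling theorem: any collection of windows `m i ≥ 2` with
`∑ 1/(m i + 1) < 7/12` admits a pinwheel schedule. -/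
theorem scheduleN {n : ℕ} (l : List (Fin n × ℕ)) (hge : ∀ x ∈ l, 2 ≤ x.2)
    (hW : ws l < 7/12) :
    ∃ σ : ℕ → Option (Fin n), ∀ x ∈ l, Win σ x.1 x.2 := by
  classical
  by_cases hc2 : ∃ x ∈ l, x.2 = 2
  · -- a window of length 2 : it goes on the even days, everything else is ≥ 4
    obtain ⟨x, hxl, hx2⟩ := hc2
    obtain ⟨s, t, rfl⟩ := List.append_of_mem hxl
    have hperm : (s ++ x :: t).Perm (x :: (s ++ t)) := List.perm_middle
    have hws : ws (s ++ x :: t) = 1/3 + ws (s ++ t) := by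
      rw [ws_perm hperm, ws_cons, hx2]
      norm_num
    have hrest4 : ∀ y ∈ s ++ t, 4 ≤ y.2 := by
      intro y hy
      by_contra hc
      have hy3 : y.2 ≤ 3 := by omega
      have h1 : (1:ℝ)/4 ≤ ((y.2:ℝ)+1)⁻¹ := by
        have := inv_succ_ge hy3
        norm_num at this
        linarith
      have h2 := ws_mem_le hy
      rw [hws] at hW
      linarith
    set dl := (x.1, 1) :: (s ++ t).map (fun y => (y.1, Nat.log 2 y.2)) with hdl
    have hsum : esum dl ≤ 1 := by
      rw [hdl, esum_cons]
      have h1 : esum ((s ++ t).map fun y => (y.1, Nat.log 2 y.2)) ≤ 2 * ws (s ++ t) := by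
        have := esum_le_c_ws' (s ++ t) (fun y => y.1) (fun y => Nat.log 2 y.2) 2
          (fun y hy => bD (hrest4 y hy))
        simpa using this
      have hw1 : w 1 = 1/2 := by rw [w]; norm_num
      rw [hw1]
      rw [hws] at hW
      linarith
    obtain ⟨σ, hσ⟩ := dy dl hsum
    refine ⟨σ, ?_⟩
    intro z hz
    rcases List.mem_cons.mp (hperm.subset hz) with hz1 | hz2
    · subst hz1
      obtain ⟨o, ho, hE⟩ := hσ (z.1, 1) (by rw [hdl]; simp)
      have hE' : Exact σ z.1 2 o := by
        have : (2:ℕ)^(1:ℕ) = 2 := by norm_num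
        rw [← this]; exact hE
      exact win_direct hE' (by simpa using ho) (by omega)
    · obtain ⟨o, ho, hE⟩ := hσ (z.1, Nat.log 2 z.2)
        (by rw [hdl]; exact List.mem_cons_of_mem _ (List.mem_map_of_mem hz2))
      have ho' : o < 2 ^ Nat.log 2 z.2 := ho
      have hE' : Exact σ z.1 (2 ^ Nat.log 2 z.2) o := hE
      exact win_direct hE' ho' (Nat.pow_log_le_self 2 (by have := hrest4 z hz2; omega))
  · have hge3 : ∀ x ∈ l, 3 ≤ x.2 := by
      intro x hx
      have := hge x hx
      rcases Nat.lt_or_ge x.2 3 with h | h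
      · exfalso; exact hc2 ⟨x, hx, by omega⟩
      · exact h
    by_cases hc3 : ∃ x ∈ l, x.2 = 3
    · obtain ⟨x, hxl, hx3⟩ := hc3
      obtain ⟨s, t, rfl⟩ := List.append_of_mem hxl
      have hperm : (s ++ x :: t).Perm (x :: (s ++ t)) := List.perm_middle
      have hws : ws (s ++ x :: t) = 1/4 + ws (s ++ t) := by
        rw [ws_perm hperm, ws_cons, hx3]
        norm_num
      by_cases hc35 : ∃ y ∈ s ++ t, y.2 ≤ 5
      · -- two small jobs : residues 0,1 mod 3, the rest on residue 2
        obtain ⟨y, hyl, hy5⟩ := hc35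
        obtain ⟨u, v, huv⟩ := List.append_of_mem hyl
        have hperm2 : (s ++ t).Perm (y :: (u ++ v)) := by
          rw [huv]; exact List.perm_middle
        have hws2 : ws (s ++ t) = ((y.2:ℝ)+1)⁻¹ + ws (u ++ v) := by
          rw [ws_perm hperm2, ws_cons]
        have hy6 : (1:ℝ)/6 ≤ ((y.2:ℝ)+1)⁻¹ := by
          have := inv_succ_ge hy5
          norm_num at this
          linarith
        have hsub : ∀ z ∈ s ++ t, z ∈ s ++ x :: t := by
          intro z hz
          rcases List.mem_append.mp hz with h | h
          · exact List.mem_append_left _ h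
          · exact List.mem_append_right _ (List.mem_cons_of_mem _ h)
        have hrest3 : ∀ z ∈ u ++ v, 3 ≤ z.2 := by
          intro z hz
          exact hge3 z (hsub z (hperm2.symm.subset (List.mem_cons_of_mem _ hz)))
        set C := (u ++ v).map (fun z => (z.1, Nat.log 2 (z.2 / 3))) with hC
        have hsum : esum C ≤ 1 := by
          have h1 : esum C ≤ 6 * ws (u ++ v) := by
            have := esum_le_c_ws' (u ++ v) (fun z => z.1) (fun z => Nat.log 2 (z.2 / 3)) 6
              (fun z hz => bC3 (hrest3 z hz))
            rw [hC]
            simpa using this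
          rw [hws, hws2] at hW
          linarith
        obtain ⟨σC, hσC⟩ := dy C hsum
        refine ⟨mod3 (fun _ => some x.1) (fun _ => some y.1) σC, ?_⟩
        intro z hz
        rcases List.mem_cons.mp (hperm.subset hz) with hz1 | hz2
        · subst hz1
          apply win_mod3 (r := 0) (q := 1) (o := 0) (by norm_num) ?_ (by norm_num) (by omega)
          intro k; rfl
        · rcases List.mem_cons.mp (hperm2.subset hz2) with hz3 | hz4
          · subst hz3
            apply win_mod3 (r := 1) (q := 1) (o := 0) (by norm_num) ?_ (by norm_num)
              (by have := hge3 z (hsub z hz2); omega)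
            intro k; rfl
          · obtain ⟨o, ho, hE⟩ := hσC (z.1, Nat.log 2 (z.2 / 3))
              (by rw [hC]; exact List.mem_map_of_mem hz4)
            have ho' : o < 2 ^ Nat.log 2 (z.2 / 3) := ho
            have hE' : Exact σC z.1 (2 ^ Nat.log 2 (z.2 / 3)) o := hE
            exact win_mod3 (r := 2) (by norm_num) hE' ho' (pow_le_of_log3 (hrest3 z hz4))
      · -- unique small job : multiples of 3, the rest on the 2-of-3 machine
        push_neg at hc35
        have hrest6 : ∀ z ∈ s ++ t, 6 ≤ z.2 := by
          intro z hz
          have h1 := hc35 z hz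
          omega
        set D := (s ++ t).map (fun z => (z.1, Nat.log 2 (z.2 / 3) + 1)) with hD
        have hsum : esum D ≤ 1 := by
          have h1 : esum D ≤ 3 * ws (s ++ t) := by
            have := esum_le_c_ws' (s ++ t) (fun z => z.1)
              (fun z => Nat.log 2 (z.2 / 3) + 1) 3
              (fun z hz => bC4 (by have := hrest6 z hz; omega))
            rw [hD]
            simpa using this
          rw [hws] at hW
          linarith
        obtain ⟨σD, hσD⟩ := dy D hsum
        refine ⟨tau3 (fun _ => some x.1) σD, ?_⟩
        intro z hz
        rcases List.mem_cons.mp (hperm.subset hz) with hz1 | hz2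
        · subst hz1
          apply win_tau3_A (q := 1) (o := 0) ?_ (by norm_num) (by omega)
          intro k; rfl
        · obtain ⟨o, ho, hE⟩ := hσD (z.1, Nat.log 2 (z.2 / 3) + 1)
            (by rw [hD]; exact List.mem_map_of_mem hz2)
          have ho' : o < 2 ^ (Nat.log 2 (z.2 / 3) + 1) := ho
          have hE' : Exact σD z.1 (2 ^ (Nat.log 2 (z.2 / 3) + 1)) o := hE
          apply win_tau3_B hE' ho' (two_pow_even (by omega)) (by positivity)
          have h1 := pow_le_of_log3 (show 3 ≤ z.2 by have := hrest6 z hz2; omega)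
          have h2 : (2:ℕ) ^ (Nat.log 2 (z.2 / 3) + 1) = 2 * 2 ^ Nat.log 2 (z.2 / 3) := by
            rw [pow_succ]; ring
          omega
    · -- all windows ≥ 4
      apply caseG l ?_ hW
      intro x hx
      have h1 := hge3 x hx
      rcases Nat.lt_or_ge x.2 4 with h | h
      · exfalso; exact hc3 ⟨x, hx, by omega⟩
      · exact h

end BGT


open BGT in
/-- If every growth rate is at most 6H/7, there is a trimming schedule
of value (12/7)·H, where H is the sum of the growth rates. -/
theorem bgt_twelve_sevenths (n : ℕ) (h : Fin n → ℝ) (hpos : ∀ i, 0 < h i)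
    (hle : ∀ i, h i ≤ 6 * (∑ j, h j) / 7) :
    ∃ σ : ℕ → Option (Fin n), TrimmingAchieves h σ ((12 / 7) * ∑ j, h j) := by
  classical
  rcases Nat.eq_zero_or_pos n with hn | hn
  · subst hn
    exact ⟨fun _ => none, fun i => i.elim0⟩
  set H : ℝ := ∑ j, h j with hH
  have hHpos : 0 < H := by
    have h0 : (0:ℝ) < h ⟨0, hn⟩ := hpos _
    apply lt_of_lt_of_le h0
    rw [hH]
    exact Finset.single_le_sum (fun i _ => (hpos i).le) (Finset.mem_univ _)
  set V : ℝ := 12 / 7 * H with hV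
  have hVpos : 0 < V := by rw [hV]; positivity
  set m : Fin n → ℕ := fun i => ⌊V / h i⌋₊ with hm
  have hm2 : ∀ i, 2 ≤ m i := by
    intro i
    rw [hm]
    apply Nat.le_floor
    rw [le_div_iff₀ (hpos i)]
    have h1 := hle i
    rw [hV]
    push_cast
    linarith
  have hWi : ∀ i, ((m i : ℝ) + 1)⁻¹ < h i / V := by
    intro i
    have h1 : V / h i < (m i : ℝ) + 1 := by
      rw [hm]
      exact Nat.lt_floor_add_one _
    have h2 : 0 < V / h i := div_pos hVpos (hpos i)
    have h3 : ((m i : ℝ) + 1)⁻¹ < (V / h i)⁻¹ := inv_strictAnti₀ h2 h1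
    have h4 : (V / h i)⁻¹ = h i / V := by
      field_simp
    rw [← h4]
    exact h3
  haveI : Nonempty (Fin n) := ⟨⟨0, hn⟩⟩
  have hWsum : ws ((List.finRange n).map fun i => (i, m i)) < 7/12 := by
    have he1 : ws ((List.finRange n).map fun i => (i, m i))
        = ∑ i : Fin n, ((m i : ℝ) + 1)⁻¹ := by
      rw [ws, List.map_map, Fin.sum_univ_def]
      rfl
    rw [he1]
    have hlt : ∑ i : Fin n, ((m i : ℝ) + 1)⁻¹ < ∑ i : Fin n, h i / V :=
      Finset.sum_lt_sum_of_nonempty Finset.univ_nonempty (fun i _ => hWi i)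
    have heq : ∑ i : Fin n, h i / V = 7/12 := by
      rw [← Finset.sum_div, ← hH, hV]
      field_simp
    linarith
  obtain ⟨σ, hσ⟩ := scheduleN ((List.finRange n).map fun i => (i, m i))
    (by
      intro x hx
      obtain ⟨i, _, rfl⟩ := List.mem_map.mp hx
      exact hm2 i)
    hWsum
  refine ⟨σ, ?_⟩
  intro i t
  have hwin : Win σ i (m i) :=
    hσ (i, m i) (List.mem_map_of_mem (List.mem_finRange i))
  have key : t + 1 ≤ lastCutPlusOne σ i t + m i := by
    by_cases ht : t < m i
    · have := Nat.zero_le (lastCutPlusOne σ i t)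
      omega
    · obtain ⟨s, hs1, hs2, hs3⟩ := hwin (t - m i)
      have hs4 : s + 1 ≤ t := by omega
      have hfg : s + 1 ≤ lastCutPlusOne σ i t :=
        Nat.le_findGreatest hs4 ⟨by omega, by simpa using hs3⟩
      omega
  have hgap : ((t:ℝ) + 1) - (lastCutPlusOne σ i t : ℝ) ≤ (m i : ℝ) := by
    have hc := (Nat.cast_le (α := ℝ)).mpr key
    push_cast at hc
    linarith
  have hfloor : (m i : ℝ) ≤ V / h i := by
    rw [hm]
    exact Nat.floor_le (div_pos hVpos (hpos i)).le
  have hb : bambooHeight h σ i t ≤ V := by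
    rw [bambooHeight]
    calc h i * ((t + 1 : ℝ) - (lastCutPlusOne σ i t : ℝ))
        ≤ h i * (m i : ℝ) := mul_le_mul_of_nonneg_left hgap (hpos i).le
    _ ≤ h i * (V / h i) := mul_le_mul_of_nonneg_left hfloor (hpos i).le
    _ = V := by rw [mul_comm]; exact div_mul_cancel₀ V (hpos i).ne' 
  calc bambooHeight h σ i t ≤ V := hb
  _ = 12 / 7 * H := hV
end

section
/- Let h : Fin n → ℝ be growth rates with h i > 0 for all i and let H = ∑ i, h i. Then there exists a trimming schedule that achieves value 2H, i.e., the height reached by every bamboo on every day is at most 2H. -/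
lemma card_filter_mod (q M c : ℕ) (hd : q ∣ M) :
    ((Finset.range M).filter (fun r => r % q = c % q)).card = M / q := by
  rcases Nat.eq_zero_or_pos q with hq | hq
  · subst hq; rw [Nat.zero_dvd.mp hd]; simp
  · rw [show M / q = (Finset.range (M / q)).card from (Finset.card_range _).symm]
    apply Finset.card_bij' (fun r _ => r / q) (fun m _ => q * m + c % q)
    · intro r hr
      simp only [Finset.mem_filter, Finset.mem_range] at hr
      exact Finset.mem_range.mpr (Nat.div_lt_div_of_lt_of_dvd hd hr.1)
    · intro m hm
      simp only [Finset.mem_range] at hm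
      simp only [Finset.mem_filter, Finset.mem_range]
      constructor
      · calc q * m + c % q < q * m + q := Nat.add_lt_add_left (Nat.mod_lt _ hq) _
          _ = q * (m + 1) := by ring
          _ ≤ q * (M / q) := Nat.mul_le_mul_left q hm
          _ = M := Nat.mul_div_cancel' hd
      · rw [Nat.mul_add_mod, Nat.mod_mod_of_dvd _ dvd_rfl]
    · intro r hr
      simp only [Finset.mem_filter, Finset.mem_range] at hr
      conv_rhs => rw [← Nat.div_add_mod r q]
      rw [hr.2]
    · intro m hm
      rw [Nat.mul_add_div hq, Nat.div_eq_of_lt (Nat.mod_lt _ hq)]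
      omega

lemma exists_offsets (n : ℕ) (e : Fin n → ℕ) (s : Finset (Fin n))
    (hs : (∑ i ∈ s, ((2:ℝ) ^ e i)⁻¹) ≤ 1) :
    ∃ a : Fin n → ℕ, ∀ i ∈ s, ∀ j ∈ s, i ≠ j →
      a i % 2 ^ min (e i) (e j) ≠ a j % 2 ^ min (e i) (e j) := by
  induction s using Finset.strongInduction with
  | _ s ih =>
    rcases s.eq_empty_or_nonempty with rfl | hne
    · exact ⟨fun _ => 0, by simp⟩
    obtain ⟨i0, hi0s, hmax⟩ := s.exists_max_image e hne
    set s' := s.erase i0 with hs'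
    have hsub : s' ⊂ s := Finset.erase_ssubset hi0s
    have hsum' : (∑ i ∈ s', ((2:ℝ) ^ e i)⁻¹) ≤ 1 - ((2:ℝ) ^ e i0)⁻¹ := by
      have := Finset.add_sum_erase s (fun i => ((2:ℝ) ^ e i)⁻¹) hi0s
      rw [← this] at hs
      linarith
    have hsum'' : (∑ i ∈ s', ((2:ℝ) ^ e i)⁻¹) ≤ 1 := by
      have : (0:ℝ) ≤ ((2:ℝ) ^ e i0)⁻¹ := by positivity
      linarith
    obtain ⟨a, ha⟩ := ih s' hsub hsum''
    set M := 2 ^ e i0 with hM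
    set F := (Finset.range M).filter
      (fun r => ∃ j ∈ s', r % 2 ^ e j = a j % 2 ^ e j) with hF
    have hFsub : F ⊆ s'.biUnion (fun j => (Finset.range M).filter
        (fun r => r % 2 ^ e j = a j % 2 ^ e j)) := by
      intro r hr
      simp only [hF, Finset.mem_filter, Finset.mem_range] at hr
      obtain ⟨hrM, j, hj, hjr⟩ := hr
      exact Finset.mem_biUnion.mpr ⟨j, hj, Finset.mem_filter.mpr ⟨Finset.mem_range.mpr hrM, hjr⟩⟩
    have hcard : F.card < M := by
      have h1 : F.card ≤ ∑ j ∈ s', M / 2 ^ e j := by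
        refine (Finset.card_le_card hFsub).trans ?_
        refine (Finset.card_biUnion_le).trans ?_
        apply Finset.sum_le_sum
        intro j hj
        rw [card_filter_mod _ _ _ (pow_dvd_pow 2 (hmax j (Finset.mem_of_mem_erase hj)))]
      have h2 : ((∑ j ∈ s', M / 2 ^ e j : ℕ) : ℝ) ≤ (M : ℝ) - 1 := by
        push_cast
        have : ∀ j ∈ s', ((M / 2 ^ e j : ℕ) : ℝ) = (M : ℝ) * ((2:ℝ) ^ e j)⁻¹ := by
          intro j hj
          rw [Nat.cast_div (pow_dvd_pow 2 (hmax j (Finset.mem_of_mem_erase hj)))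
            (by positivity)]
          rw [div_eq_mul_inv, Nat.cast_pow, Nat.cast_ofNat]
          norm_cast
        rw [Finset.sum_congr rfl this, ← Finset.mul_sum]
        have hMpos : (0:ℝ) < (M:ℝ) := by positivity
        have : (M:ℝ) * ∑ i ∈ s', ((2:ℝ) ^ e i)⁻¹ ≤ (M:ℝ) * (1 - ((2:ℝ) ^ e i0)⁻¹) :=
          mul_le_mul_of_nonneg_left hsum' hMpos.le
        have hMinv : (M:ℝ) * ((2:ℝ) ^ e i0)⁻¹ = 1 := by
          rw [hM]; push_cast; field_simp
        nlinarith
      have hMpos : 0 < M := Nat.pow_pos (by norm_num)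
      have : ((F.card : ℕ) : ℝ) ≤ (M:ℝ) - 1 := le_trans (by exact_mod_cast h1) h2
      have : (F.card : ℝ) < (M : ℝ) := by linarith
      exact_mod_cast this
    have : ¬ (Finset.range M ⊆ F) := fun hsub' => absurd
      (Finset.card_le_card hsub') (by simp [hcard.not_ge])
    obtain ⟨r, hrM, hrF⟩ := Finset.not_subset.mp this
    refine ⟨Function.update a i0 r, ?_⟩
    have hnotF : ∀ j ∈ s', r % 2 ^ e j ≠ a j % 2 ^ e j := by
      intro j hj hcontra
      exact hrF (Finset.mem_filter.mpr ⟨hrM, j, hj, hcontra⟩)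
    intro i hi j hj hij
    by_cases hii0 : i = i0
    · subst hii0
      have hj' : j ∈ s' := Finset.mem_erase.mpr ⟨fun hc => hij hc.symm, hj⟩
      rw [Function.update_self, Function.update_of_ne (fun hc => hij hc.symm)]
      rw [min_eq_right (hmax j hj)]
      exact hnotF j hj'
    · by_cases hji0 : j = i0
      · subst hji0
        have hi' : i ∈ s' := Finset.mem_erase.mpr ⟨hii0, hi⟩
        rw [Function.update_self, Function.update_of_ne hii0]
        rw [min_eq_left (hmax i hi)]
        exact (hnotF i hi').symm
      · rw [Function.update_of_ne hii0, Function.update_of_ne hji0]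
        exact ha i (Finset.mem_erase.mpr ⟨hii0, hi⟩) j (Finset.mem_erase.mpr ⟨hji0, hj⟩) hij

/-- There always is a trimming schedule of value 2H,
where H is the sum of the growth rates (Gasieniec et al.). -/
theorem bgt_two_approx (n : ℕ) (h : Fin n → ℝ) (hpos : ∀ i, 0 < h i) :
    ∃ σ : ℕ → Option (Fin n), TrimmingAchieves h σ (2 * ∑ j, h j) := by
  classical
  rcases Nat.eq_zero_or_pos n with rfl | hn
  · exact ⟨fun _ => none, fun i => i.elim0⟩
  set H := ∑ j, h j with hH
  have hHpos : 0 < H :=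
    Finset.sum_pos (fun i _ => hpos i) ⟨⟨0, hn⟩, Finset.mem_univ _⟩
  have hle : ∀ i, h i ≤ H := fun i =>
    Finset.single_le_sum (fun j _ => (hpos j).le) (Finset.mem_univ i)
  set p : Fin n → ℝ := fun i => 2 * H / h i with hp
  have hp2 : ∀ i, 2 ≤ p i := by
    intro i
    rw [hp, le_div_iff₀ (hpos i)]
    linarith [hle i]
  set e : Fin n → ℕ := fun i => Nat.log 2 ⌊p i⌋₊ with he
  have hfl1 : ∀ i, 2 ≤ ⌊p i⌋₊ := fun i => Nat.le_floor (by exact_mod_cast hp2 i)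
  have hqle : ∀ i, ((2:ℝ) ^ e i) ≤ p i := by
    intro i
    calc ((2:ℝ) ^ e i) = ((2 ^ e i : ℕ) : ℝ) := by push_cast; ring
      _ ≤ (⌊p i⌋₊ : ℝ) := by
          exact_mod_cast Nat.pow_log_le_self 2 (by have := hfl1 i; omega)
      _ ≤ p i := Nat.floor_le (by linarith [hp2 i])
  have hqgt : ∀ i, H / h i < (2:ℝ) ^ e i := by
    intro i
    have h1 : ⌊p i⌋₊ < 2 ^ (e i + 1) := Nat.lt_pow_succ_log_self (by norm_num) _
    have h2 : p i < (⌊p i⌋₊ : ℝ) + 1 := Nat.lt_floor_add_one _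
    have h3 : ((⌊p i⌋₊ : ℝ) + 1) ≤ ((2 : ℝ) ^ (e i + 1)) := by
      have : (⌊p i⌋₊ + 1 : ℕ) ≤ 2 ^ (e i + 1) := h1
      exact_mod_cast this
    have h4 : p i < 2 * (2:ℝ) ^ e i := by
      rw [pow_succ] at h3; linarith
    have h5 : p i = 2 * (H / h i) := by
      rw [hp]; field_simp
    linarith [h5 ▸ h4]
  have hsum : ∑ i ∈ Finset.univ, ((2:ℝ) ^ e i)⁻¹ ≤ 1 := by
    have hstep : ∀ i ∈ Finset.univ, ((2:ℝ) ^ e i)⁻¹ ≤ h i / H := by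
      intro i _
      have h0 : 0 < H / h i := div_pos hHpos (hpos i)
      have h2 : (H / h i)⁻¹ = h i / H := by rw [inv_div]
      have h3 := inv_anti₀ h0 (hqgt i).le
      rw [h2] at h3
      exact h3
    calc ∑ i ∈ Finset.univ, ((2:ℝ) ^ e i)⁻¹ ≤ ∑ i ∈ Finset.univ, h i / H :=
          Finset.sum_le_sum hstep
      _ = 1 := by rw [← Finset.sum_div]; field_simp; exact hH.symm
  obtain ⟨a, ha⟩ := exists_offsets n e Finset.univ hsum
  set σ : ℕ → Option (Fin n) := fun t =>
    if ht : ∃ i, t % 2 ^ e i = a i % 2 ^ e i then some ht.choose else none with hσ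
  have hσcut : ∀ (i : Fin n) (u : ℕ), u % 2 ^ e i = a i % 2 ^ e i → σ u = some i := by
    intro i u hu
    have hex : ∃ i, u % 2 ^ e i = a i % 2 ^ e i := ⟨i, hu⟩
    rw [hσ]
    simp only [hex, dif_pos]
    congr 1
    by_contra hne
    have hj := hex.choose_spec
    set j := hex.choose with hjdef
    have hmin := ha j (Finset.mem_univ _) i (Finset.mem_univ _) hne
    have hdvd1 : (2:ℕ) ^ min (e j) (e i) ∣ 2 ^ e j := pow_dvd_pow 2 (min_le_left _ _)
    have hdvd2 : (2:ℕ) ^ min (e j) (e i) ∣ 2 ^ e i := pow_dvd_pow 2 (min_le_right _ _)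
    have h1 : u % 2 ^ min (e j) (e i) = a j % 2 ^ min (e j) (e i) := by
      conv_lhs => rw [← Nat.mod_mod_of_dvd u hdvd1]
      rw [hj, Nat.mod_mod_of_dvd _ hdvd1]
    have h2 : u % 2 ^ min (e j) (e i) = a i % 2 ^ min (e j) (e i) := by
      conv_lhs => rw [← Nat.mod_mod_of_dvd u hdvd2]
      rw [hu, Nat.mod_mod_of_dvd _ hdvd2]
    exact hmin (h1.symm.trans h2)
  refine ⟨σ, ?_⟩
  intro i t
  set q := 2 ^ e i with hq
  have hq0 : 0 < q := Nat.pow_pos (by norm_num)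
  have key : (t + 1 : ℝ) - (lastCutPlusOne σ i t : ℝ) ≤ (q : ℝ) := by
    rcases lt_or_ge t q with htq | htq
    · have h0 : (0:ℝ) ≤ (lastCutPlusOne σ i t : ℝ) := Nat.cast_nonneg _
      have h1 : (t:ℝ) + 1 ≤ (q:ℝ) := by exact_mod_cast htq
      linarith
    · set c := a i % q with hc
      have hcq : c < q := Nat.mod_lt _ hq0
      set d := t - 1 - c with hd
      set u := c + q * (d / q) with hu
      have hmod : q * (d / q) + d % q = d := Nat.div_add_mod d q
      have hdq : d % q < q := Nat.mod_lt _ hq0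
      have hu1 : u % q = a i % q := by
        rw [hu, Nat.add_mul_mod_self_left, hc, Nat.mod_mod_of_dvd _ dvd_rfl]
      have hcut : σ u = some i := hσcut i u hu1
      have huval : u + d % q + 1 = t := by omega
      have hfg : u + 1 ≤ lastCutPlusOne σ i t := by
        apply Nat.le_findGreatest (by omega)
        refine ⟨by omega, ?_⟩
        simpa using hcut
      have hkey : t + 1 ≤ lastCutPlusOne σ i t + q := by omega
      have : ((t:ℝ) + 1) ≤ (lastCutPlusOne σ i t : ℝ) + (q:ℝ) := by exact_mod_cast hkey
      linarith
  show bambooHeight h σ i t ≤ 2 * H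
  rw [bambooHeight]
  calc h i * ((t + 1 : ℝ) - (lastCutPlusOne σ i t : ℝ)) ≤ h i * (q:ℝ) :=
        mul_le_mul_of_nonneg_left key (hpos i).le
    _ ≤ h i * p i := by
        apply mul_le_mul_of_nonneg_left _ (hpos i).le
        calc ((q:ℕ):ℝ) = (2:ℝ) ^ e i := by rw [hq]; push_cast; ring
          _ ≤ p i := hqle i
    _ = 2 * H := by rw [hp]; field_simp [(hpos i).ne']
end

section
/- Let p : Fin n → ℕ be integer periods with p i ≥ 1 for all i, such that for all i, j, if p i ≤ p j then p i divides p j, and such that ∑ i, 1 / (p i : ℝ) ≤ 1. Then there exists a feasible pinwheel schedule for p. -/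
lemma exists_near (t m o : ℕ) (hm : 0 < m) (ho : o < m) :
    ∃ s, t ≤ s ∧ s < t + m ∧ s % m = o := by
  have ht : m * (t / m) + t % m = t := Nat.div_add_mod t m
  have hr : t % m < m := Nat.mod_lt t hm
  rcases Nat.lt_or_ge o (t % m) with h | h
  · refine ⟨m * (t / m + 1) + o, ?_, ?_, ?_⟩
    · have : m * (t / m + 1) = m * (t / m) + m := by ring
      omega
    · have : m * (t / m + 1) = m * (t / m) + m := by ring
      omega
    · rw [Nat.mul_add_mod]; exact Nat.mod_eq_of_lt ho
  · refine ⟨m * (t / m) + o, by omega, by omega, ?_⟩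
    rw [Nat.mul_add_mod]; exact Nat.mod_eq_of_lt ho

lemma card_filter_mod_s3 {P m o : ℕ} (hm : 0 < m) (hdvd : m ∣ P) :
    ((Finset.range P).filter (fun r => r % m = o)).card ≤ P / m := by
  rw [← Finset.card_range (P / m)]
  apply Finset.card_le_card_of_injOn (fun r => r / m)
  · intro r hr
    simp only [Finset.mem_coe, Finset.mem_filter, Finset.mem_range] at hr ⊢
    exact Nat.div_lt_div_of_lt_of_dvd hdvd hr.1
  · intro r hr r' hr' hEq
    simp only [Finset.coe_filter, Set.mem_setOf_eq, Finset.mem_range] at hr hr'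
    have h1 : m * (r / m) + r % m = r := Nat.div_add_mod r m
    have h2 : m * (r' / m) + r' % m = r' := Nat.div_add_mod r' m
    simp only at hEq
    have h3 : m * (r / m) = m * (r' / m) := by rw [hEq]
    omega

lemma exists_offsets_s3 {n : ℕ} (p : Fin n → ℕ) (hp : ∀ i, 1 ≤ p i)
    (hdvd : ∀ i j, p i ≤ p j → p i ∣ p j) (hd : ∑ i, 1 / (p i : ℝ) ≤ 1)
    (s : Finset (Fin n)) :
    ∃ o : Fin n → ℕ, (∀ i ∈ s, o i < p i) ∧
      ∀ i ∈ s, ∀ j ∈ s, i ≠ j → ∀ t, t % p i = o i → t % p j ≠ o j := by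
  classical
  induction s using Finset.strongInduction with
  | _ s ih =>
    rcases s.eq_empty_or_nonempty with rfl | hs
    · exact ⟨fun _ => 0, by simp, by simp⟩
    obtain ⟨k, hk, hmax⟩ := s.exists_max_image p hs
    obtain ⟨o, ho1, ho2⟩ := ih (s.erase k) (Finset.erase_ssubset hk)
    set P := p k with hP
    have hP1 : 1 ≤ P := hp k
    have hjd : ∀ j ∈ s.erase k, p j ∣ P := fun j hj =>
      hdvd j k (hmax j (Finset.mem_of_mem_erase hj))
    -- density bound in ℕ
    have hsum : ∑ j ∈ s.erase k, P / p j ≤ P - 1 := by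
      have hnn : ∀ i : Fin n, (0:ℝ) ≤ 1 / (p i : ℝ) := by
        intro i; positivity
      have hsub : ∑ j ∈ s, 1 / (p j : ℝ) ≤ 1 := by
        refine le_trans (Finset.sum_le_sum_of_subset_of_nonneg (Finset.subset_univ s)
          (fun i _ _ => hnn i)) hd
      have herase : ∑ j ∈ s.erase k, 1 / (p j : ℝ) + 1 / (P : ℝ) = ∑ j ∈ s, 1 / (p j : ℝ) := by
        rw [hP]; exact Finset.sum_erase_add s _ hk
      have hPpos : (0:ℝ) < P := by exact_mod_cast hP1
      have hreal : (↑(∑ j ∈ s.erase k, P / p j) : ℝ) ≤ (↑(P - 1) : ℝ) := by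
        have hcast : ∀ j ∈ s.erase k, ((P / p j : ℕ) : ℝ) = (P : ℝ) / (p j : ℝ) := by
          intro j hj
          rw [Nat.cast_div (hjd j hj)]
          exact_mod_cast (Nat.one_le_iff_ne_zero.mp (hp j))
        rw [Nat.cast_sum, Finset.sum_congr rfl hcast]
        have : ∑ j ∈ s.erase k, (P:ℝ) / (p j : ℝ) = (P:ℝ) * ∑ j ∈ s.erase k, 1 / (p j : ℝ) := by
          rw [Finset.mul_sum]; exact Finset.sum_congr rfl (fun j _ => by ring)
        rw [this]
        have h2 : ∑ j ∈ s.erase k, 1 / (p j : ℝ) ≤ 1 - 1 / (P:ℝ) := by linarith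
        have : (P:ℝ) * ∑ j ∈ s.erase k, 1 / (p j : ℝ) ≤ (P:ℝ) * (1 - 1/(P:ℝ)) :=
          mul_le_mul_of_nonneg_left h2 (le_of_lt hPpos)
        have h3 : (P:ℝ) * (1 - 1/(P:ℝ)) = (P:ℝ) - 1 := by
          field_simp
        have h4 : ((P - 1 : ℕ) : ℝ) = (P:ℝ) - 1 := by
          have := hP1; push_cast [Nat.cast_sub hP1]; ring
        linarith
      exact_mod_cast hreal
    set C := (s.erase k).biUnion
      (fun j => (Finset.range P).filter (fun r => r % p j = o j)) with hCdef
    have hCcard : C.card < P := by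
      calc C.card ≤ ∑ j ∈ s.erase k, ((Finset.range P).filter (fun r => r % p j = o j)).card :=
            Finset.card_biUnion_le
        _ ≤ ∑ j ∈ s.erase k, P / p j :=
            Finset.sum_le_sum (fun j hj => card_filter_mod_s3 (hp j) (hjd j hj))
        _ ≤ P - 1 := hsum
        _ < P := by omega
    obtain ⟨r, hrP, hrC⟩ : ∃ r ∈ Finset.range P, r ∉ C := by
      by_contra hcon
      push_neg at hcon
      have hsub2 : Finset.range P ⊆ C := fun x hx => hcon x hx
      have := Finset.card_le_card hsub2
      rw [Finset.card_range] at this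
      omega
    rw [Finset.mem_range] at hrP
    refine ⟨Function.update o k r, ?_, ?_⟩
    · intro i hi
      rcases eq_or_ne i k with rfl | hne
      · simpa using hrP
      · rw [Function.update_of_ne hne]
        exact ho1 i (Finset.mem_erase.mpr ⟨hne, hi⟩)
    · intro i hi j hj hij t hti htj
      have key : ∀ j ∈ s.erase k, t % P = r → t % p j ≠ o j := by
        intro j hj htr htj
        apply hrC
        rw [hCdef, Finset.mem_biUnion]
        refine ⟨j, hj, Finset.mem_filter.mpr ⟨Finset.mem_range.mpr hrP, ?_⟩⟩
        rw [← htr, Nat.mod_mod_of_dvd t (hjd j hj), htj]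
      rcases eq_or_ne i k with hik | hik
      · have hjk : j ≠ k := fun h => hij (by rw [hik, h])
        rw [hik, Function.update_self] at hti
        rw [Function.update_of_ne hjk] at htj
        exact key j (Finset.mem_erase.mpr ⟨hjk, hj⟩) hti htj
      · rcases eq_or_ne j k with hjk2 | hjk2
        · rw [hjk2, Function.update_self] at htj
          rw [Function.update_of_ne hik] at hti
          exact key i (Finset.mem_erase.mpr ⟨hik, hi⟩) htj hti
        · rw [Function.update_of_ne hik] at hti
          rw [Function.update_of_ne hjk2] at htj
          exact ho2 i (Finset.mem_erase.mpr ⟨hik, hi⟩) j (Finset.mem_erase.mpr ⟨hjk2, hj⟩)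
            hij t hti htj

/-- An integer instance forming a divisibility chain with density at most 1
admits a feasible pinwheel schedule (Holte et al.). -/
theorem pinwheel_of_divisibility_chain (n : ℕ) (p : Fin n → ℕ) (hp : ∀ i, 1 ≤ p i)
    (hdvd : ∀ i j, p i ≤ p j → p i ∣ p j) (hd : ∑ i, 1 / (p i : ℝ) ≤ 1) :
    ∃ σ : ℕ → Option (Fin n), PinwheelFeasibleN p σ := by
  classical
  obtain ⟨o, ho1, ho2⟩ := exists_offsets_s3 p hp hdvd hd Finset.univ
  refine ⟨fun t => if h : ∃ i, t % p i = o i then some (Classical.choose h) else none, ?_⟩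
  intro i t
  obtain ⟨s, hts, hlt, hmod⟩ := exists_near t (p i) (o i) (hp i) (ho1 i (Finset.mem_univ i))
  refine ⟨s, hts, hlt, ?_⟩
  have hex : ∃ j, s % p j = o j := ⟨i, hmod⟩
  simp only [dif_pos hex]
  congr 1
  by_contra hne
  exact ho2 (Classical.choose hex) (Finset.mem_univ _) i (Finset.mem_univ i) hne s
    (Classical.choose_spec hex) hmod
end

section
/- Let p : Fin n → ℕ be integer periods with p i ≥ 1 for all i, such that for all i, j, if p i ≤ p j then p i divides p j, and such that ∑ i, 1 / (p i : ℝ) ≤ 1. Then there exist offsets o : Fin n → ℕ with o i < p i for all i, such that for all i ≠ j there is no day t ∈ ℕ with t ≡ o i (mod p i) and t ≡ o j (mod p j). Consequently, the periodic schedule that schedules job i exactly on the days congruent to o i modulo p i assigns at most one job per day and is a feasible pinwheel schedule for p. -/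
/-- In any window of `P` consecutive days there is a day `≡ r (mod P)`. -/
lemma exists_mod_window (P r t : ℕ) (hP : 1 ≤ P) (hr : r < P) :
    ∃ s : ℕ, t ≤ s ∧ s < t + P ∧ s % P = r := by
  rcases le_or_gt (t % P) r with h | h
  · refine ⟨P * (t / P) + r, ?_, ?_, ?_⟩
    · calc t = P * (t / P) + t % P := (Nat.div_add_mod t P).symm
        _ ≤ P * (t / P) + r := by omega
    · have : t % P < P := Nat.mod_lt _ hP
      calc P * (t / P) + r < P * (t / P) + t % P + P := by omega
        _ = t + P := by rw [Nat.div_add_mod]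
    · simp [Nat.mul_add_mod, Nat.mod_eq_of_lt hr]
  · refine ⟨P * (t / P) + P + r, ?_, ?_, ?_⟩
    · have : t % P < P := Nat.mod_lt _ hP
      calc t = P * (t / P) + t % P := (Nat.div_add_mod t P).symm
        _ ≤ P * (t / P) + P + r := by omega
    · calc P * (t / P) + P + r < P * (t / P) + t % P + P := by omega
        _ = t + P := by rw [Nat.div_add_mod]
    · have : P * (t / P) + P + r = P * (t / P + 1) + r := by ring
      rw [this]
      simp [Nat.mul_add_mod, Nat.mod_eq_of_lt hr]

lemma count_residue_le (P d r : ℕ) (hd : 0 < d) (hdvd : d ∣ P) :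
    ((Finset.range P).filter (fun c => c % d = r)).card ≤ P / d := by
  classical
  have : ((Finset.range P).filter (fun c => c % d = r)).card ≤ (Finset.range (P / d)).card := by
    apply Finset.card_le_card_of_injOn (fun c => c / d)
    · intro c hc
      simp only [Finset.mem_filter, Finset.mem_range] at hc ⊢
      exact Finset.mem_coe.mpr (Finset.mem_range.mpr (Nat.div_lt_div_of_lt_of_dvd hdvd (Finset.mem_range.mp (Finset.mem_filter.mp hc).1)))
    · intro a ha b hb hab
      simp only [Finset.coe_filter, Set.mem_setOf_eq, Finset.mem_range] at ha hb
      simp only at hab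
      have h1 := Nat.div_add_mod a d
      have h2 := Nat.div_add_mod b d
      rw [hab] at h1
      omega
  simpa using this

/-- Key combinatorial lemma: pairwise disjoint residue classes exist on any finset. -/
lemma key_offsets {n : ℕ} (p : Fin n → ℕ) (hp : ∀ i, 1 ≤ p i)
    (hdvd : ∀ i j, p i ≤ p j → p i ∣ p j) :
    ∀ s : Finset (Fin n), (∑ i ∈ s, 1 / (p i : ℝ)) ≤ 1 →
      ∃ o : Fin n → ℕ, (∀ i, o i < p i) ∧
        (∀ i ∈ s, ∀ j ∈ s, i ≠ j → ∀ t : ℕ, ¬(t % p i = o i ∧ t % p j = o j)) := by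
  classical
  intro s
  induction s using Finset.strongInduction with
  | _ s ih =>
    intro hsum
    rcases s.eq_empty_or_nonempty with rfl | hne
    · exact ⟨fun _ => 0, fun i => hp i, by simp⟩
    obtain ⟨m, hm, hmax⟩ := s.exists_max_image p hne
    have hpos : ∀ i : Fin n, (0 : ℝ) < (p i : ℝ) := by
      intro i; exact_mod_cast hp i
    have hsub : s.erase m ⊂ s := Finset.erase_ssubset hm
    have hsum' : (∑ i ∈ s.erase m, 1 / (p i : ℝ)) ≤ 1 := by
      refine le_trans (Finset.sum_le_sum_of_subset_of_nonneg hsub.subset ?_) hsum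
      intro i _ _; positivity
    obtain ⟨o, ho, hdisj⟩ := ih (s.erase m) hsub hsum'
    set P := p m with hP
    -- bad residues
    set B := (Finset.range P).filter (fun c => ∃ j ∈ s.erase m, c % p j = o j) with hB
    have hdvdP : ∀ j ∈ s.erase m, p j ∣ P := by
      intro j hj
      exact hdvd j m (hmax j (Finset.mem_of_mem_erase hj))
    have hcardB : B.card ≤ ∑ j ∈ s.erase m, P / p j := by
      have hsubB : B ⊆ (s.erase m).biUnion
          (fun j => (Finset.range P).filter (fun c => c % p j = o j)) := by
        intro c hc
        simp only [hB, Finset.mem_filter, Finset.mem_range] at hc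
        obtain ⟨hcP, j, hj, hcj⟩ := hc
        simp only [Finset.mem_biUnion, Finset.mem_filter, Finset.mem_range]
        exact ⟨j, hj, hcP, hcj⟩
      calc B.card ≤ _ := Finset.card_le_card hsubB
        _ ≤ ∑ j ∈ s.erase m, ((Finset.range P).filter (fun c => c % p j = o j)).card :=
          Finset.card_biUnion_le
        _ ≤ ∑ j ∈ s.erase m, P / p j := by
          refine Finset.sum_le_sum fun j hj => ?_
          exact count_residue_le P (p j) (o j) (hp j) (hdvdP j hj)
    have hsumdvd : (∑ j ∈ s.erase m, P / p j) ≤ P - 1 := by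
      have hreal : ((∑ j ∈ s.erase m, P / p j : ℕ) : ℝ) ≤ ((P - 1 : ℕ) : ℝ) := by
        push_cast
        have hcast : ∀ j ∈ s.erase m, ((P / p j : ℕ) : ℝ) = (P : ℝ) / (p j : ℝ) := by
          intro j hj
          exact_mod_cast Nat.cast_div (hdvdP j hj) (ne_of_gt (hpos j))
        rw [Finset.sum_congr rfl hcast]
        have h1 : (∑ j ∈ s.erase m, (P : ℝ) / (p j : ℝ))
            = (P : ℝ) * ∑ j ∈ s.erase m, 1 / (p j : ℝ) := by
          rw [Finset.mul_sum]; congr 1; ext j; ring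
        have h2 : (∑ j ∈ s.erase m, 1 / (p j : ℝ)) ≤ 1 - 1 / (P : ℝ) := by
          have := Finset.add_sum_erase s (fun i => 1 / (p i : ℝ)) hm
          have hPm : (1 : ℝ) / P + ∑ j ∈ s.erase m, 1 / (p j : ℝ) ≤ 1 := by
            rw [this]; exact hsum
          linarith
        have hPpos : (0 : ℝ) < P := hpos m
        have hP1 : ((P - 1 : ℕ) : ℝ) = (P : ℝ) - 1 := by
          have := hp m; rw [Nat.cast_sub (show 1 ≤ P from hp m)]; push_cast; ring
        calc (∑ j ∈ s.erase m, (P : ℝ) / (p j : ℝ)) = (P : ℝ) * _ := h1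
          _ ≤ (P : ℝ) * (1 - 1 / (P : ℝ)) := by
            apply mul_le_mul_of_nonneg_left h2 (le_of_lt hPpos)
          _ = (P : ℝ) - 1 := by field_simp
          _ = ((P - 1 : ℕ) : ℝ) := hP1.symm
      exact_mod_cast hreal
    have hlt : B.card < (Finset.range P).card := by
      have := hp m
      simp only [Finset.card_range]
      omega
    have hBsub : B ⊆ Finset.range P := Finset.filter_subset _ _
    have hBss : B ⊂ Finset.range P := hBsub.ssubset_of_ne (by
      intro h; rw [h] at hlt; exact lt_irrefl _ hlt)
    obtain ⟨c, hcr, hcB⟩ := Finset.exists_of_ssubset hBss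
    have hcP : c < P := Finset.mem_range.mp hcr
    have hcfree : ∀ j ∈ s.erase m, c % p j ≠ o j := by
      intro j hj hcj
      exact hcB (by simp only [hB, Finset.mem_filter]; exact ⟨hcr, j, hj, hcj⟩)
    refine ⟨Function.update o m c, ?_, ?_⟩
    · intro i
      rcases eq_or_ne i m with rfl | hi
      · simpa using hcP
      · rw [Function.update_of_ne hi]; exact ho i
    · intro i hi j hj hij t ⟨h1, h2⟩
      rcases eq_or_ne i m with hi' | hi'
      · rw [hi', Function.update_self] at h1
        have hjm : j ∈ s.erase m := Finset.mem_erase.mpr ⟨fun h => hij (hi'.trans h.symm), hj⟩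
        rw [Function.update_of_ne (Finset.ne_of_mem_erase hjm)] at h2
        have : c % p j = o j := by
          rw [← h1, Nat.mod_mod_of_dvd t (hdvdP j hjm), h2]
        exact hcfree j hjm this
      · rcases eq_or_ne j m with hj' | hj'
        · rw [hj', Function.update_self] at h2
          have him : i ∈ s.erase m := Finset.mem_erase.mpr ⟨hi', hi⟩
          rw [Function.update_of_ne hi'] at h1
          have : c % p i = o i := by
            rw [← h2, Nat.mod_mod_of_dvd t (hdvdP i him), h1]
          exact hcfree i him this
        · rw [Function.update_of_ne hi'] at h1
          rw [Function.update_of_ne hj'] at h2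
          exact hdisj i (Finset.mem_erase.mpr ⟨hi', hi⟩) j (Finset.mem_erase.mpr ⟨hj', hj⟩)
            hij t ⟨h1, h2⟩

/-- For a divisibility-chain instance of density at most 1 there are
offsets `o i < p i` whose residue classes are pairwise disjoint; consequently the
periodic schedule scheduling job `i` exactly on days `≡ o i (mod p i)` assigns at most
one job per day and is a feasible pinwheel schedule. -/
theorem pinwheel_periodic_offsets (n : ℕ) (p : Fin n → ℕ) (hp : ∀ i, 1 ≤ p i)
    (hdvd : ∀ i j, p i ≤ p j → p i ∣ p j) (hd : ∑ i, 1 / (p i : ℝ) ≤ 1) :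
    ∃ o : Fin n → ℕ, (∀ i, o i < p i) ∧
      (∀ i j, i ≠ j → ∀ t : ℕ, ¬(t % p i = o i ∧ t % p j = o j)) ∧
      ∃ σ : ℕ → Option (Fin n),
        (∀ (t : ℕ) (i : Fin n), σ t = some i ↔ t % p i = o i) ∧
        PinwheelFeasibleN p σ := by
  classical
  obtain ⟨o, ho, hdisj⟩ := key_offsets p hp hdvd Finset.univ (by simpa using hd)
  have hdisj' : ∀ i j, i ≠ j → ∀ t : ℕ, ¬(t % p i = o i ∧ t % p j = o j) :=
    fun i j hij t => hdisj i (Finset.mem_univ i) j (Finset.mem_univ j) hij t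
  refine ⟨o, ho, hdisj', ?_⟩
  refine ⟨fun t => if h : ∃ i, t % p i = o i then some h.choose else none, ?_⟩
  have hiff : ∀ (t : ℕ) (i : Fin n),
      (if h : ∃ i, t % p i = o i then some h.choose else none) = some i ↔ t % p i = o i := by
    intro t i
    constructor
    · intro hσ
      by_cases h : ∃ i, t % p i = o i
      · rw [dif_pos h, Option.some_inj] at hσ
        rw [← hσ]; exact h.choose_spec
      · rw [dif_neg h] at hσ; exact absurd hσ (by simp)
    · intro ht
      have h : ∃ i, t % p i = o i := ⟨i, ht⟩
      rw [dif_pos h, Option.some_inj]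
      by_contra hne
      exact hdisj' h.choose i hne t ⟨h.choose_spec, ht⟩
  refine ⟨hiff, ?_⟩
  intro i t
  obtain ⟨s, hs1, hs2, hs3⟩ := exists_mod_window (p i) (o i) t (hp i) (ho i)
  exact ⟨s, hs1, hs2, (hiff s i).mpr hs3⟩
end

section
/- Let p : Fin n → ℝ be real periods with p i ≥ 2 for every i and ∑ i, 1 / p i ≤ 1/2. Then there exists a feasible pinwheel schedule for the pseudo-instance p. -/
namespace PinwheelAux

def rev : ℕ → ℕ → ℕ
  | 0, _ => 0
  | (a+1), m => (m % 2) * 2^a + rev a (m / 2)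

lemma rev_lt (a m : ℕ) : rev a m < 2 ^ a := by
  induction a generalizing m with
  | zero => simp [rev]
  | succ a ih =>
    have h1 : m % 2 ≤ 1 := by omega
    have h2 := ih (m / 2)
    have h3 : rev (a+1) m = (m % 2) * 2^a + rev a (m / 2) := rfl
    rw [h3, pow_succ]
    nlinarith

lemma rev_mod (b c m : ℕ) : rev (b + c) m % 2 ^ b = rev b (m / 2 ^ c) := by
  induction c generalizing m with
  | zero => simp [Nat.mod_eq_of_lt (rev_lt b m)]
  | succ c ih =>
    have h1 : rev (b + (c+1)) m = (m % 2) * 2^(b + c) + rev (b + c) (m / 2) := rfl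
    have h2 : (m % 2) * 2^(b + c) + rev (b + c) (m / 2)
        = 2^b * (m % 2 * 2^c) + rev (b + c) (m / 2) := by rw [pow_add]; ring
    rw [h1, h2, Nat.mul_add_mod, ih, Nat.div_div_eq_div_mul]
    congr 1
    rw [pow_succ']

lemma rev_inj (a : ℕ) {m m' : ℕ} (hm : m < 2 ^ a) (hm' : m' < 2 ^ a)
    (h : rev a m = rev a m') : m = m' := by
  induction a generalizing m m' with
  | zero => omega
  | succ a ih =>
    have h1 : rev (a+1) m = (m % 2) * 2^a + rev a (m / 2) := rfl
    have h2 : rev (a+1) m' = (m' % 2) * 2^a + rev a (m' / 2) := rfl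
    rw [h1, h2] at h
    have l1 := rev_lt a (m / 2)
    have l2 := rev_lt a (m' / 2)
    have hx : m % 2 = 0 ∨ m % 2 = 1 := by omega
    have hy : m' % 2 = 0 ∨ m' % 2 = 1 := by omega
    have hd1 : m / 2 < 2 ^ a := by
      apply Nat.div_lt_of_lt_mul; rw [← pow_succ']; exact hm
    have hd2 : m' / 2 < 2 ^ a := by
      apply Nat.div_lt_of_lt_mul; rw [← pow_succ']; exact hm'
    rcases hx with hx|hx <;> rcases hy with hy|hy <;> rw [hx, hy] at h <;>
      simp at h <;> [skip; omega; omega; skip] <;>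
      have := ih hd1 hd2 h <;> omega


open Finset in
lemma pinwheel_pow2 (n : ℕ) (b : Fin n → ℕ) (hb : Monotone b)
    (hd : ∑ i, ((2:ℝ) ^ (b i))⁻¹ ≤ 1) :
    ∃ σ : ℕ → Option (Fin n), ∀ (i : Fin n) (t : ℕ),
      ∃ s : ℕ, t ≤ s ∧ s < t + 2 ^ (b i) ∧ σ s = some i := by
  classical
  set Q : Fin n → ℕ := fun k => 2 ^ (b k) with hQ
  have hQpos : ∀ k, 0 < Q k := fun k => Nat.pow_pos (by norm_num)
  have hd' : ∑ i, ((Q i : ℝ))⁻¹ ≤ 1 := by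
    refine le_trans (le_of_eq ?_) hd
    apply Finset.sum_congr rfl
    intro i _
    rw [hQ]
    push_cast
    ring
  have hdvd : ∀ {j k : Fin n}, j ≤ k → Q j ∣ Q k :=
    fun {j k} h => pow_dvd_pow 2 (hb h)
  set c : Fin n → ℕ := fun k => ∑ j ∈ Iio k, Q k / Q j with hc
  have hcast : ∀ k, (c k : ℝ) = (Q k : ℝ) * ∑ j ∈ Iio k, ((Q j : ℝ))⁻¹ := by
    intro k
    rw [hc, Finset.mul_sum]
    push_cast
    apply Finset.sum_congr rfl
    intro j hj
    have hjk : j ≤ k := le_of_lt (Finset.mem_Iio.mp hj)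
    rw [Nat.cast_div (hdvd hjk) (by positivity)]
    field_simp
  have hsum_le : ∀ k : Fin n, (∑ j ∈ Iio k, ((Q j : ℝ))⁻¹) + (Q k : ℝ)⁻¹ ≤ 1 := by
    intro k
    have h1 : (∑ j ∈ Iio k, ((Q j : ℝ))⁻¹) + (Q k : ℝ)⁻¹
        = ∑ j ∈ insert k (Iio k), ((Q j : ℝ))⁻¹ := by
      rw [Finset.sum_insert (by simp)]; ring
    rw [h1]
    refine le_trans (Finset.sum_le_sum_of_subset_of_nonneg (Finset.subset_univ _) ?_) hd'
    intro j _ _; positivity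
  have hclt : ∀ k, c k < Q k := by
    intro k
    have h3 : (0:ℝ) < Q k := by exact_mod_cast hQpos k
    have h1 : (c k : ℝ) ≤ (Q k : ℝ) - 1 := by
      rw [hcast]
      have h2 := hsum_le k
      calc (Q k : ℝ) * (∑ j ∈ Iio k, ((Q j : ℝ))⁻¹)
          ≤ (Q k : ℝ) * (1 - (Q k : ℝ)⁻¹) :=
            mul_le_mul_of_nonneg_left (by linarith) (le_of_lt h3)
        _ = (Q k : ℝ) - 1 := by field_simp
    have h4 : (c k : ℝ) < (Q k : ℝ) := by linarith
    exact_mod_cast h4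
  have hkey : ∀ {j k : Fin n}, j < k → c j + 1 ≤ c k / (Q k / Q j) := by
    intro j k hjk
    have hdj : Q j ∣ Q k := hdvd (le_of_lt hjk)
    have hdpos : 0 < Q k / Q j := Nat.div_pos (Nat.le_of_dvd (hQpos k) hdj) (hQpos j)
    rw [Nat.le_div_iff_mul_le hdpos]
    have hQjpos : (0:ℝ) < Q j := by exact_mod_cast hQpos j
    have hQkpos : (0:ℝ) < Q k := by exact_mod_cast hQpos k
    have hr : ((c j + 1) * (Q k / Q j : ℕ) : ℝ) ≤ (c k : ℝ) := by
      have hdr : ((Q k / Q j : ℕ) : ℝ) = (Q k : ℝ) / (Q j : ℝ) :=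
        Nat.cast_div hdj (by positivity)
      have hS : (∑ l ∈ Iio j, ((Q l : ℝ))⁻¹) + (Q j : ℝ)⁻¹ ≤ ∑ l ∈ Iio k, ((Q l : ℝ))⁻¹ := by
        have h1 : insert j (Iio j) ⊆ Iio k := by
          intro x hx
          simp only [Finset.mem_insert, Finset.mem_Iio] at hx ⊢
          rcases hx with rfl | hx
          · exact hjk
          · exact lt_trans hx hjk
        have h2 : (∑ l ∈ Iio j, ((Q l : ℝ))⁻¹) + (Q j : ℝ)⁻¹
            = ∑ l ∈ insert j (Iio j), ((Q l : ℝ))⁻¹ := by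
          rw [Finset.sum_insert (by simp)]; ring
        rw [h2]
        exact Finset.sum_le_sum_of_subset_of_nonneg h1 (by intro l _ _; positivity)
      rw [hdr, hcast j, hcast k]
      push_cast
      have expand : ((Q j : ℝ) * (∑ l ∈ Iio j, ((Q l:ℝ))⁻¹) + 1) * ((Q k:ℝ) / (Q j:ℝ))
          = (Q k : ℝ) * ((∑ l ∈ Iio j, ((Q l:ℝ))⁻¹) + (Q j:ℝ)⁻¹) := by
        field_simp
      rw [expand]
      exact mul_le_mul_of_nonneg_left hS (le_of_lt hQkpos)
    exact_mod_cast hr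
  set r : Fin n → ℕ := fun k => rev (b k) (c k) with hrdef
  have hrlt : ∀ k, r k < Q k := fun k => rev_lt _ _
  have hdisj : ∀ {j k : Fin n} (t : ℕ), j < k → t % Q j = r j → t % Q k = r k → False := by
    intro j k t hjk h1 h2
    have hdj : Q j ∣ Q k := hdvd (le_of_lt hjk)
    have hbjk : b j ≤ b k := hb (le_of_lt hjk)
    obtain ⟨d, hd2⟩ : ∃ d, b k = b j + d := ⟨b k - b j, by omega⟩
    have hQdiv : Q k / Q j = 2 ^ d := by
      show 2 ^ (b k) / 2 ^ (b j) = 2 ^ d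
      rw [hd2, pow_add, Nat.mul_div_cancel_left _ (by positivity)]
    have h4 : r k % Q j = rev (b j) (c k / 2 ^ d) := by
      show rev (b k) (c k) % 2 ^ (b j) = _
      rw [hd2]
      exact rev_mod _ _ _
    have h3 : t % Q j = (t % Q k) % Q j := (Nat.mod_mod_of_dvd t hdj).symm
    rw [h2, h4] at h3
    set e := c k / 2 ^ d with he
    have helt : e < Q j := by
      have h2pos : (0:ℕ) < 2 ^ d := Nat.pow_pos (by norm_num)
      rw [he, Nat.div_lt_iff_lt_mul h2pos]
      calc c k < Q k := hclt k
        _ = Q j * 2 ^ d := by rw [← hQdiv, Nat.mul_div_cancel' hdj]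
    have hne : e ≠ c j := by
      have hk2 := hkey hjk
      rw [hQdiv] at hk2
      omega
    exact hne (rev_inj (b j) helt (hclt j) (by rw [← h3, h1, hrdef]))
  have huniq : ∀ (t : ℕ) (j k : Fin n), t % Q j = r j → t % Q k = r k → j = k := by
    intro t j k h1 h2
    rcases lt_trichotomy j k with h | h | h
    · exact absurd (hdisj t h h1 h2) not_false
    · exact h
    · exact absurd (hdisj t h h2 h1) not_false
  refine ⟨fun t => if h : ∃ k, t % Q k = r k then some h.choose else none, ?_⟩
  intro i t
  set u := t % Q i with hu
  have hult : u < Q i := Nat.mod_lt t (hQpos i)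
  refine ⟨t + (r i + Q i - u) % Q i, Nat.le_add_right _ _, ?_, ?_⟩
  · have h5 : (r i + Q i - u) % Q i < Q i := Nat.mod_lt _ (hQpos i)
    have h6 : Q i = 2 ^ (b i) := rfl
    omega
  · set s := t + (r i + Q i - u) % Q i with hs
    have e1 : u + (r i + Q i - u) = r i + Q i := by omega
    have hsmod : s % Q i = r i := by
      calc s % Q i = (u + (r i + Q i - u) % Q i) % Q i := by
            rw [hs, Nat.add_mod, ← hu, Nat.mod_mod_of_dvd _ dvd_rfl]
        _ = (u + (r i + Q i - u)) % Q i := Nat.add_mod_mod _ _ _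
        _ = (r i + Q i) % Q i := by rw [e1]
        _ = r i % Q i := Nat.add_mod_right _ _
        _ = r i := Nat.mod_eq_of_lt (hrlt i)
    have hex : ∃ k, s % Q k = r k := ⟨i, hsmod⟩
    simp only [dif_pos hex]
    exact congrArg some (huniq s _ _ hex.choose_spec hsmod)

end PinwheelAux

/-- Any pseudo-instance with all periods at least 2 and density at most 1/2
admits a feasible pinwheel schedule (round periods down to powers of 2). -/
theorem pinwheel_of_density_le_half (n : ℕ) (p : Fin n → ℝ)
    (hp : ∀ i, 2 ≤ p i) (hd : ∑ i, 1 / p i ≤ 1 / 2) :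
    ∃ σ : ℕ → Option (Fin n), PinwheelFeasibleR p σ := by
  classical
  set a : Fin n → ℕ := fun i => Nat.log 2 ⌊p i⌋₊ with ha
  have hppos : ∀ i, (0:ℝ) < p i := fun i => lt_of_lt_of_le (by norm_num) (hp i)
  have hfl : ∀ i, 2 ≤ ⌊p i⌋₊ := fun i => Nat.le_floor (by exact_mod_cast hp i)
  have hpow_le : ∀ i, 2 ^ (a i) ≤ ⌊p i⌋₊ := fun i => Nat.pow_log_le_self 2 (by
    have := hfl i; omega)
  have hlt : ∀ i, p i < 2 * 2 ^ (a i) := by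
    intro i
    have h1 : ⌊p i⌋₊ < 2 ^ (a i + 1) := Nat.lt_pow_succ_log_self (by norm_num) _
    have h2 : p i < ⌊p i⌋₊ + 1 := Nat.lt_floor_add_one (p i)
    have h3 : (⌊p i⌋₊ : ℝ) + 1 ≤ ((2 ^ (a i + 1) : ℕ) : ℝ) := by exact_mod_cast h1
    have h4 : ((2 ^ (a i + 1) : ℕ) : ℝ) = 2 * 2 ^ (a i) := by push_cast [pow_succ]; ring
    linarith
  set π := Tuple.sort a with hπ
  have hmono : Monotone (a ∘ π) := Tuple.monotone_sort a
  have hdsum : ∑ k, ((2:ℝ) ^ ((a ∘ π) k))⁻¹ ≤ 1 := by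
    have hre : ∑ k, ((2:ℝ) ^ ((a ∘ π) k))⁻¹ = ∑ i, ((2:ℝ) ^ (a i))⁻¹ :=
      Equiv.sum_comp π (fun i => ((2:ℝ) ^ (a i))⁻¹)
    rw [hre]
    have hbound : ∀ i, ((2:ℝ) ^ (a i))⁻¹ ≤ 2 * (1 / p i) := by
      intro i
      have hpos2 : (0:ℝ) < 2 ^ (a i) := by positivity
      rw [inv_eq_one_div, mul_one_div, div_le_div_iff₀ hpos2 (hppos i)]
      have := hlt i
      nlinarith
    calc ∑ i, ((2:ℝ) ^ (a i))⁻¹ ≤ ∑ i, 2 * (1 / p i) :=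
          Finset.sum_le_sum (fun i _ => hbound i)
      _ = 2 * ∑ i, 1 / p i := by rw [Finset.mul_sum]
      _ ≤ 2 * (1 / 2) := by linarith
      _ = 1 := by norm_num
  obtain ⟨σ', hσ'⟩ := PinwheelAux.pinwheel_pow2 n (a ∘ π) hmono hdsum
  refine ⟨fun t => (σ' t).map π, ?_⟩
  intro i t
  obtain ⟨s, hs1, hs2, hs3⟩ := hσ' (π.symm i) t
  refine ⟨s, hs1, ?_, ?_⟩
  · have h5 : 2 ^ ((a ∘ π) (π.symm i)) ≤ ⌊p i⌋₊ := by
      simpa using hpow_le i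
    omega
  · show Option.map (⇑π) (σ' s) = some i
    rw [hs3]
    simp
end

section
/- For every natural number M ≥ 1, there is no feasible pinwheel schedule for the 3-job instance with integer periods p 0 = 2, p 1 = 3 and p 2 = M. -/
/-- For every M ≥ 1 the integer instance {2, 3, M} admits no feasible
pinwheel schedule (Chan and Chin). -/
theorem no_pinwheel_two_three_M (M : ℕ) (hM : 1 ≤ M) :
    ¬ ∃ σ : ℕ → Option (Fin 3), PinwheelFeasibleN ![2, 3, M] σ := by
  rintro ⟨σ, hσ⟩
  obtain ⟨s, hs1, hs2, hs3⟩ := hσ 2 1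
  simp only [Matrix.cons_val_two, Matrix.tail_cons, Matrix.head_cons] at hs2
  obtain ⟨u, hu1, hu2, hu3⟩ := hσ 0 (s - 1)
  simp only [Matrix.cons_val_zero] at hu2
  have hus : u = s - 1 := by
    rcases (by omega : u = s - 1 ∨ u = s) with h | h
    · exact h
    · rw [h, hs3] at hu3; simp at hu3
  obtain ⟨v, hv1, hv2, hv3⟩ := hσ 0 s
  simp only [Matrix.cons_val_zero] at hv2
  have hvs : v = s + 1 := by
    rcases (by omega : v = s ∨ v = s + 1) with h | h
    · rw [h, hs3] at hv3; simp at hv3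
    · exact h
  obtain ⟨w, hw1, hw2, hw3⟩ := hσ 1 (s - 1)
  simp only [Matrix.cons_val_one, Matrix.head_cons, Matrix.cons_val_zero] at hw2
  rcases (by omega : w = s - 1 ∨ w = s ∨ w = s + 1) with h | h | h
  · rw [h, ← hus, hu3] at hw3; simp at hw3
  · rw [h, hs3] at hw3; simp at hw3
  · rw [h, ← hvs, hv3] at hw3; simp at hw3
end

section
/- For every δ > 0 there exist an n ≥ 1 and real periods p : Fin n → ℝ with p i ≥ 2 for all i and ∑ i, 1 / p i ≤ 7/12 + δ, such that there is no feasible pinwheel schedule for the pseudo-instance p. (Concretely, for any 0 < ε ≤ 1 and sufficiently large real M, the pseudo-instance with periods 3 − ε, 4 − ε, M has density 7/12 + ε/(9 − 3ε) + ε/(16 − 4ε) + 1/M and admits no feasible schedule.) -/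
/-- For every δ > 0 there is a pseudo-instance with all periods at least 2
and density at most 7/12 + δ that admits no feasible pinwheel schedule (Example 1). -/
theorem no_pinwheel_density_just_above_seven_twelfths (δ : ℝ) (hδ : 0 < δ) :
    ∃ n : ℕ, 1 ≤ n ∧ ∃ p : Fin n → ℝ, (∀ i, 2 ≤ p i) ∧
      (∑ i, 1 / p i ≤ 7 / 12 + δ) ∧
      ¬ ∃ σ : ℕ → Option (Fin n), PinwheelFeasibleR p σ := by
  set d := min δ (1/3 : ℝ) with hdef
  have hd0 : 0 < d := lt_min hδ (by norm_num)
  have hd3 : d ≤ 1/3 := min_le_right _ _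
  have hdδ : d ≤ δ := min_le_left _ _
  have h1d : (0:ℝ) < 1 + d := by linarith
  refine ⟨3, by norm_num, ![3/(1+d), 4/(1+d), 3/d], ?_, ?_, ?_⟩
  · intro i
    fin_cases i
    · show (2:ℝ) ≤ 3/(1+d)
      rw [le_div_iff₀ h1d]; linarith
    · show (2:ℝ) ≤ 4/(1+d)
      rw [le_div_iff₀ h1d]; linarith
    · show (2:ℝ) ≤ 3/d
      rw [le_div_iff₀ hd0]; linarith
  · rw [Fin.sum_univ_three]
    simp only [Matrix.cons_val_zero, Matrix.cons_val_one, Matrix.head_cons,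
      Matrix.cons_val_two, Matrix.tail_cons]
    rw [one_div_div, one_div_div, one_div_div]
    linarith
  · rintro ⟨σ, hσ⟩
    have h0 : ⌊(3/(1+d) : ℝ)⌋₊ = 2 := by
      rw [Nat.floor_eq_iff (by positivity)]
      constructor
      · rw [le_div_iff₀ h1d]; push_cast; linarith
      · rw [div_lt_iff₀ h1d]; push_cast; linarith
    have h1 : ⌊(4/(1+d) : ℝ)⌋₊ = 3 := by
      rw [Nat.floor_eq_iff (by positivity)]
      constructor
      · rw [le_div_iff₀ h1d]; push_cast; linarith
      · rw [div_lt_iff₀ h1d]; push_cast; linarith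
    have h2 : 1 ≤ ⌊(3/d : ℝ)⌋₊ := by
      rw [Nat.le_floor_iff (by positivity)]
      rw [le_div_iff₀ hd0]; push_cast; linarith
    obtain ⟨s, hs1, hs2, hs3⟩ := hσ 2 1
    
    obtain ⟨u, hu1, hu2, hu3⟩ := hσ 0 (s-1)
    simp only [Matrix.cons_val_zero, h0] at hu2
    obtain ⟨w, hw1, hw2, hw3⟩ := hσ 0 s
    simp only [Matrix.cons_val_zero, h0] at hw2
    obtain ⟨v, hv1, hv2, hv3⟩ := hσ 1 (s-1)
    simp only [Matrix.cons_val_one, Matrix.head_cons, Matrix.cons_val_zero, h1] at hv2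
    have hus : u = s - 1 := by
      rcases (by omega : u = s - 1 ∨ u = s) with h | h
      · exact h
      · exfalso; rw [h, hs3] at hu3; simp at hu3
    have hws : w = s + 1 := by
      rcases (by omega : w = s ∨ w = s + 1) with h | h
      · exfalso; rw [h, hs3] at hw3; simp at hw3
      · exact h
    rw [hus] at hu3
    rw [hws] at hw3
    rcases (by omega : v = s - 1 ∨ v = s ∨ v = s + 1) with h | h | h
    · rw [h, hu3] at hv3; simp at hv3
    · rw [h, hs3] at hv3; simp at hv3
    · rw [h, hw3] at hv3; simp at hv3
end

section
/- For every η with 0 < η < 12/7 there exist growth rates h : Fin 3 → ℝ with h i > 0 for all i such that, setting H = ∑ i, h i and p i = (12/7 − η) · H / h i, there is no feasible pinwheel schedule for the pseudo-instance p. (Concretely, h 0 = 4, h 1 = 3, h 2 = γ works for any 0 < γ < 49η/(12 − 7η).) -/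
/-- For every magnifying factor 12/7 - η with 0 < η < 12/7 there are
growth rates on three bamboos whose induced pseudo-instance
`p i = (12/7 - η) · H / h i` (with `H = ∑ i, h i`) is not schedulable (Example 2). -/
theorem bgt_reduction_tightness (η : ℝ) (hη₀ : 0 < η) (hη₁ : η < 12 / 7) :
    ∃ h : Fin 3 → ℝ, (∀ i, 0 < h i) ∧
      ¬ ∃ σ : ℕ → Option (Fin 3),
        PinwheelFeasibleR (fun i => (12 / 7 - η) * (∑ j, h j) / h i) σ := by
  refine ⟨![4, 3, 49*η/24], ?_, ?_⟩
  · intro i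
    fin_cases i <;> simp <;> linarith
  · rintro ⟨σ, hσ⟩
    have hS : (∑ j : Fin 3, (![4, 3, 49*η/24] : Fin 3 → ℝ) j) = 7 + 49*η/24 := by
      simp [Fin.sum_univ_three]
      ring
    have hkey : (12/7 - η) * (7 + 49*η/24) < 12 := by nlinarith
    have hcpos : (0:ℝ) < 12/7 - η := by linarith
    have hSpos : (0:ℝ) < 7 + 49*η/24 := by linarith
    have hp0 : ⌊(12/7 - η) * (7 + 49*η/24) / 4⌋₊ ≤ 2 := by
      have hx : (12/7 - η) * (7 + 49*η/24) / 4 < (3:ℕ) := by push_cast; linarith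
      have h0 : (0:ℝ) ≤ (12/7 - η) * (7 + 49*η/24) / 4 := by positivity
      have := (Nat.floor_lt h0).mpr hx
      omega
    have hp1 : ⌊(12/7 - η) * (7 + 49*η/24) / 3⌋₊ ≤ 3 := by
      have hx : (12/7 - η) * (7 + 49*η/24) / 3 < (4:ℕ) := by push_cast; linarith
      have h0 : (0:ℝ) ≤ (12/7 - η) * (7 + 49*η/24) / 3 := by positivity
      have := (Nat.floor_lt h0).mpr hx
      omega
    have W0 : ∀ t, ∃ s, t ≤ s ∧ s < t + 2 ∧ σ s = some 0 := by
      intro t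
      obtain ⟨s, h1, h2, h3⟩ := hσ 0 t
      simp only [hS, Matrix.cons_val_zero] at h2
      exact ⟨s, h1, by omega, h3⟩
    have W1 : ∀ t, ∃ s, t ≤ s ∧ s < t + 3 ∧ σ s = some 1 := by
      intro t
      obtain ⟨s, h1, h2, h3⟩ := hσ 1 t
      simp only [hS, Matrix.cons_val_one, Matrix.head_cons, Matrix.cons_val_zero] at h2
      exact ⟨s, h1, by omega, h3⟩
    obtain ⟨d, hd1, hd2, hd3⟩ := hσ 2 1
    obtain ⟨s0, a1, a2, a3⟩ := W0 (d-1)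
    have hs0 : s0 = d - 1 ∨ s0 = d := by omega
    have e1 : σ (d-1) = some 0 := by
      rcases hs0 with h | h
      · rwa [h] at a3
      · rw [h] at a3; rw [a3] at hd3; simp at hd3
    obtain ⟨s0', b1, b2, b3⟩ := W0 d
    have hs0' : s0' = d ∨ s0' = d + 1 := by omega
    have e2 : σ (d+1) = some 0 := by
      rcases hs0' with h | h
      · rw [h] at b3; rw [b3] at hd3; simp at hd3
      · rwa [h] at b3
    obtain ⟨s1, c1, c2, c3⟩ := W1 (d-1)
    have hs1 : s1 = d - 1 ∨ s1 = d ∨ s1 = d + 1 := by omega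
    rcases hs1 with h | h | h
    · rw [h, e1] at c3; simp at c3
    · rw [h, hd3] at c3; simp at c3
    · rw [h, e2] at c3; simp at c3
end

section
/- Let p : Fin n → ℕ be integer periods with p i ≥ 1 for all i, and define growth rates h i = 1 / (p i : ℝ). Then there exists a feasible pinwheel schedule for p if and only if there exists a trimming schedule for h that achieves value 1. -/
/-- Reduction from Pinwheel Scheduling to BGT: the integer instance `p`
is schedulable iff the BGT instance with growth rates `1 / p i` has a trimming schedule
of value 1. -/
theorem pinwheel_iff_bgt_value_one (n : ℕ) (p : Fin n → ℕ) (hp : ∀ i, 1 ≤ p i) :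
    (∃ σ : ℕ → Option (Fin n), PinwheelFeasibleN p σ) ↔
      (∃ σ : ℕ → Option (Fin n),
        TrimmingAchieves (fun i => 1 / (p i : ℝ)) σ 1) := by
  constructor
  · rintro ⟨σ, hσ⟩
    refine ⟨σ, fun i t => ?_⟩
    have hpi : (0 : ℝ) < (p i : ℝ) := by exact_mod_cast hp i
    have key : (t : ℝ) + 1 - (lastCutPlusOne σ i t : ℝ) ≤ (p i : ℝ) := by
      rcases le_or_gt (p i) t with ht | ht
      · obtain ⟨s, hs1, hs2, hs3⟩ := hσ i (t - p i)
        have hle : s + 1 ≤ lastCutPlusOne σ i t := by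
          apply Nat.le_findGreatest (by omega)
          exact ⟨Nat.succ_pos _, by simpa using hs3⟩
        have : (t : ℝ) + 1 - (lastCutPlusOne σ i t : ℝ) ≤ (t : ℝ) + 1 - (s + 1 : ℕ) := by
          have := (Nat.cast_le (α := ℝ)).2 hle
          linarith
        have hsb : t - p i ≤ s := hs1
        have : t + 1 ≤ (s + 1) + p i := by omega
        have := (Nat.cast_le (α := ℝ)).2 this
        push_cast at this ⊢
        have hge := (Nat.cast_le (α := ℝ)).2 hle
        push_cast at hge
        linarith
      · have : (t : ℝ) + 1 ≤ (p i : ℝ) := by exact_mod_cast ht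
        have hnn : (0 : ℝ) ≤ (lastCutPlusOne σ i t : ℝ) := Nat.cast_nonneg _
        linarith
    simp only [bambooHeight, one_div]
    rw [inv_mul_le_iff₀ hpi, mul_one]
    exact key
  · rintro ⟨σ, hσ⟩
    refine ⟨σ, fun i t => ?_⟩
    by_contra hcon
    push_neg at hcon
    have hpi : (0 : ℝ) < (p i : ℝ) := by exact_mod_cast hp i
    -- consider day t + p i
    have hlast : lastCutPlusOne σ i (t + p i) ≤ t := by
      by_contra hgt
      push_neg at hgt
      have hpos : 0 < lastCutPlusOne σ i (t + p i) := by omega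
      have hspec : 0 < lastCutPlusOne σ i (t + p i) ∧
          σ (lastCutPlusOne σ i (t + p i) - 1) = some i := by
        have h0 : ∃ m, 0 < m ∧ m ≤ t + p i ∧
            (fun u => 0 < u ∧ σ (u - 1) = some i) m := by
          rwa [← Nat.findGreatest_pos]
        obtain ⟨m, hm1, hm2, hm3⟩ := h0
        exact Nat.findGreatest_spec (P := fun u => 0 < u ∧ σ (u - 1) = some i) hm2 hm3
      have hle : lastCutPlusOne σ i (t + p i) ≤ t + p i := Nat.findGreatest_le _
      have := hcon (lastCutPlusOne σ i (t + p i) - 1) (by omega)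
      exact this (by omega) hspec.2
    have hh := hσ i (t + p i)
    simp only [bambooHeight, one_div] at hh
    rw [inv_mul_le_iff₀ hpi, mul_one] at hh
    have hc : (lastCutPlusOne σ i (t + p i) : ℝ) ≤ (t : ℝ) := by exact_mod_cast hlast
    push_cast at hh
    linarith
end

section
/- Let h : Fin n → ℝ be growth rates with h i > 0 for all i, let H = ∑ i, h i, let c > 0 be a real number, and define real periods p i = c · H / h i. If σ : ℕ → Option (Fin n) is a feasible pinwheel schedule for the pseudo-instance p, then σ, interpreted as a trimming schedule for h, achieves value c · H (i.e., no bamboo ever reaches a height exceeding c · H). -/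
/-- Correctness of the reduction from BGT to Pinwheel: a feasible schedule
for the pseudo-instance `p i = c · H / h i` achieves value `c · H` as a trimming schedule. -/
theorem trimming_of_pinwheel (n : ℕ) (h : Fin n → ℝ) (hpos : ∀ i, 0 < h i)
    (c : ℝ) (hc : 0 < c) (σ : ℕ → Option (Fin n))
    (hσ : PinwheelFeasibleR (fun i => c * (∑ j, h j) / h i) σ) :
    TrimmingAchieves h σ (c * ∑ j, h j) := by
  intro i t
  set P : ℝ := c * (∑ j, h j) / h i with hP
  have hHpos : 0 < ∑ j, h j :=
    Finset.sum_pos (fun j _ => hpos j) ⟨i, Finset.mem_univ i⟩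
  have hPpos : 0 < P := div_pos (mul_pos hc hHpos) (hpos i)
  set m : ℕ := ⌊P⌋₊ with hm
  have hmle : (m : ℝ) ≤ P := Nat.floor_le hPpos.le
  set L : ℕ := lastCutPlusOne σ i t with hL
  have key : (t : ℝ) + 1 - L ≤ m := by
    rcases le_or_gt (t + 1) m with hc1 | hc1
    · have : (t : ℝ) + 1 ≤ m := by exact_mod_cast hc1
      have : (0:ℝ) ≤ L := Nat.cast_nonneg L
      linarith
    · -- t + 1 > m, so t - m is a valid window start
      obtain ⟨s, hs1, hs2, hs3⟩ := hσ i (t - m)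
      replace hs2 : s < t - m + m := hs2
      have hmt : m ≤ t := by omega
      have hst : s + 1 ≤ t := by omega
      have hpred : 0 < s + 1 ∧ σ (s + 1 - 1) = some i := by
        simpa using hs3
      have hge : s + 1 ≤ L := Nat.le_findGreatest hst hpred
      have hge2 : t - m + 1 ≤ L := by omega
      have hcast : ((t - m + 1 : ℕ) : ℝ) ≤ L := by exact_mod_cast hge2
      have heq : ((t - m + 1 : ℕ) : ℝ) = (t : ℝ) - m + 1 := by
        push_cast [Nat.cast_sub hmt]; ring
      linarith [heq ▸ hcast]
  have hfinal : h i * ((t : ℝ) + 1 - L) ≤ h i * P :=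
    mul_le_mul_of_nonneg_left (le_trans key hmle) (hpos i).le
  have hPeq : h i * P = c * ∑ j, h j := by
    rw [hP, mul_comm, div_mul_cancel₀ _ (hpos i).ne']
  calc bambooHeight h σ i t = h i * ((t : ℝ) + 1 - L) := rfl
    _ ≤ h i * P := hfinal
    _ = c * ∑ j, h j := hPeq
end

section
/- Let p : Fin n → ℕ be integer periods with p i ≥ 1 for all i, such that for all i, j, if p i ≤ p j then p i divides p j, and such that ∑ i, 1 / (p i : ℝ) ≤ 1. Let m be the minimum of the p i. Then there exists a partition of Fin n into at most m sets S_1, …, S_k (k ≤ m) such that for each j, ∑_{i ∈ S_j} 1 / (p i : ℝ) ≤ 1 / m. -/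
lemma aux_partition (n : ℕ) (d : ℕ → ℕ) (hd1 : ∀ t, 1 ≤ d t)
    (hdvd : ∀ s t, s ≤ t → t < n → d s ∣ d t) (m : ℕ)
    (hsum : ∑ t ∈ Finset.range n, (1 / (d t : ℚ)) ≤ (m : ℚ)) :
    ∃ G : ℕ → ℕ, (∀ t, t < n → G t < m) ∧
      ∀ j : ℕ, ∑ t ∈ (Finset.range n).filter (fun t => G t = j), (1 / (d t : ℚ)) ≤ 1 := by
  set P : ℕ → ℚ := fun t => ∑ s ∈ Finset.range t, (1 / (d s : ℚ)) with hP
  have hdne : ∀ t, (d t : ℚ) ≠ 0 := fun t => by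
    have := hd1 t; positivity
  have hwpos : ∀ t, (0:ℚ) < 1 / (d t : ℚ) := fun t => by
    have : (0:ℚ) < (d t : ℚ) := by exact_mod_cast hd1 t
    positivity
  have hPmono : Monotone P := fun a b hab =>
    Finset.sum_le_sum_of_subset_of_nonneg (Finset.range_subset_range.2 hab)
      (fun t _ _ => (hwpos t).le)
  have hPnonneg : ∀ t, 0 ≤ P t := fun t => Finset.sum_nonneg fun s _ => (hwpos s).le
  have hPsucc : ∀ t, P (t+1) = P t + 1/(d t : ℚ) := fun t => Finset.sum_range_succ _ t
  refine ⟨fun t => ⌊P t⌋₊, ?_, ?_⟩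
  · intro t ht
    have h1 : P t + 1/(d t : ℚ) ≤ (m:ℚ) := by
      rw [← hPsucc]; exact le_trans (hPmono ht) hsum
    have h2 : P t < (m:ℚ) := by have := hwpos t; linarith
    exact (Nat.floor_lt (hPnonneg t)).2 h2
  · intro j
    by_cases hA : ((Finset.range n).filter (fun t => ⌊P t⌋₊ = j)).Nonempty
    · set A := (Finset.range n).filter (fun t => ⌊P t⌋₊ = j) with hAdef
      set a := A.min' hA with ha
      set b := A.max' hA with hb
      have hbA : b ∈ A := A.max'_mem hA
      have haA : a ∈ A := A.min'_mem hA
      have hbn : b < n := Finset.mem_range.1 (Finset.mem_filter.1 hbA).1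
      have hbj : ⌊P b⌋₊ = j := (Finset.mem_filter.1 hbA).2
      have haj : ⌊P a⌋₊ = j := (Finset.mem_filter.1 haA).2
      have hGmono : ∀ s t : ℕ, s ≤ t → ⌊P s⌋₊ ≤ ⌊P t⌋₊ := fun s t h =>
        Nat.floor_le_floor (hPmono h)
      have hab : a ≤ b := A.min'_le b hbA
      have hAIcc : A = Finset.Icc a b := by
        ext t
        simp only [Finset.mem_Icc]
        constructor
        · intro ht; exact ⟨A.min'_le t ht, A.le_max' t ht⟩
        · rintro ⟨h1, h2⟩
          refine Finset.mem_filter.2 ⟨Finset.mem_range.2 (lt_of_le_of_lt h2 hbn), ?_⟩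
          have g1 := hGmono a t h1
          have g2 := hGmono t b h2
          omega
      have hsumA : ∑ t ∈ A, (1 / (d t : ℚ)) = P (b+1) - P a := by
        rw [hAIcc, ← Finset.Ico_add_one_right_eq_Icc]
        have h1 := Finset.sum_Ico_consecutive (fun t => (1/(d t:ℚ))) (k := b+1)
          (Nat.zero_le a) (Nat.le_succ_of_le hab)
        have h2 : P a = ∑ t ∈ Finset.Ico 0 a, (1/(d t:ℚ)) := by
          simp only [hP, Finset.range_eq_Ico]
        have h3 : P (b+1) = ∑ t ∈ Finset.Ico 0 (b+1), (1/(d t:ℚ)) := by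
          simp only [hP, Finset.range_eq_Ico]
        rw [h2, h3] at *
        linarith
      have haj' : (j:ℚ) ≤ P a := by
        rw [← haj]; exact Nat.floor_le (hPnonneg a)
      have hDdvd : ∀ s, s < b + 1 → d s ∣ d b := fun s hs =>
        hdvd s b (Nat.lt_succ_iff.1 hs) hbn
      obtain ⟨N, hN⟩ : ∃ N : ℕ, P (b+1) = (N : ℚ) / (d b : ℚ) := by
        refine ⟨∑ s ∈ Finset.range (b+1), d b / d s, ?_⟩
        rw [hP]
        push_cast
        rw [Finset.sum_div]
        refine Finset.sum_congr rfl fun s hs => ?_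
        rw [Nat.cast_div (hDdvd s (Finset.mem_range.1 hs)) (hdne s)]
        rw [div_div, div_eq_div_iff (hdne s) (by exact mul_ne_zero (hdne s) (hdne b))]
        ring
      have hPb1 : P (b+1) ≤ (j:ℚ) + 1 := by
        have h1 : P b < (j:ℚ) + 1 := by
          have := Nat.lt_floor_add_one (P b)
          rw [hbj] at this; exact_mod_cast this
        have h2 : P (b+1) < (j:ℚ) + 1 + 1/(d b : ℚ) := by
          rw [hPsucc]; linarith
        have hdbpos : (0:ℚ) < (d b : ℚ) := by exact_mod_cast hd1 b
        have h3 : (N:ℚ) < ((j:ℚ)+1) * d b + 1 := by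
          rw [hN, div_lt_iff₀ hdbpos] at h2
          have hmm : ((j:ℚ) + 1 + 1/(d b:ℚ)) * d b = ((j:ℚ)+1) * d b + 1 := by
            field_simp
          linarith
        have h4 : N < (j+1) * d b + 1 := by exact_mod_cast h3
        have h5 : (N:ℚ) ≤ ((j:ℚ)+1) * (d b : ℚ) := by
          have : N ≤ (j+1) * d b := by omega
          exact_mod_cast this
        rw [hN, div_le_iff₀ hdbpos]
        linarith
      rw [hsumA]; linarith
    · rw [Finset.not_nonempty_iff_eq_empty.1 hA]
      simp

/-- Partition lemma: a divisibility-chain instance of density at most 1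
with minimum period m can be partitioned into k ≤ m groups each of density at most 1/m. -/
theorem pinwheel_partition_lemma (n : ℕ) (p : Fin n → ℕ) (hp : ∀ i, 1 ≤ p i)
    (hdvd : ∀ i j, p i ≤ p j → p i ∣ p j) (hd : ∑ i, 1 / (p i : ℝ) ≤ 1)
    (m : ℕ) (hm_le : ∀ i, m ≤ p i) (hm_mem : ∃ i, p i = m) :
    ∃ k : ℕ, k ≤ m ∧ ∃ S : Fin k → Finset (Fin n),
      (∀ i : Fin n, ∃! j : Fin k, i ∈ S j) ∧
      (∀ j : Fin k, ∑ i ∈ S j, 1 / (p i : ℝ) ≤ 1 / (m : ℝ)) := by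
  obtain ⟨i0, hi0⟩ := hm_mem
  have hm1 : 1 ≤ m := hi0 ▸ hp i0
  have hmQ : (0:ℚ) < (m:ℚ) := by exact_mod_cast hm1
  set σ := Tuple.sort p with hσ
  have hqmono : Monotone (p ∘ σ) := Tuple.monotone_sort p
  have hmdvd : ∀ k : Fin n, m ∣ p (σ k) := by
    intro k
    rw [← hi0]
    exact hdvd i0 (σ k) (by rw [hi0]; exact hm_le (σ k))
  set d : ℕ → ℕ := fun t => if h : t < n then p (σ ⟨t, h⟩) / m else 1 with hdDef
  have hmd : ∀ (t : ℕ) (h : t < n), m * d t = p (σ ⟨t, h⟩) := by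
    intro t h
    simp only [hdDef, dif_pos h]
    exact Nat.mul_div_cancel' (hmdvd ⟨t, h⟩)
  have hd1 : ∀ t, 1 ≤ d t := by
    intro t
    simp only [hdDef]
    split
    · rename_i h
      rw [Nat.one_le_div_iff (by omega)]
      exact hm_le _
    · exact le_refl 1
  have hdvd' : ∀ s t, s ≤ t → t < n → d s ∣ d t := by
    intro s t hst htn
    have hsn : s < n := lt_of_le_of_lt hst htn
    have h1 : p (σ ⟨s, hsn⟩) ≤ p (σ ⟨t, htn⟩) := hqmono (by exact hst)
    have h2 : p (σ ⟨s, hsn⟩) ∣ p (σ ⟨t, htn⟩) := hdvd _ _ h1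
    rw [← hmd s hsn, ← hmd t htn] at h2
    exact (Nat.mul_dvd_mul_iff_left (by omega : 0 < m)).1 h2
  -- each term: 1/(p (σ k)) = (1/m) * (1/ d k)
  have hterm : ∀ k : Fin n, (1 / (p (σ k) : ℚ)) = (1/(m:ℚ)) * (1 / (d k.val : ℚ)) := by
    intro k
    have := hmd k.val k.isLt
    rw [Fin.eta] at this
    rw [← this]
    have hdpos : (0:ℚ) < (d k.val : ℚ) := by exact_mod_cast hd1 k.val
    push_cast
    field_simp
  have hdQ : ∑ i, 1/(p i:ℚ) ≤ 1 := by
    have hcast : ((∑ i, 1/(p i:ℚ) : ℚ) : ℝ) = ∑ i, 1/(p i:ℝ) := by push_cast; rfl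
    have : ((∑ i, 1/(p i:ℚ) : ℚ) : ℝ) ≤ ((1:ℚ):ℝ) := by rw [hcast]; exact_mod_cast hd
    exact_mod_cast this
  have hsum : ∑ t ∈ Finset.range n, (1 / (d t : ℚ)) ≤ (m : ℚ) := by
    have e1 : ∑ t ∈ Finset.range n, (1 / (d t : ℚ)) = ∑ k : Fin n, (1 / (d (k:ℕ) : ℚ)) :=
      (Fin.sum_univ_eq_sum_range (fun t => (1 / (d t : ℚ))) n).symm
    have e2 : ∑ k : Fin n, (1 / (d (k:ℕ) : ℚ)) = (m:ℚ) * ∑ k : Fin n, (1 / (p (σ k) : ℚ)) := by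
      rw [Finset.mul_sum]
      refine Finset.sum_congr rfl fun k _ => ?_
      rw [hterm k, ← mul_assoc, mul_one_div_cancel hmQ.ne', one_mul]
    have e3 : ∑ k : Fin n, (1 / (p (σ k) : ℚ)) = ∑ i, 1/(p i:ℚ) :=
      Equiv.sum_comp σ (fun i => 1/(p i:ℚ))
    rw [e1, e2, e3]
    calc (m:ℚ) * ∑ i, 1/(p i:ℚ) ≤ (m:ℚ) * 1 := by
          exact mul_le_mul_of_nonneg_left hdQ (le_of_lt hmQ)
      _ = (m:ℚ) := mul_one _
  obtain ⟨G, hG1, hG2⟩ := aux_partition n d hd1 hdvd' m hsum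
  refine ⟨m, le_refl m, fun j => Finset.univ.filter (fun i => G ((σ.symm i : Fin n) : ℕ) = j.val),
    ?_, ?_⟩
  · intro i
    refine ⟨⟨G ((σ.symm i : Fin n) : ℕ), hG1 _ (σ.symm i).isLt⟩, by simp, ?_⟩
    intro j hj
    simp only [Finset.mem_filter, Finset.mem_univ, true_and] at hj
    exact Fin.ext hj.symm
  · intro j
    -- reduce to ℚ
    have key : ∑ i ∈ Finset.univ.filter (fun i => G ((σ.symm i : Fin n) : ℕ) = j.val),
        (1 / (p i : ℚ)) ≤ 1 / (m : ℚ) := by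
      have e1 : ∑ i ∈ Finset.univ.filter (fun i => G ((σ.symm i : Fin n) : ℕ) = j.val),
          (1 / (p i : ℚ))
          = ∑ k ∈ Finset.univ.filter (fun k : Fin n => G (k : ℕ) = j.val),
            (1 / (p (σ k) : ℚ)) := by
        refine (Finset.sum_equiv σ ?_ ?_).symm
        · intro k
          simp
        · intro k _
          rfl
      have e2 : ∑ k ∈ Finset.univ.filter (fun k : Fin n => G (k : ℕ) = j.val),
          (1 / (p (σ k) : ℚ))
          = (1/(m:ℚ)) * ∑ k ∈ Finset.univ.filter (fun k : Fin n => G (k : ℕ) = j.val),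
            (1 / (d (k:ℕ) : ℚ)) := by
        rw [Finset.mul_sum]
        exact Finset.sum_congr rfl fun k _ => hterm k
      have e3 : ∑ k ∈ Finset.univ.filter (fun k : Fin n => G (k : ℕ) = j.val),
          (1 / (d (k:ℕ) : ℚ))
          = ∑ t ∈ (Finset.range n).filter (fun t => G t = j.val), (1 / (d t : ℚ)) := by
        rw [Finset.sum_filter, Finset.sum_filter]
        exact Fin.sum_univ_eq_sum_range (fun t => if G t = j.val then (1 / (d t : ℚ)) else 0) n
      rw [e1, e2, e3]
      calc (1/(m:ℚ)) * ∑ t ∈ (Finset.range n).filter (fun t => G t = j.val), (1 / (d t : ℚ))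
          ≤ (1/(m:ℚ)) * 1 := by
            refine mul_le_mul_of_nonneg_left (hG2 j.val) (by positivity)
        _ = 1/(m:ℚ) := mul_one _
    have hcast : ((∑ i ∈ Finset.univ.filter (fun i => G ((σ.symm i : Fin n) : ℕ) = j.val),
        (1 / (p i : ℚ)) : ℚ) : ℝ)
        = ∑ i ∈ Finset.univ.filter (fun i => G ((σ.symm i : Fin n) : ℕ) = j.val),
          (1 / (p i : ℝ)) := by push_cast; rfl
    have : ((∑ i ∈ Finset.univ.filter (fun i => G ((σ.symm i : Fin n) : ℕ) = j.val),
        (1 / (p i : ℚ)) : ℚ) : ℝ) ≤ ((1 / (m:ℚ) : ℚ) : ℝ) := by exact_mod_cast key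
    rw [hcast] at this
    calc ∑ i ∈ Finset.univ.filter (fun i => G ((σ.symm i : Fin n) : ℕ) = j.val),
          (1 / (p i : ℝ)) ≤ ((1 / (m:ℚ) : ℚ) : ℝ) := this
      _ = 1 / (m:ℝ) := by push_cast; rfl
end
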